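/- arXiv:2210.03357 — 6 statements merged into one kernel-verified Lean document; each statement's English description precedes it below -/
import Mathlib

section
/- Suppose (q, p, ρ) is a DSO solution satisfying Assumption 1. Then the equilibrium commuting costs satisfy ρ_{i,k} − d_i < ρ_{i+1,k} − d_{i+1} for every i ∈ {1,…,N−1} and every group k ∈ {1,…,K}. (Lemma A.3 of the paper.) -/
open MeasureTheory Finset Set

/-- Lemma A.3 of the paper: equilibrium commuting costs net of free-flow times
are strictly increasing along the corridor in the DSO state. -/
theorem dso_commuting_cost_strict_mono
    (N K : ℕ) (hN : 1 ≤ N) (hK : 1 ≤ K)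
    (𝒯 : Set ℝ)
    -- base schedule delay cost function
    (c : ℝ → ℝ) (hc0 : c 0 = 0) (hccont : Continuous c)
    (hcdec : StrictAntiOn c (Set.Iic (0 : ℝ)))
    (hcinc : StrictMonoOn c (Set.Ici (0 : ℝ)))
    -- heterogeneity parameters 1 = β¹ > β² > … > β^K > 0
    (β : ℕ → ℝ) (hβ1 : β 1 = 1)
    (hβdec : ∀ k, 1 ≤ k → k < K → β (k + 1) < β k)
    (hβpos : ∀ k ∈ Finset.Icc 1 K, 0 < β k)
    -- capacities μ₁ > μ₂ > … > μ_N > 0, μ_(N+1) = 0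
    (μ : ℕ → ℝ) (hμdec : ∀ i, 1 ≤ i → i < N → μ (i + 1) < μ i)
    (hμpos : ∀ i ∈ Finset.Icc 1 N, 0 < μ i) (hμtop : μ (N + 1) = 0)
    -- free-flow travel times 0 ≤ d₁ < d₂ < … < d_N
    (d : ℕ → ℝ) (hd1 : 0 ≤ d 1)
    (hdinc : ∀ i, 1 ≤ i → i < N → d i < d (i + 1))
    -- demands
    (Q : ℕ → ℕ → ℝ) (hQ : ∀ i ∈ Finset.Icc 1 N, ∀ k ∈ Finset.Icc 1 K, 0 < Q i k)
    -- a DSO solution (q, p, ρ)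
    (q : ℕ → ℕ → ℝ → ℝ) (p : ℕ → ℝ → ℝ) (ρ : ℕ → ℕ → ℝ)
    (hqmeas : ∀ i k, Measurable (q i k)) (hpmeas : ∀ i, Measurable (p i))
    -- KKT condition (i): departure time choice complementarity
    (hKKT1 : ∀ i ∈ Finset.Icc 1 N, ∀ k ∈ Finset.Icc 1 K, ∀ t ∈ 𝒯,
      0 ≤ q i k t ∧
      0 ≤ β k * c t + (∑ j ∈ Finset.Icc 1 i, p j t) + d i - ρ i k ∧
      q i k t * (β k * c t + (∑ j ∈ Finset.Icc 1 i, p j t) + d i - ρ i k) = 0)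
    -- KKT condition (ii): capacity complementarity
    (hKKT2 : ∀ i ∈ Finset.Icc 1 N, ∀ t ∈ 𝒯,
      0 ≤ p i t ∧
      0 ≤ μ i - ∑ j ∈ Finset.Icc i N, ∑ k ∈ Finset.Icc 1 K, q j k t ∧
      p i t * (μ i - ∑ j ∈ Finset.Icc i N, ∑ k ∈ Finset.Icc 1 K, q j k t) = 0)
    -- KKT condition (iii): demand conservation
    (hKKT3 : ∀ i ∈ Finset.Icc 1 N, ∀ k ∈ Finset.Icc 1 K,
      ∫ t in 𝒯, q i k t = Q i k)
    -- Assumption 1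
    (hA1 : ∀ i ∈ Finset.Icc 1 N, ∀ t ∈ 𝒯,
      (0 < p i t ↔ 0 < ∑ k ∈ Finset.Icc 1 K, q i k t))
    (hA1' : ∀ i ∈ Finset.Icc 1 N, ({t ∈ 𝒯 | 0 < p i t}).OrdConnected) :
    ∀ i, 1 ≤ i → i < N → ∀ k ∈ Finset.Icc 1 K,
      ρ i k - d i < ρ (i + 1) k - d (i + 1) := by
  intro i hi1 hiN k hk
  have hi1N : i + 1 ∈ Finset.Icc 1 N := Finset.mem_Icc.mpr ⟨le_trans hi1 (Nat.le_succ i), hiN⟩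
  have hiI : i ∈ Finset.Icc 1 N := Finset.mem_Icc.mpr ⟨hi1, le_of_lt hiN⟩
  -- find t ∈ 𝒯 with q (i+1) k t > 0
  have hQpos : 0 < Q (i+1) k := hQ _ hi1N _ hk
  have hInt : ∫ t in 𝒯, q (i+1) k t = Q (i+1) k := hKKT3 _ hi1N _ hk
  have ht : ∃ t ∈ 𝒯, 0 < q (i+1) k t := by
    by_contra h
    push_neg at h
    have hz : ∀ t ∈ 𝒯, q (i+1) k t = 0 := by
      intro t htT
      exact le_antisymm (h t htT) (hKKT1 _ hi1N _ hk t htT).1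
    have : ∫ t in 𝒯, q (i+1) k t = 0 :=
      MeasureTheory.setIntegral_eq_zero_of_forall_eq_zero hz
    rw [hInt] at this
    linarith
  obtain ⟨t, htT, htq⟩ := ht
  -- complementarity at (i+1, k)
  obtain ⟨-, hge, hcs⟩ := hKKT1 _ hi1N _ hk t htT
  have heq : β k * c t + (∑ j ∈ Finset.Icc 1 (i+1), p j t) + d (i+1) - ρ (i+1) k = 0 := by
    rcases mul_eq_zero.mp hcs with h | h
    · exact absurd h (ne_of_gt htq)
    · exact h
  -- Assumption 1 gives p (i+1) t > 0
  have hsumpos : 0 < ∑ k' ∈ Finset.Icc 1 K, q (i+1) k' t := by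
    have hnn : ∀ k' ∈ Finset.Icc 1 K, 0 ≤ q (i+1) k' t := fun k' hk' =>
      (hKKT1 _ hi1N _ hk' t htT).1
    exact Finset.sum_pos' hnn ⟨k, hk, htq⟩
  have hppos : 0 < p (i+1) t := (hA1 _ hi1N t htT).mpr hsumpos
  -- split the sum
  have hsplit : ∑ j ∈ Finset.Icc 1 (i+1), p j t
      = (∑ j ∈ Finset.Icc 1 i, p j t) + p (i+1) t := by
    rw [Finset.sum_Icc_succ_top (by omega : 1 ≤ i + 1)]
  -- feasibility at (i, k)
  have hfeas := (hKKT1 _ hiI _ hk t htT).2.1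
  linarith [hsplit]
end

section
/- Suppose (q, p, ρ) is a DSO solution satisfying Assumption 1. Then the spatial sorting property holds: for every i ∈ {1,…,N−1} and every t ∈ 𝒯, if Σ_k q_{i,k}(t) > 0 then Σ_k q_{i+1,k}(t) > 0; equivalently, the arrival time window of commuters from origin i is included in that of commuters from origin i+1, i.e. 𝒯_i ⊆ 𝒯_{i+1}. (Lemma 1 of the paper.) -/
open MeasureTheory Finset Set

/-- Lemma 1 of the paper: spatial sorting property of the DSO flow pattern,
𝒯_i ⊆ 𝒯_(i+1). -/
theorem dso_spatial_sorting
    (N K : ℕ) (hN : 1 ≤ N) (hK : 1 ≤ K)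
    (𝒯 : Set ℝ)
    -- base schedule delay cost function
    (c : ℝ → ℝ) (hc0 : c 0 = 0) (hccont : Continuous c)
    (hcdec : StrictAntiOn c (Set.Iic (0 : ℝ)))
    (hcinc : StrictMonoOn c (Set.Ici (0 : ℝ)))
    -- heterogeneity parameters 1 = β¹ > β² > … > β^K > 0
    (β : ℕ → ℝ) (hβ1 : β 1 = 1)
    (hβdec : ∀ k, 1 ≤ k → k < K → β (k + 1) < β k)
    (hβpos : ∀ k ∈ Finset.Icc 1 K, 0 < β k)
    -- capacities μ₁ > μ₂ > … > μ_N > 0, μ_(N+1) = 0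
    (μ : ℕ → ℝ) (hμdec : ∀ i, 1 ≤ i → i < N → μ (i + 1) < μ i)
    (hμpos : ∀ i ∈ Finset.Icc 1 N, 0 < μ i) (hμtop : μ (N + 1) = 0)
    -- free-flow travel times 0 ≤ d₁ < d₂ < … < d_N
    (d : ℕ → ℝ) (hd1 : 0 ≤ d 1)
    (hdinc : ∀ i, 1 ≤ i → i < N → d i < d (i + 1))
    -- demands
    (Q : ℕ → ℕ → ℝ) (hQ : ∀ i ∈ Finset.Icc 1 N, ∀ k ∈ Finset.Icc 1 K, 0 < Q i k)
    -- a DSO solution (q, p, ρ)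
    (q : ℕ → ℕ → ℝ → ℝ) (p : ℕ → ℝ → ℝ) (ρ : ℕ → ℕ → ℝ)
    (hqmeas : ∀ i k, Measurable (q i k)) (hpmeas : ∀ i, Measurable (p i))
    -- KKT condition (i): departure time choice complementarity
    (hKKT1 : ∀ i ∈ Finset.Icc 1 N, ∀ k ∈ Finset.Icc 1 K, ∀ t ∈ 𝒯,
      0 ≤ q i k t ∧
      0 ≤ β k * c t + (∑ j ∈ Finset.Icc 1 i, p j t) + d i - ρ i k ∧
      q i k t * (β k * c t + (∑ j ∈ Finset.Icc 1 i, p j t) + d i - ρ i k) = 0)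
    -- KKT condition (ii): capacity complementarity
    (hKKT2 : ∀ i ∈ Finset.Icc 1 N, ∀ t ∈ 𝒯,
      0 ≤ p i t ∧
      0 ≤ μ i - ∑ j ∈ Finset.Icc i N, ∑ k ∈ Finset.Icc 1 K, q j k t ∧
      p i t * (μ i - ∑ j ∈ Finset.Icc i N, ∑ k ∈ Finset.Icc 1 K, q j k t) = 0)
    -- KKT condition (iii): demand conservation
    (hKKT3 : ∀ i ∈ Finset.Icc 1 N, ∀ k ∈ Finset.Icc 1 K,
      ∫ t in 𝒯, q i k t = Q i k)
    -- Assumption 1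
    (hA1 : ∀ i ∈ Finset.Icc 1 N, ∀ t ∈ 𝒯,
      (0 < p i t ↔ 0 < ∑ k ∈ Finset.Icc 1 K, q i k t))
    (hA1' : ∀ i ∈ Finset.Icc 1 N, ({t ∈ 𝒯 | 0 < p i t}).OrdConnected) :
    (∀ i, 1 ≤ i → i < N → ∀ t ∈ 𝒯,
      0 < ∑ k ∈ Finset.Icc 1 K, q i k t →
      0 < ∑ k ∈ Finset.Icc 1 K, q (i + 1) k t) ∧
    (∀ i, 1 ≤ i → i < N →
      {t ∈ 𝒯 | 0 < ∑ k ∈ Finset.Icc 1 K, q i k t} ⊆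
        {t ∈ 𝒯 | 0 < ∑ k ∈ Finset.Icc 1 K, q (i + 1) k t}) := by
  have hexists : ∀ i ∈ Finset.Icc 1 N, ∀ k ∈ Finset.Icc 1 K, ∃ s ∈ 𝒯, 0 < q i k s := by
    intro i hi k hk
    by_contra hcon
    push_neg at hcon
    have hzero : ∀ s ∈ 𝒯, q i k s = 0 := fun s hs =>
      le_antisymm (hcon s hs) (hKKT1 i hi k hk s hs).1
    have hae : q i k =ᵐ[volume.restrict 𝒯] 0 := by
      have hmeas : MeasurableSet {s | q i k s ≠ 0} := by
        have := (hqmeas i k) ((measurableSet_singleton (0:ℝ)).compl)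
        simpa [Set.preimage, Set.compl_def] using this
      have : (volume.restrict 𝒯) {s | q i k s ≠ 0} = 0 := by
        rw [Measure.restrict_apply hmeas]
        have : {s | q i k s ≠ 0} ∩ 𝒯 = ∅ := by
          ext s; simp only [Set.mem_inter_iff, Set.mem_setOf_eq, Set.mem_empty_iff_false,
            iff_false, not_and]
          intro hne hs; exact hne (hzero s hs)
        rw [this]; simp
      exact this
    have : ∫ t in 𝒯, q i k t = 0 := by
      calc ∫ t in 𝒯, q i k t = ∫ t in 𝒯, (0 : ℝ) := integral_congr_ae hae
        _ = 0 := integral_zero _ _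
    rw [hKKT3 i hi k hk] at this
    exact absurd this (ne_of_gt (hQ i hi k hk))
  have main : ∀ i, 1 ≤ i → i < N → ∀ t ∈ 𝒯,
      0 < ∑ k ∈ Finset.Icc 1 K, q i k t →
      0 < ∑ k ∈ Finset.Icc 1 K, q (i + 1) k t := by
    intro i hi1 hiN t ht hsum
    have hiI : i ∈ Finset.Icc 1 N := Finset.mem_Icc.mpr ⟨hi1, le_of_lt hiN⟩
    have hi1I : i + 1 ∈ Finset.Icc 1 N := Finset.mem_Icc.mpr ⟨le_trans hi1 (Nat.le_succ i), hiN⟩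
    by_contra hcon
    -- p (i+1) t = 0
    have hpt0 : p (i + 1) t = 0 := by
      have hnp : ¬ 0 < p (i + 1) t := fun h => hcon ((hA1 (i + 1) hi1I t ht).mp h)
      exact le_antisymm (not_lt.mp hnp) (hKKT2 (i + 1) hi1I t ht).1
    -- choose group k' with positive flow at i at time t
    obtain ⟨k', hk', hqk'⟩ : ∃ k' ∈ Finset.Icc 1 K, 0 < q i k' t := by
      by_contra hc
      push_neg at hc
      exact absurd hsum (not_lt.mpr (Finset.sum_nonpos (fun k hk => hc k hk)))
    -- choose time s with positive flow of group k' at origin i+1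
    obtain ⟨s, hs, hqs⟩ := hexists (i + 1) hi1I k' hk'
    have hsum_s : 0 < ∑ k ∈ Finset.Icc 1 K, q (i + 1) k s :=
      Finset.sum_pos' (fun k hk => (hKKT1 (i + 1) hi1I k hk s hs).1) ⟨k', hk', hqs⟩
    have hps : 0 < p (i + 1) s := (hA1 (i + 1) hi1I s hs).mpr hsum_s
    -- KKT (i) relations
    have E1 : β k' * c t + (∑ j ∈ Finset.Icc 1 i, p j t) + d i - ρ i k' = 0 := by
      have h := (hKKT1 i hiI k' hk' t ht).2.2
      rcases mul_eq_zero.mp h with h0 | h0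
      · exact absurd h0 (ne_of_gt hqk')
      · exact h0
    have I1 : 0 ≤ β k' * c s + (∑ j ∈ Finset.Icc 1 i, p j s) + d i - ρ i k' :=
      (hKKT1 i hiI k' hk' s hs).2.1
    have E2 : β k' * c s + (∑ j ∈ Finset.Icc 1 (i + 1), p j s) + d (i + 1) - ρ (i + 1) k' = 0 := by
      have h := (hKKT1 (i + 1) hi1I k' hk' s hs).2.2
      rcases mul_eq_zero.mp h with h0 | h0
      · exact absurd h0 (ne_of_gt hqs)
      · exact h0
    have I2 : 0 ≤ β k' * c t + (∑ j ∈ Finset.Icc 1 (i + 1), p j t) + d (i + 1) - ρ (i + 1) k' :=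
      (hKKT1 (i + 1) hi1I k' hk' t ht).2.1
    have hsplit_t : ∑ j ∈ Finset.Icc 1 (i + 1), p j t
        = (∑ j ∈ Finset.Icc 1 i, p j t) + p (i + 1) t :=
      Finset.sum_Icc_succ_top (Nat.le_succ_of_le hi1) _
    have hsplit_s : ∑ j ∈ Finset.Icc 1 (i + 1), p j s
        = (∑ j ∈ Finset.Icc 1 i, p j s) + p (i + 1) s :=
      Finset.sum_Icc_succ_top (Nat.le_succ_of_le hi1) _
    rw [hsplit_s] at E2
    rw [hsplit_t, hpt0] at I2
    linarith
  exact ⟨main, fun i hi1 hiN t htmem => ⟨htmem.1, main i hi1 hiN t htmem.1 htmem.2⟩⟩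
end

section
/- Suppose (q, p, ρ) is a DSO solution satisfying Assumption 1. Then the aggregated DSO flow is all-or-nothing: (a) for every i ∈ {1,…,N} and every t ∈ 𝒯, if Σ_k q_{i,k}(t) > 0 then Σ_k q_{i,k}(t) = μ_i − μ_{i+1}; and (b) the Lebesgue measure of the arrival time window 𝒯_i = {t ∈ 𝒯 : Σ_k q_{i,k}(t) > 0} equals (Σ_k Q_{i,k})/(μ_i − μ_{i+1}). (Lemma 2 of the paper.) -/
open MeasureTheory Finset Set

lemma ae_restrict_of_eqOn' {f g : ℝ → ℝ} (hf : Measurable f) (hg : Measurable g)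
    (s : Set ℝ) (h : ∀ t ∈ s, f t = g t) : f =ᵐ[volume.restrict s] g := by
  rw [Filter.EventuallyEq, ae_iff]
  have hm : MeasurableSet {x | ¬ f x = g x} := (hf.prodMk hg) isClosed_diagonal.measurableSet.compl
  rw [Measure.restrict_apply hm]
  have : {x | ¬ f x = g x} ∩ s = ∅ := by
    ext x; simp only [Set.mem_inter_iff, Set.mem_setOf_eq, Set.mem_empty_iff_false, iff_false]
    rintro ⟨hx, hxs⟩; exact hx (h x hxs)
  rw [this]; simp

/-- Lemma 2 of the paper: the aggregated DSO flow pattern is all-or-nothing, and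
the arrival time window of origin i has length (Σ_k Q_(i,k))/(μ_i − μ_(i+1)). -/
theorem dso_all_or_nothing
    (N K : ℕ) (hN : 1 ≤ N) (hK : 1 ≤ K)
    (𝒯 : Set ℝ)
    -- base schedule delay cost function
    (c : ℝ → ℝ) (hc0 : c 0 = 0) (hccont : Continuous c)
    (hcdec : StrictAntiOn c (Set.Iic (0 : ℝ)))
    (hcinc : StrictMonoOn c (Set.Ici (0 : ℝ)))
    -- heterogeneity parameters 1 = β¹ > β² > … > β^K > 0
    (β : ℕ → ℝ) (hβ1 : β 1 = 1)
    (hβdec : ∀ k, 1 ≤ k → k < K → β (k + 1) < β k)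
    (hβpos : ∀ k ∈ Finset.Icc 1 K, 0 < β k)
    -- capacities μ₁ > μ₂ > … > μ_N > 0, μ_(N+1) = 0
    (μ : ℕ → ℝ) (hμdec : ∀ i, 1 ≤ i → i < N → μ (i + 1) < μ i)
    (hμpos : ∀ i ∈ Finset.Icc 1 N, 0 < μ i) (hμtop : μ (N + 1) = 0)
    -- free-flow travel times 0 ≤ d₁ < d₂ < … < d_N
    (d : ℕ → ℝ) (hd1 : 0 ≤ d 1)
    (hdinc : ∀ i, 1 ≤ i → i < N → d i < d (i + 1))
    -- demands
    (Q : ℕ → ℕ → ℝ) (hQ : ∀ i ∈ Finset.Icc 1 N, ∀ k ∈ Finset.Icc 1 K, 0 < Q i k)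
    -- a DSO solution (q, p, ρ)
    (q : ℕ → ℕ → ℝ → ℝ) (p : ℕ → ℝ → ℝ) (ρ : ℕ → ℕ → ℝ)
    (hqmeas : ∀ i k, Measurable (q i k)) (hpmeas : ∀ i, Measurable (p i))
    -- KKT condition (i): departure time choice complementarity
    (hKKT1 : ∀ i ∈ Finset.Icc 1 N, ∀ k ∈ Finset.Icc 1 K, ∀ t ∈ 𝒯,
      0 ≤ q i k t ∧
      0 ≤ β k * c t + (∑ j ∈ Finset.Icc 1 i, p j t) + d i - ρ i k ∧
      q i k t * (β k * c t + (∑ j ∈ Finset.Icc 1 i, p j t) + d i - ρ i k) = 0)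
    -- KKT condition (ii): capacity complementarity
    (hKKT2 : ∀ i ∈ Finset.Icc 1 N, ∀ t ∈ 𝒯,
      0 ≤ p i t ∧
      0 ≤ μ i - ∑ j ∈ Finset.Icc i N, ∑ k ∈ Finset.Icc 1 K, q j k t ∧
      p i t * (μ i - ∑ j ∈ Finset.Icc i N, ∑ k ∈ Finset.Icc 1 K, q j k t) = 0)
    -- KKT condition (iii): demand conservation
    (hKKT3 : ∀ i ∈ Finset.Icc 1 N, ∀ k ∈ Finset.Icc 1 K,
      ∫ t in 𝒯, q i k t = Q i k)
    -- Assumption 1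
    (hA1 : ∀ i ∈ Finset.Icc 1 N, ∀ t ∈ 𝒯,
      (0 < p i t ↔ 0 < ∑ k ∈ Finset.Icc 1 K, q i k t))
    (hA1' : ∀ i ∈ Finset.Icc 1 N, ({t ∈ 𝒯 | 0 < p i t}).OrdConnected) :
    (∀ i ∈ Finset.Icc 1 N, ∀ t ∈ 𝒯,
      0 < ∑ k ∈ Finset.Icc 1 K, q i k t →
      ∑ k ∈ Finset.Icc 1 K, q i k t = μ i - μ (i + 1)) ∧
    (∀ i ∈ Finset.Icc 1 N,
      volume {t ∈ 𝒯 | 0 < ∑ k ∈ Finset.Icc 1 K, q i k t} =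
        ENNReal.ofReal ((∑ k ∈ Finset.Icc 1 K, Q i k) / (μ i - μ (i + 1)))) := by
  -- nonnegativity of q on 𝒯
  have hqnn : ∀ i ∈ Finset.Icc 1 N, ∀ k ∈ Finset.Icc 1 K, ∀ t ∈ 𝒯, 0 ≤ q i k t :=
    fun i hi k hk t ht => (hKKT1 i hi k hk t ht).1
  -- existence of a point with positive flow for each (i,k)
  have hex : ∀ i ∈ Finset.Icc 1 N, ∀ k ∈ Finset.Icc 1 K, ∃ s ∈ 𝒯, 0 < q i k s := by
    intro i hi k hk
    by_contra hcon
    push_neg at hcon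
    have hz : ∀ t ∈ 𝒯, q i k t = 0 :=
      fun t ht => le_antisymm (hcon t ht) (hqnn i hi k hk t ht)
    have : (0:ℝ) = Q i k := by
      rw [← hKKT3 i hi k hk, setIntegral_eq_zero_of_forall_eq_zero hz]
    exact absurd (hQ i hi k hk) (by rw [← this]; exact lt_irrefl 0)
  -- capacity binding when p i t > 0
  have hSbind : ∀ i ∈ Finset.Icc 1 N, ∀ t ∈ 𝒯, 0 < p i t →
      (∑ j ∈ Finset.Icc i N, ∑ k ∈ Finset.Icc 1 K, q j k t) = μ i := by
    intro i hi t ht hp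
    have h := (hKKT2 i hi t ht).2.2
    have := (mul_eq_zero.mp h).resolve_left (ne_of_gt hp)
    linarith
  -- Part (a)
  have haon : ∀ i ∈ Finset.Icc 1 N, ∀ t ∈ 𝒯,
      0 < ∑ k ∈ Finset.Icc 1 K, q i k t →
      ∑ k ∈ Finset.Icc 1 K, q i k t = μ i - μ (i + 1) := by
    intro i hi t ht hpos
    have hi1 : 1 ≤ i := (Finset.mem_Icc.mp hi).1
    have hiN : i ≤ N := (Finset.mem_Icc.mp hi).2
    have hpit : 0 < p i t := (hA1 i hi t ht).mpr hpos
    have hSi := hSbind i hi t ht hpit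
    -- split the sum at j = i
    have hsplit : (∑ j ∈ Finset.Icc i N, ∑ k ∈ Finset.Icc 1 K, q j k t)
        = (∑ k ∈ Finset.Icc 1 K, q i k t)
          + ∑ j ∈ Finset.Icc (i+1) N, ∑ k ∈ Finset.Icc 1 K, q j k t := by
      rw [Finset.Icc_eq_cons_Ioc hiN, Finset.sum_cons]
      congr 1
      exact Finset.sum_congr (Finset.Icc_add_one_left_eq_Ioc i N).symm fun _ _ => rfl
    rcases eq_or_lt_of_le hiN with hiNe | hiNlt
    · -- i = N : the tail sum is empty and μ (N+1) = 0
      subst hiNe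
      have : Finset.Icc (i+1) i = ∅ := Finset.Icc_eq_empty (by omega)
      rw [this, Finset.sum_empty, add_zero] at hsplit
      rw [hμtop, sub_zero, ← hSi, hsplit]
    · -- i < N
      have hii1 : i + 1 ∈ Finset.Icc 1 N := Finset.mem_Icc.mpr ⟨by omega, by omega⟩
      have hpnext : 0 < p (i+1) t := by
        by_contra hcon
        have hp0 : p (i+1) t = 0 :=
          le_antisymm (not_lt.mp hcon) (hKKT2 (i+1) hii1 t ht).1
        -- pick k with q i k t > 0
        obtain ⟨k, hk, hqk⟩ : ∃ k ∈ Finset.Icc 1 K, 0 < q i k t := by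
          by_contra hcc
          push_neg at hcc
          have : (∑ k ∈ Finset.Icc 1 K, q i k t) ≤ 0 :=
            Finset.sum_nonpos fun k hk => hcc k hk
          linarith
        -- pick s with q (i+1) k s > 0
        obtain ⟨s, hs, hqs⟩ := hex (i+1) hii1 k hk
        have hpnexts : 0 < p (i+1) s := by
          refine (hA1 (i+1) hii1 s hs).mpr ?_
          exact Finset.sum_pos' (fun k' hk' => hqnn (i+1) hii1 k' hk' s hs) ⟨k, hk, hqs⟩
        -- KKT1 relations
        have hPsplit : ∀ x : ℝ, (∑ j ∈ Finset.Icc 1 (i+1), p j x)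
            = (∑ j ∈ Finset.Icc 1 i, p j x) + p (i+1) x := by
          intro x; exact Finset.sum_Icc_succ_top (by omega) _
        obtain ⟨-, hE2, -⟩ := hKKT1 (i+1) hii1 k hk t ht
        obtain ⟨-, -, hE1m⟩ := hKKT1 (i+1) hii1 k hk s hs
        have hE1 : β k * c s + (∑ j ∈ Finset.Icc 1 (i+1), p j s) + d (i+1) - ρ (i+1) k = 0 :=
          (mul_eq_zero.mp hE1m).resolve_left (ne_of_gt hqs)
        obtain ⟨-, -, hE3m⟩ := hKKT1 i hi k hk t ht
        have hE3 : β k * c t + (∑ j ∈ Finset.Icc 1 i, p j t) + d i - ρ i k = 0 :=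
          (mul_eq_zero.mp hE3m).resolve_left (ne_of_gt hqk)
        obtain ⟨-, hE4, -⟩ := hKKT1 i hi k hk s hs
        rw [hPsplit t, hp0] at hE2
        rw [hPsplit s] at hE1
        linarith
      have hSnext := hSbind (i+1) hii1 t ht hpnext
      rw [hsplit, hSnext] at hSi
      linarith
  refine ⟨haon, ?_⟩
  -- Part (b)
  intro i hi
  have hi1 : 1 ≤ i := (Finset.mem_Icc.mp hi).1
  have hiN : i ≤ N := (Finset.mem_Icc.mp hi).2
  set m : ℝ := μ i - μ (i + 1) with hmdef
  have hm : 0 < m := by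
    rcases eq_or_lt_of_le hiN with h | h
    · subst h; rw [hmdef, hμtop, sub_zero]; exact hμpos i hi
    · have := hμdec i hi1 h; rw [hmdef]; linarith
  set f : ℝ → ℝ := fun t => ∑ k ∈ Finset.Icc 1 K, q i k t with hfdef
  have hfmeas : Measurable f := Finset.measurable_sum _ fun k _ => hqmeas i k
  set B : Set ℝ := {t | 0 < f t} with hBdef
  have hB : MeasurableSet B := measurableSet_lt measurable_const hfmeas
  set g : ℝ → ℝ := B.indicator (fun _ => m) with hgdef
  have hgmeas : Measurable g := measurable_const.indicator hB
  have heq : ∀ t ∈ 𝒯, f t = g t := by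
    intro t ht
    by_cases hpos : 0 < f t
    · rw [hgdef, Set.indicator_of_mem (by exact hpos : t ∈ B)]
      exact haon i hi t ht hpos
    · have hf0 : f t = 0 := le_antisymm (not_lt.mp hpos)
        (Finset.sum_nonneg fun k hk => hqnn i hi k hk t ht)
      rw [hgdef, Set.indicator_of_notMem (by exact hpos : t ∉ B), hf0]
  -- integrability
  have hintq : ∀ k ∈ Finset.Icc 1 K, IntegrableOn (q i k) 𝒯 := by
    intro k hk
    by_contra hcon
    have := integral_undef hcon
    rw [hKKT3 i hi k hk] at this
    exact absurd (hQ i hi k hk) (by rw [this]; exact lt_irrefl 0)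
  have hintf : IntegrableOn f 𝒯 := by
    apply integrable_finset_sum
    exact fun k hk => hintq k hk
  have hIf : ∫ t in 𝒯, f t = ∑ k ∈ Finset.Icc 1 K, Q i k := by
    rw [hfdef]
    rw [integral_finset_sum _ (fun k hk => hintq k hk)]
    exact Finset.sum_congr rfl fun k hk => hKKT3 i hi k hk
  have hae : f =ᵐ[volume.restrict 𝒯] g := ae_restrict_of_eqOn' hfmeas hgmeas 𝒯 heq
  have hIg : ∫ t in 𝒯, g t = ∑ k ∈ Finset.Icc 1 K, Q i k := by
    rw [← integral_congr_ae hae]; exact hIf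
  have hgint : IntegrableOn g 𝒯 := hintf.congr hae
  have hfin : (volume.restrict 𝒯) B < ⊤ := by
    have h1 : IntegrableOn (fun _ => m) B (volume.restrict 𝒯) :=
      (integrable_indicator_iff hB).mp hgint
    have h2 := (integrable_const_iff.mp h1).resolve_left (ne_of_gt hm)
    haveI := h2
    have h3 := measure_lt_top ((volume.restrict 𝒯).restrict B) univ
    rw [Measure.restrict_apply_univ] at h3
    exact h3
  have hIg2 : ∫ t in 𝒯, g t = ((volume.restrict 𝒯) B).toReal * m := by
    rw [hgdef]
    rw [integral_indicator_const (m : ℝ) hB]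
    simp [smul_eq_mul, Measure.real]
  have htoReal : ((volume.restrict 𝒯) B).toReal = (∑ k ∈ Finset.Icc 1 K, Q i k) / m := by
    have := hIg2.symm.trans hIg
    field_simp at this ⊢
    linarith
  have hsetEq : {t ∈ 𝒯 | 0 < ∑ k ∈ Finset.Icc 1 K, q i k t} = B ∩ 𝒯 := by
    ext t; simp only [Set.mem_setOf_eq, Set.mem_inter_iff, hBdef, hfdef]
    exact and_comm
  rw [hsetEq, ← Measure.restrict_apply hB, ← ENNReal.ofReal_toReal hfin.ne, htoReal]
end

section
/- Single-bottleneck DSO sub-problem solution (Lemma 5 of the paper, after Akamatsu et al. 2021). Let μ̄ > 0, d ≥ 0, demands Q_1,…,Q_K > 0, and set T_k = (Σ_{l≤k} Q_l)/μ̄ (T_0 = 0). For each k let 𝒯_k = Γ(T_k) = [t⁻_k, t⁺_k] be an interval of length T_k with c(t⁻_k) = c(t⁺_k) =: c̄_k (and 𝒯_0 = ∅). Define q_k(t) = μ̄ for t ∈ 𝒯_k∖𝒯_{k−1} and q_k(t) = 0 otherwise; ρ_k = Σ_{l≥k} (β^l − β^{l+1}) c̄_l + d (with β^{K+1} = 0);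 and p̂(t) = ρ_k − β^k c(t) − d for t ∈ 𝒯_k∖𝒯_{k−1}, p̂(t) = 0 for t ∉ 𝒯_K. Then: (a) p̂(t) ≥ 0 for all t; (b) for every k, every l ∈ {1,…,K} and every t ∈ 𝒯_k∖𝒯_{k−1}, β^l c(t) + p̂(t) + d − ρ_l ≥ 0, with equality when l = k (so the departure-time-choice complementarity conditions of [DSO-Sub(i)] hold); (c) Σ_k q_k(t) = μ̄ for every t ∈ 𝒯_K; and (d) ∫ q_k(t) dt = Q_k for every k. -/
open MeasureTheory Finset Set

/-- Telescoping sum helper. -/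
theorem dso_tele (β : ℕ → ℝ) (a b : ℕ) (h : a ≤ b) :
    ∑ m ∈ Finset.Ioc a b, (β m - β (m + 1)) = β (a + 1) - β (b + 1) := by
  induction b, h using Nat.le_induction with
  | base => simp
  | succ b hb ih => rw [Finset.sum_Ioc_succ_top (by omega), ih]; ring

/-- Lemma 5 of the paper (after Akamatsu et al. 2021): the explicit solution to the
single-bottleneck DSO sub-problem [DSO-Sub(i)]. -/
theorem dso_sub_solution
    (K : ℕ) (hK : 1 ≤ K)
    -- base schedule delay cost function
    (c : ℝ → ℝ) (hc0 : c 0 = 0) (hccont : Continuous c)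
    (hcdec : StrictAntiOn c (Set.Iic (0 : ℝ)))
    (hcinc : StrictMonoOn c (Set.Ici (0 : ℝ)))
    -- heterogeneity parameters 1 = β¹ > … > β^K > 0, β^(K+1) = 0
    (β : ℕ → ℝ) (hβ1 : β 1 = 1)
    (hβdec : ∀ k, 1 ≤ k → k < K → β (k + 1) < β k)
    (hβpos : ∀ k ∈ Finset.Icc 1 K, 0 < β k) (hβK1 : β (K + 1) = 0)
    -- bottleneck data
    (μbar : ℝ) (hμbar : 0 < μbar) (d : ℝ) (hd : 0 ≤ d)
    (Q : ℕ → ℝ) (hQ : ∀ k ∈ Finset.Icc 1 K, 0 < Q k)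
    -- windows 𝒯_k = Γ(T_k) = [t⁻_k, t⁺_k], length T_k = (Σ_(l≤k) Q_l)/μ̄,
    -- equal endpoint costs c̄_k
    (tm tp : ℕ → ℝ) (cbar : ℕ → ℝ)
    (hwin : ∀ k ∈ Finset.Icc 1 K,
      tm k ≤ tp k ∧
      tp k - tm k = (∑ l ∈ Finset.Icc 1 k, Q l) / μbar ∧
      c (tm k) = cbar k ∧ c (tp k) = cbar k)
    (W : ℕ → Set ℝ) (hW0 : W 0 = ∅)
    (hW : ∀ k ∈ Finset.Icc 1 K, W k = Set.Icc (tm k) (tp k))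
    -- the candidate flows q_k
    (q : ℕ → ℝ → ℝ)
    (hq : ∀ k ∈ Finset.Icc 1 K, ∀ t ∈ W k \ W (k - 1), q k t = μbar)
    (hq0 : ∀ k ∈ Finset.Icc 1 K, ∀ t, t ∉ W k \ W (k - 1) → q k t = 0)
    -- the candidate multipliers ρ_k
    (ρ : ℕ → ℝ)
    (hρ : ∀ k ∈ Finset.Icc 1 K,
      ρ k = (∑ l ∈ Finset.Icc k K, (β l - β (l + 1)) * cbar l) + d)
    -- the candidate price p̂
    (phat : ℝ → ℝ)
    (hphat : ∀ k ∈ Finset.Icc 1 K, ∀ t ∈ W k \ W (k - 1),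
      phat t = ρ k - β k * c t - d)
    (hphat0 : ∀ t ∉ W K, phat t = 0) :
    -- (a) nonnegativity of the price
    (∀ t : ℝ, 0 ≤ phat t) ∧
    -- (b) departure-time-choice complementarity
    (∀ k ∈ Finset.Icc 1 K, ∀ l ∈ Finset.Icc 1 K, ∀ t ∈ W k \ W (k - 1),
      0 ≤ β l * c t + phat t + d - ρ l ∧
      β k * c t + phat t + d - ρ k = 0) ∧
    -- (c) capacity is exactly used on 𝒯_K
    (∀ t ∈ W K, ∑ k ∈ Finset.Icc 1 K, q k t = μbar) ∧
    -- (d) demand conservation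
    (∀ k ∈ Finset.Icc 1 K, ∫ t, q k t = Q k) := by
  classical
  have hIccIoc : ∀ a b : ℕ, 1 ≤ a → Finset.Icc a b = Finset.Ioc (a - 1) b := by
    intro a b ha; rw [← Finset.Icc_add_one_left_eq_Ioc]; congr 1; omega
  have hTpos : ∀ k, 1 ≤ k → k ≤ K → 0 < (∑ l ∈ Finset.Icc 1 k, Q l) / μbar := by
    intro k h1 h2
    apply div_pos _ hμbar
    apply Finset.sum_pos
    · intro l hl; rw [Finset.mem_Icc] at hl
      exact hQ l (by simp only [Finset.mem_Icc]; omega)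
    · exact Finset.nonempty_Icc.mpr h1
  -- endpoints straddle 0
  have hneg : ∀ k, 1 ≤ k → k ≤ K → tm k < 0 ∧ 0 < tp k := by
    intro k h1 h2
    obtain ⟨hle, hlen, hm, hp⟩ := hwin k (by simp only [Finset.mem_Icc]; omega)
    have hTp := hTpos k h1 h2
    have hlt : tm k < tp k := by linarith
    constructor
    · by_contra h; push_neg at h
      have := hcinc.injOn (Set.mem_Ici.mpr h) (Set.mem_Ici.mpr (h.trans hle))
        (hm.trans hp.symm)
      linarith
    · by_contra h; push_neg at h
      have := hcdec.injOn (Set.mem_Iic.mpr (hle.trans h)) (Set.mem_Iic.mpr h)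
        (hm.trans hp.symm)
      linarith
  -- one-step nestedness
  have hstep : ∀ k, 1 ≤ k → k + 1 ≤ K → tm (k + 1) ≤ tm k ∧ tp k ≤ tp (k + 1) := by
    intro k h1 h2
    obtain ⟨hle, hlen, hm, hp⟩ := hwin k (by simp only [Finset.mem_Icc]; omega)
    obtain ⟨hle', hlen', hm', hp'⟩ := hwin (k + 1) (by simp only [Finset.mem_Icc]; omega)
    have hn1 := hneg k h1 (by omega)
    have hn2 := hneg (k + 1) (by omega) h2
    have hs : ∑ l ∈ Finset.Icc 1 (k + 1), Q l
        = (∑ l ∈ Finset.Icc 1 k, Q l) + Q (k + 1) :=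
      Finset.sum_Icc_succ_top (by omega) Q
    have hQk := hQ (k + 1) (by simp only [Finset.mem_Icc]; omega)
    have hTlt : (∑ l ∈ Finset.Icc 1 k, Q l) / μbar
        < (∑ l ∈ Finset.Icc 1 (k + 1), Q l) / μbar := by
      rw [hs, add_div]
      have : 0 < Q (k + 1) / μbar := div_pos hQk hμbar
      linarith
    constructor
    · by_contra h; push_neg at h
      have hc1 : cbar (k + 1) < cbar k := by
        rw [← hm, ← hm']
        exact hcdec (Set.mem_Iic.mpr hn1.1.le) (Set.mem_Iic.mpr hn2.1.le) h
      have htp : tp k < tp (k + 1) := by linarith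
      have hc2 : cbar k < cbar (k + 1) := by
        rw [← hp, ← hp']
        exact hcinc (Set.mem_Ici.mpr hn1.2.le) (Set.mem_Ici.mpr hn2.2.le) htp
      linarith
    · by_contra h; push_neg at h
      have hc1 : cbar (k + 1) < cbar k := by
        rw [← hp, ← hp']
        exact hcinc (Set.mem_Ici.mpr hn2.2.le) (Set.mem_Ici.mpr hn1.2.le) h
      have htm : tm (k + 1) < tm k := by linarith
      have hc2 : cbar k < cbar (k + 1) := by
        rw [← hm, ← hm']
        exact hcdec (Set.mem_Iic.mpr hn2.1.le) (Set.mem_Iic.mpr hn1.1.le) htm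
      linarith
  -- monotone nestedness
  have hmono : ∀ j k, 1 ≤ j → j ≤ k → k ≤ K → tm k ≤ tm j ∧ tp j ≤ tp k := by
    intro j k hj hjk hkK
    induction k, hjk using Nat.le_induction with
    | base => exact ⟨le_rfl, le_rfl⟩
    | succ k hk ih =>
      have h := hstep k (by omega) (by omega)
      have h' := ih (by omega)
      exact ⟨h.1.trans h'.1, h'.2.trans h.2⟩
  have hWmono : ∀ a b, 1 ≤ a → a ≤ b → b ≤ K → W a ⊆ W b := by
    intro a b ha hab hbK
    rw [hW a (by simp only [Finset.mem_Icc]; omega),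
      hW b (by simp only [Finset.mem_Icc]; omega)]
    exact Set.Icc_subset_Icc (hmono a b ha hab hbK).1 (hmono a b ha hab hbK).2
  -- upper bound on c on a window
  have hcupper : ∀ k, 1 ≤ k → k ≤ K → ∀ t, tm k ≤ t → t ≤ tp k →
      ∀ m, k ≤ m → m ≤ K → c t ≤ cbar m := by
    intro k h1 h2 t ht1 ht2 m hm1 hm2
    obtain ⟨_, _, hmm, hpm⟩ := hwin m (by simp only [Finset.mem_Icc]; omega)
    have hmn := hmono k m h1 hm1 hm2
    have hnm := hneg m (by omega) hm2
    rcases le_total t 0 with h | h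
    · rw [← hmm]
      exact hcdec.antitoneOn (Set.mem_Iic.mpr hnm.1.le) (Set.mem_Iic.mpr h)
        (hmn.1.trans ht1)
    · rw [← hpm]
      exact hcinc.monotoneOn (Set.mem_Ici.mpr h) (Set.mem_Ici.mpr hnm.2.le)
        (ht2.trans hmn.2)
  -- lower bound on c outside the previous window
  have hclow : ∀ k, 2 ≤ k → k ≤ K → ∀ t, tm k ≤ t → t ≤ tp k →
      ¬(tm (k - 1) ≤ t ∧ t ≤ tp (k - 1)) →
      ∀ m, 1 ≤ m → m ≤ k - 1 → cbar m ≤ c t := by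
    intro k h2 hkK t ht1 ht2 hnot m hm1 hm2
    obtain ⟨_, _, hmm, hpm⟩ := hwin m (by simp only [Finset.mem_Icc]; omega)
    have hmn := hmono m (k - 1) hm1 hm2 (by omega)
    have hnm := hneg m hm1 (by omega)
    have hnk1 := hneg (k - 1) (by omega) (by omega)
    rcases lt_or_ge t (tm (k - 1)) with h | h
    · have htm : t ≤ tm m := le_trans h.le hmn.1
      rw [← hmm]
      exact hcdec.antitoneOn (Set.mem_Iic.mpr (htm.trans hnm.1.le))
        (Set.mem_Iic.mpr hnm.1.le) htm
    · have htp : tp (k - 1) < t := by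
        by_contra hc; push_neg at hc; exact hnot ⟨h, hc⟩
      have htp' : tp m ≤ t := le_trans hmn.2 htp.le
      rw [← hpm]
      exact hcinc.monotoneOn (Set.mem_Ici.mpr hnm.2.le)
        (Set.mem_Ici.mpr (hnm.2.le.trans htp')) htp'
  -- β steps are nonnegative
  have hβstep : ∀ m, 1 ≤ m → m ≤ K → 0 ≤ β m - β (m + 1) := by
    intro m h1 h2
    by_cases hmK : m = K
    · subst hmK
      rw [hβK1, sub_zero]
      exact (hβpos m (by simp only [Finset.mem_Icc]; omega)).le
    · linarith [hβdec m h1 (by omega)]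
  -- difference of multipliers
  have hρdiff : ∀ l k, 1 ≤ l → l ≤ k → k ≤ K →
      ρ l - ρ k = ∑ m ∈ Finset.Ioc (l - 1) (k - 1), (β m - β (m + 1)) * cbar m := by
    intro l k hl hlk hkK
    rw [hρ l (by simp only [Finset.mem_Icc]; omega),
      hρ k (by simp only [Finset.mem_Icc]; omega),
      hIccIoc l K hl, hIccIoc k K (by omega)]
    have h := Finset.sum_Ioc_consecutive (fun m => (β m - β (m + 1)) * cbar m)
      (show l - 1 ≤ k - 1 by omega) (show k - 1 ≤ K by omega)
    linarith
  -- telescoping for β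
  have htele : ∀ l k, 1 ≤ l → l ≤ k →
      β l - β k = ∑ m ∈ Finset.Ioc (l - 1) (k - 1), (β m - β (m + 1)) := by
    intro l k hl hlk
    have e := dso_tele β (l - 1) (k - 1) (by omega)
    have h1 : l - 1 + 1 = l := by omega
    have h2 : k - 1 + 1 = k := by omega
    rw [e, h1, h2]
  -- (b) inequality
  have keyB : ∀ k, 1 ≤ k → k ≤ K → ∀ l, 1 ≤ l → l ≤ K → ∀ t, t ∈ W k \ W (k - 1) →
      0 ≤ β l * c t + phat t + d - ρ l := by
    intro k hk1 hkK l hl1 hlK t ht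
    have hkmem : k ∈ Finset.Icc 1 K := by simp only [Finset.mem_Icc]; omega
    have htk : t ∈ Set.Icc (tm k) (tp k) := by rw [← hW k hkmem]; exact ht.1
    rw [Set.mem_Icc] at htk
    have hpt := hphat k hkmem t ht
    rcases le_or_gt l k with hlk | hkl
    · have hd1 := hρdiff l k hl1 hlk hkK
      have hd2 := htele l k hl1 hlk
      have key : β l * c t + phat t + d - ρ l
          = ∑ m ∈ Finset.Ioc (l - 1) (k - 1), (β m - β (m + 1)) * (c t - cbar m) := by
        rw [hpt]
        have hr : β l * c t + (ρ k - β k * c t - d) + d - ρ l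
            = (β l - β k) * c t - (ρ l - ρ k) := by ring
        rw [hr, hd1, hd2, Finset.sum_mul, ← Finset.sum_sub_distrib]
        exact Finset.sum_congr rfl fun m _ => by ring
      rw [key]
      apply Finset.sum_nonneg
      intro m hm
      rw [Finset.mem_Ioc] at hm
      have hm1 : 1 ≤ m := by omega
      have hk2 : 2 ≤ k := by omega
      apply mul_nonneg (hβstep m hm1 (by omega))
      have hnotin : ¬(tm (k - 1) ≤ t ∧ t ≤ tp (k - 1)) := by
        have h := ht.2
        rw [hW (k - 1) (by simp only [Finset.mem_Icc]; omega), Set.mem_Icc] at h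
        exact h
      have := hclow k hk2 hkK t htk.1 htk.2 hnotin m hm1 (by omega)
      linarith
    · have hd1 := hρdiff k l hk1 hkl.le hlK
      have hd2 := htele k l hk1 hkl.le
      have key : β l * c t + phat t + d - ρ l
          = ∑ m ∈ Finset.Ioc (k - 1) (l - 1), (β m - β (m + 1)) * (cbar m - c t) := by
        rw [hpt]
        have hr : β l * c t + (ρ k - β k * c t - d) + d - ρ l
            = (ρ k - ρ l) - (β k - β l) * c t := by ring
        rw [hr, hd1, hd2, Finset.sum_mul, ← Finset.sum_sub_distrib]
        exact Finset.sum_congr rfl fun m _ => by ring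
      rw [key]
      apply Finset.sum_nonneg
      intro m hm
      rw [Finset.mem_Ioc] at hm
      apply mul_nonneg (hβstep m (by omega) (by omega))
      have := hcupper k hk1 hkK t htk.1 htk.2 m (by omega) (by omega)
      linarith
  -- (a) on each slice
  have hAon : ∀ k, 1 ≤ k → k ≤ K → ∀ t, t ∈ W k \ W (k - 1) → 0 ≤ phat t := by
    intro k hk1 hkK t ht
    have hkmem : k ∈ Finset.Icc 1 K := by simp only [Finset.mem_Icc]; omega
    have htk : t ∈ Set.Icc (tm k) (tp k) := by rw [← hW k hkmem]; exact ht.1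
    rw [Set.mem_Icc] at htk
    have hpt := hphat k hkmem t ht
    have hβk : β k = ∑ m ∈ Finset.Ioc (k - 1) K, (β m - β (m + 1)) := by
      have e := dso_tele β (k - 1) K (by omega)
      have h1 : k - 1 + 1 = k := by omega
      rw [e, h1, hβK1, sub_zero]
    have expand :
        (∑ m ∈ Finset.Ioc (k - 1) K, (β m - β (m + 1)) * cbar m)
          - (∑ m ∈ Finset.Ioc (k - 1) K, (β m - β (m + 1))) * c t
        = ∑ m ∈ Finset.Ioc (k - 1) K, (β m - β (m + 1)) * (cbar m - c t) := by
      rw [Finset.sum_mul, ← Finset.sum_sub_distrib]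
      exact Finset.sum_congr rfl fun m _ => by ring
    have key : phat t
        = ∑ m ∈ Finset.Ioc (k - 1) K, (β m - β (m + 1)) * (cbar m - c t) := by
      rw [hpt, hρ k hkmem, hIccIoc k K hk1, hβk]
      linarith
    rw [key]
    apply Finset.sum_nonneg
    intro m hm
    rw [Finset.mem_Ioc] at hm
    apply mul_nonneg (hβstep m (by omega) (by omega))
    have := hcupper k hk1 hkK t htk.1 htk.2 m (by omega) (by omega)
    linarith
  -- minimal covering index
  have hcover : ∀ t, t ∈ W K → ∃ k, (1 ≤ k ∧ k ≤ K ∧ t ∈ W k \ W (k - 1)) ∧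
      ∀ j, 1 ≤ j → j ≤ K → j ≠ k → t ∉ W j \ W (j - 1) := by
    intro t ht
    have hex : ∃ n, 1 ≤ n ∧ n ≤ K ∧ t ∈ W n := ⟨K, hK, le_rfl, ht⟩
    obtain ⟨hk1, hkK, htk⟩ := Nat.find_spec hex
    set k := Nat.find hex with hkdef
    have hmin : ∀ j, j < k → ¬(1 ≤ j ∧ j ≤ K ∧ t ∈ W j) := fun j hj =>
      Nat.find_min hex hj
    refine ⟨k, ⟨hk1, hkK, htk, ?_⟩, ?_⟩
    · rcases Nat.eq_or_lt_of_le hk1 with h1 | h1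
      · rw [show k - 1 = 0 by omega, hW0]
        exact Set.notMem_empty t
      · intro hmem
        exact hmin (k - 1) (by omega) ⟨by omega, by omega, hmem⟩
    · intro j hj1 hjK hjk
      rcases lt_or_gt_of_ne hjk with h | h
      · intro hmem; exact hmin j h ⟨hj1, hjK, hmem.1⟩
      · intro hmem
        exact hmem.2 (hWmono k (j - 1) hk1 (by omega) (by omega) htk)
  refine ⟨?_, ?_, ?_, ?_⟩
  · -- (a)
    intro t
    by_cases ht : t ∈ W K
    · obtain ⟨k, ⟨hk1, hkK, htk⟩, -⟩ := hcover t ht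
      exact hAon k hk1 hkK t htk
    · rw [hphat0 t ht]
  · -- (b)
    intro k hk l hl t ht
    rw [Finset.mem_Icc] at hk hl
    refine ⟨keyB k hk.1 hk.2 l hl.1 hl.2 t ht, ?_⟩
    rw [hphat k (by simp only [Finset.mem_Icc]; omega) t ht]
    ring
  · -- (c)
    intro t ht
    obtain ⟨k, ⟨hk1, hkK, htk⟩, huniq⟩ := hcover t ht
    have hkmem : k ∈ Finset.Icc 1 K := by simp only [Finset.mem_Icc]; omega
    rw [Finset.sum_eq_single_of_mem k hkmem]
    · exact hq k hkmem t htk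
    · intro j hj hne
      rw [Finset.mem_Icc] at hj
      exact hq0 j (by simp only [Finset.mem_Icc]; omega) t (huniq j hj.1 hj.2 hne)
  · -- (d)
    intro k hkmem'
    have hkmem := hkmem'
    rw [Finset.mem_Icc] at hkmem'
    obtain ⟨hk1, hkK⟩ := hkmem'
    obtain ⟨hle, hlen, -, -⟩ := hwin k hkmem
    have hWk := hW k hkmem
    have hfun : q k = Set.indicator (W k \ W (k - 1)) (fun _ => μbar) := by
      funext t
      by_cases h : t ∈ W k \ W (k - 1)
      · rw [Set.indicator_of_mem h, hq k hkmem t h]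
      · rw [Set.indicator_of_notMem h, hq0 k hkmem t h]
    rcases Nat.lt_or_ge k 2 with h1 | h1
    · -- k = 1
      have hk1' : k = 1 := by omega
      have hset : W k \ W (k - 1) = Set.Icc (tm k) (tp k) := by
        rw [show k - 1 = 0 by omega, hW0, Set.diff_empty, hWk]
      rw [hfun, hset, MeasureTheory.integral_indicator_const _ measurableSet_Icc, measureReal_def,
        Real.volume_Icc, ENNReal.toReal_ofReal (by linarith), smul_eq_mul, hlen, hk1',
        Finset.Icc_self, Finset.sum_singleton]
      field_simp
    · -- 2 ≤ k
      have hk1m : (k - 1) ∈ Finset.Icc 1 K := by simp only [Finset.mem_Icc]; omega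
      obtain ⟨hle', hlen', -, -⟩ := hwin (k - 1) hk1m
      have hWk1 := hW (k - 1) hk1m
      have hsub : W (k - 1) ⊆ W k := hWmono (k - 1) k (by omega) (by omega) hkK
      have hmeasA : MeasurableSet (W k) := hWk ▸ measurableSet_Icc
      have hmeasB : MeasurableSet (W (k - 1)) := hWk1 ▸ measurableSet_Icc
      have hsum : ∑ l ∈ Finset.Icc 1 k, Q l
          = (∑ l ∈ Finset.Icc 1 (k - 1), Q l) + Q k := by
        have h2 : k = (k - 1) + 1 := by omega
        calc ∑ l ∈ Finset.Icc 1 k, Q l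
            = ∑ l ∈ Finset.Icc 1 ((k - 1) + 1), Q l := by rw [← h2]
          _ = (∑ l ∈ Finset.Icc 1 (k - 1), Q l) + Q ((k - 1) + 1) :=
              Finset.sum_Icc_succ_top (by omega) Q
          _ = (∑ l ∈ Finset.Icc 1 (k - 1), Q l) + Q k := by rw [← h2]
      have hvol : MeasureTheory.volume (W k \ W (k - 1))
          = ENNReal.ofReal (Q k / μbar) := by
        rw [MeasureTheory.measure_diff hsub hmeasB.nullMeasurableSet
          (by rw [hWk1, Real.volume_Icc]; exact ENNReal.ofReal_ne_top)]
        rw [hWk, hWk1, Real.volume_Icc, Real.volume_Icc,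
          ← ENNReal.ofReal_sub _ (by linarith : (0 : ℝ) ≤ tp (k - 1) - tm (k - 1))]
        congr 1
        rw [hlen, hlen', hsum]
        ring
      rw [hfun, MeasureTheory.integral_indicator_const _ (hmeasA.diff hmeasB), measureReal_def, hvol,
        ENNReal.toReal_ofReal (le_of_lt (div_pos (hQ k hkmem) hμbar)), smul_eq_mul]
      field_simp
end

section
/- Solution to the DSO problem (Proposition 1 of the paper). Define the explicit DSO candidate: T_{i,k} = (Σ_{l≤k} Q_{i,l})/(μ_i − μ_{i+1}) (with T_{i,0} = 0, 𝒯_{i,0} = ∅), 𝒯_{i,k} = Γ(T_{i,k}) with common endpoint cost c̄(T_{i,k}); ρ^SO_{i,k} = Σ_{l≥k} (β^l − β^{l+1}) c̄(T_{i,l}) + d_i (with β^{K+1} = 0); q^SO_{i,k}(t) = μ_i − μ_{i+1} for t ∈ 𝒯_{i,k}∖𝒯_{i,k−1} and 0 otherwise; p^SO_i(t) = ρ^SO_{i,k} − β^k c(t) − d_i − Σ_{j<i} p^SO_j(t) for t ∈ 𝒯_{i,k}∖𝒯_{i,k−1} and p^SO_i(t) = 0 for t ∉ 𝒯_{i,K}.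 Assume the windows are spatially nested, T_{i,K} < T_{i+1,K} for all i ∈ {1,…,N−1}, and that p^SO_i(t) > 0 for every t in the interior of 𝒯_{i,K} and every i (Assumption 1 for the candidate). Then (q^SO, p^SO, ρ^SO) satisfies the KKT conditions (i)–(iii) of the DSO linear program, i.e. it is a DSO solution. -/
open MeasureTheory Finset Set

private lemma tele_sum (f : ℕ → ℝ) (a b : ℕ) (h : a ≤ b + 1) :
    ∑ l ∈ Finset.Icc a b, (f l - f (l + 1)) = f a - f (b + 1) := by
  rw [← Finset.Ico_add_one_right_eq_Icc, Finset.sum_Ico_eq_sum_range]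
  have h2 : ∑ k ∈ Finset.range (b + 1 - a), (f (a + k) - f (a + k + 1))
      = f (a + 0) - f (a + (b + 1 - a)) := Finset.sum_range_sub' (fun i => f (a + i)) _
  rw [h2, show a + 0 = a from rfl, show a + (b + 1 - a) = b + 1 by omega]


/-- Proposition 1 of the paper: the explicit candidate (q^SO, p^SO, ρ^SO) satisfies
the KKT conditions of the DSO linear program, i.e. it is a DSO solution. -/
theorem dso_explicit_solution
    (N K : ℕ) (hN : 1 ≤ N) (hK : 1 ≤ K)
    (𝒯 : Set ℝ)
    -- base schedule delay cost function
    (c : ℝ → ℝ) (hc0 : c 0 = 0) (hccont : Continuous c)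
    (hcdec : StrictAntiOn c (Set.Iic (0 : ℝ)))
    (hcinc : StrictMonoOn c (Set.Ici (0 : ℝ)))
    -- heterogeneity parameters 1 = β¹ > … > β^K > 0, β^(K+1) = 0
    (β : ℕ → ℝ) (hβ1 : β 1 = 1)
    (hβdec : ∀ k, 1 ≤ k → k < K → β (k + 1) < β k)
    (hβpos : ∀ k ∈ Finset.Icc 1 K, 0 < β k) (hβK1 : β (K + 1) = 0)
    -- capacities μ₁ > … > μ_N > 0, μ_(N+1) = 0
    (μ : ℕ → ℝ) (hμdec : ∀ i, 1 ≤ i → i < N → μ (i + 1) < μ i)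
    (hμpos : ∀ i ∈ Finset.Icc 1 N, 0 < μ i) (hμtop : μ (N + 1) = 0)
    -- free-flow travel times 0 ≤ d₁ < … < d_N
    (d : ℕ → ℝ) (hd1 : 0 ≤ d 1)
    (hdinc : ∀ i, 1 ≤ i → i < N → d i < d (i + 1))
    -- demands
    (Q : ℕ → ℕ → ℝ) (hQ : ∀ i ∈ Finset.Icc 1 N, ∀ k ∈ Finset.Icc 1 K, 0 < Q i k)
    -- group arrival windows 𝒯_(i,k) = Γ(T_(i,k)) = [t⁻_(i,k), t⁺_(i,k)] of length
    -- T_(i,k) = (Σ_(l≤k) Q_(i,l))/(μ_i − μ_(i+1)) with equal endpoint costs c̄(T_(i,k))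
    (tm tp : ℕ → ℕ → ℝ) (cbar : ℕ → ℕ → ℝ)
    (hwin : ∀ i ∈ Finset.Icc 1 N, ∀ k ∈ Finset.Icc 1 K,
      tm i k ≤ tp i k ∧
      tp i k - tm i k = (∑ l ∈ Finset.Icc 1 k, Q i l) / (μ i - μ (i + 1)) ∧
      c (tm i k) = cbar i k ∧ c (tp i k) = cbar i k)
    (W : ℕ → ℕ → Set ℝ) (hW0 : ∀ i, W i 0 = ∅)
    (hW : ∀ i ∈ Finset.Icc 1 N, ∀ k ∈ Finset.Icc 1 K, W i k = Set.Icc (tm i k) (tp i k))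
    (hWT : ∀ i ∈ Finset.Icc 1 N, W i K ⊆ 𝒯)
    -- the explicit DSO equilibrium costs ρ^SO
    (ρSO : ℕ → ℕ → ℝ)
    (hρSO : ∀ i ∈ Finset.Icc 1 N, ∀ k ∈ Finset.Icc 1 K,
      ρSO i k = (∑ l ∈ Finset.Icc k K, (β l - β (l + 1)) * cbar i l) + d i)
    -- the explicit DSO flows q^SO (all-or-nothing at rate μ_i − μ_(i+1))
    (qSO : ℕ → ℕ → ℝ → ℝ)
    (hqSO : ∀ i ∈ Finset.Icc 1 N, ∀ k ∈ Finset.Icc 1 K, ∀ t ∈ W i k \ W i (k - 1),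
      qSO i k t = μ i - μ (i + 1))
    (hqSO0 : ∀ i ∈ Finset.Icc 1 N, ∀ k ∈ Finset.Icc 1 K, ∀ t,
      t ∉ W i k \ W i (k - 1) → qSO i k t = 0)
    -- the explicit DSO prices p^SO, defined recursively on the group windows
    (pSO : ℕ → ℝ → ℝ)
    (hpSO : ∀ i ∈ Finset.Icc 1 N, ∀ k ∈ Finset.Icc 1 K, ∀ t ∈ W i k \ W i (k - 1),
      pSO i t = ρSO i k - β k * c t - d i - ∑ j ∈ Finset.Icc 1 (i - 1), pSO j t)
    (hpSO0 : ∀ i ∈ Finset.Icc 1 N, ∀ t ∉ W i K, pSO i t = 0)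
    -- spatial nesting of the windows and T_(i,K) < T_(i+1,K)
    (hnest : ∀ i, 1 ≤ i → i < N → W i K ⊆ W (i + 1) K)
    (hTinc : ∀ i, 1 ≤ i → i < N →
      tp i K - tm i K < tp (i + 1) K - tm (i + 1) K)
    -- Assumption 1 for the candidate: positive prices on the interior of 𝒯_(i,K)
    (hA1 : ∀ i ∈ Finset.Icc 1 N, ∀ t ∈ Set.Ioo (tm i K) (tp i K), 0 < pSO i t) :
    -- KKT condition (i)
    (∀ i ∈ Finset.Icc 1 N, ∀ k ∈ Finset.Icc 1 K, ∀ t ∈ 𝒯,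
      0 ≤ qSO i k t ∧
      0 ≤ β k * c t + (∑ j ∈ Finset.Icc 1 i, pSO j t) + d i - ρSO i k ∧
      qSO i k t * (β k * c t + (∑ j ∈ Finset.Icc 1 i, pSO j t) + d i - ρSO i k) = 0) ∧
    -- KKT condition (ii)
    (∀ i ∈ Finset.Icc 1 N, ∀ t ∈ 𝒯,
      0 ≤ pSO i t ∧
      0 ≤ μ i - ∑ j ∈ Finset.Icc i N, ∑ k ∈ Finset.Icc 1 K, qSO j k t ∧
      pSO i t * (μ i - ∑ j ∈ Finset.Icc i N, ∑ k ∈ Finset.Icc 1 K, qSO j k t) = 0) ∧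
    -- KKT condition (iii)
    (∀ i ∈ Finset.Icc 1 N, ∀ k ∈ Finset.Icc 1 K, ∫ t in 𝒯, qSO i k t = Q i k) := by
  classical
  have hKmem : K ∈ Finset.Icc 1 K := Finset.mem_Icc.mpr ⟨hK, le_rfl⟩
  have hgap : ∀ i ∈ Finset.Icc 1 N, 0 < μ i - μ (i + 1) := by
    intro i hi; rw [Finset.mem_Icc] at hi
    rcases eq_or_lt_of_le hi.2 with h | h
    · subst h; rw [hμtop]
      simpa using hμpos i (Finset.mem_Icc.mpr ⟨hi.1, le_rfl⟩)
    · have := hμdec i hi.1 h; linarith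
  have hβstep : ∀ l ∈ Finset.Icc 1 K, 0 ≤ β l - β (l + 1) := by
    intro l hl; rw [Finset.mem_Icc] at hl
    rcases eq_or_lt_of_le hl.2 with h | h
    · subst h; rw [hβK1]
      have := hβpos l (Finset.mem_Icc.mpr ⟨hl.1, le_rfl⟩); linarith
    · have := hβdec l hl.1 h; linarith
  have hβtel : ∀ k, 1 ≤ k → k ≤ K + 1 →
      ∑ l ∈ Finset.Icc k K, (β l - β (l + 1)) = β k := by
    intro k hk1 hk2
    rw [tele_sum β k K hk2, hβK1, sub_zero]
  have hμtel : ∀ a, a ≤ N + 1 → ∑ j ∈ Finset.Icc a N, (μ j - μ (j + 1)) = μ a := by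
    intro a ha; rw [tele_sum μ a N ha, hμtop, sub_zero]
  have hμmono : ∀ b, b ≤ N → ∀ a, 1 ≤ a → a ≤ b → μ b ≤ μ a := by
    intro b
    induction b with
    | zero => intro _ a _ h; omega
    | succ n ih =>
      intro hbN a ha hab
      rcases eq_or_lt_of_le hab with h | h
      · rw [h]
      · have hn1 : 1 ≤ n := by omega
        have h1 := hμdec n hn1 (by omega)
        have h2 := ih (by omega) a ha (by omega)
        linarith
  -- window basics
  have hwinB : ∀ i ∈ Finset.Icc 1 N, ∀ k ∈ Finset.Icc 1 K,
      tm i k < 0 ∧ 0 < tp i k ∧ c (tm i k) = cbar i k ∧ c (tp i k) = cbar i k ∧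
      tp i k - tm i k = (∑ l ∈ Finset.Icc 1 k, Q i l) / (μ i - μ (i + 1)) := by
    intro i hi k hk
    obtain ⟨h1, h2, h3, h4⟩ := hwin i hi k hk
    have hk' := Finset.mem_Icc.mp hk
    have hQs : 0 < ∑ l ∈ Finset.Icc 1 k, Q i l := by
      apply Finset.sum_pos
      · intro l hl
        have hl' := Finset.mem_Icc.mp hl
        exact hQ i hi l (Finset.mem_Icc.mpr ⟨hl'.1, le_trans hl'.2 hk'.2⟩)
      · exact ⟨k, Finset.mem_Icc.mpr ⟨hk'.1, le_rfl⟩⟩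
    have hlen : 0 < tp i k - tm i k := by rw [h2]; exact div_pos hQs (hgap i hi)
    have hmlt : tm i k < tp i k := by linarith
    have htm : tm i k < 0 := by
      by_contra h
      push_neg at h
      have := hcinc (Set.mem_Ici.mpr h) (Set.mem_Ici.mpr (le_trans h h1)) hmlt
      rw [h3, h4] at this; exact lt_irrefl _ this
    have htp : 0 < tp i k := by
      by_contra h
      push_neg at h
      have := hcdec (Set.mem_Iic.mpr (le_of_lt htm)) (Set.mem_Iic.mpr h) hmlt
      rw [h3, h4] at this; exact lt_irrefl _ this
    exact ⟨htm, htp, h3, h4, h2⟩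
  have cle_of : ∀ x y : ℝ, x ≤ y → y ≤ 0 → c y ≤ c x := by
    intro x y hxy hy
    rcases eq_or_lt_of_le hxy with h | h
    · rw [h]
    · exact le_of_lt (hcdec (Set.mem_Iic.mpr (le_trans hxy hy)) (Set.mem_Iic.mpr hy) h)
  have cle_of' : ∀ x y : ℝ, 0 ≤ x → x ≤ y → c x ≤ c y := by
    intro x y hx hxy
    rcases eq_or_lt_of_le hxy with h | h
    · rw [h]
    · exact le_of_lt (hcinc (Set.mem_Ici.mpr hx) (Set.mem_Ici.mpr (le_trans hx hxy)) h)
  have hcle : ∀ i ∈ Finset.Icc 1 N, ∀ k ∈ Finset.Icc 1 K, ∀ t ∈ W i k, c t ≤ cbar i k := by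
    intro i hi k hk t htW
    obtain ⟨htm, htp, h3, h4, _⟩ := hwinB i hi k hk
    rw [hW i hi k hk, Set.mem_Icc] at htW
    rcases le_total t 0 with h | h
    · rw [← h3]; exact cle_of _ _ htW.1 h
    · rw [← h4]; exact cle_of' _ _ h htW.2
  have hcge : ∀ i ∈ Finset.Icc 1 N, ∀ k ∈ Finset.Icc 1 K, ∀ t : ℝ,
      t ∉ W i k → cbar i k ≤ c t := by
    intro i hi k hk t htW
    obtain ⟨htm, htp, h3, h4, _⟩ := hwinB i hi k hk
    rw [hW i hi k hk, Set.mem_Icc, not_and_or, not_le, not_le] at htW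
    rcases htW with h | h
    · rw [← h3]; exact cle_of _ _ (le_of_lt h) (le_of_lt htm)
    · rw [← h4]; exact cle_of' _ _ (le_of_lt htp) (le_of_lt h)
  -- generic nesting of equal-cost intervals
  have nest2 : ∀ a1 b1 a2 b2 : ℝ, a1 < 0 → 0 < b1 → a2 < 0 → 0 < b2 →
      c a1 = c b1 → c a2 = c b2 → b1 - a1 < b2 - a2 → a2 < a1 ∧ b1 < b2 := by
    intro a1 b1 a2 b2 ha1 hb1 ha2 hb2 e1 e2 hL
    have key : a2 < a1 := by
      by_contra h
      push_neg at h
      have h1 : c a2 ≤ c a1 := cle_of a1 a2 h (le_of_lt ha2)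
      rw [e1, e2] at h1
      have h2 : b2 ≤ b1 := by
        by_contra hb
        push_neg at hb
        exact absurd (hcinc (Set.mem_Ici.mpr (le_of_lt hb1))
          (Set.mem_Ici.mpr (le_of_lt hb2)) hb) (not_lt.mpr h1)
      linarith
    refine ⟨key, ?_⟩
    have h1 : c a1 < c a2 := hcdec (Set.mem_Iic.mpr (le_of_lt ha2))
      (Set.mem_Iic.mpr (le_of_lt ha1)) key
    rw [e1, e2] at h1
    by_contra hb
    push_neg at hb
    exact absurd h1 (not_lt.mpr (cle_of' b2 b1 (le_of_lt hb2) hb))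
  -- strict growth of window lengths in k
  have hLmono : ∀ i ∈ Finset.Icc 1 N, ∀ k k', 1 ≤ k → k < k' → k' ≤ K →
      tp i k - tm i k < tp i k' - tm i k' := by
    intro i hi k k' hk hkk hk'
    obtain ⟨_, _, _, _, h2⟩ := hwinB i hi k (Finset.mem_Icc.mpr ⟨hk, by omega⟩)
    obtain ⟨_, _, _, _, h2'⟩ := hwinB i hi k' (Finset.mem_Icc.mpr ⟨by omega, hk'⟩)
    rw [h2, h2']
    have hsum : ∑ l ∈ Finset.Icc 1 k, Q i l < ∑ l ∈ Finset.Icc 1 k', Q i l := by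
      apply Finset.sum_lt_sum_of_subset (Finset.Icc_subset_Icc le_rfl (by omega))
        (i := k') (Finset.mem_Icc.mpr ⟨by omega, le_rfl⟩) (by rw [Finset.mem_Icc]; omega)
        (hQ i hi k' (Finset.mem_Icc.mpr ⟨by omega, hk'⟩))
      intro j hj _
      have hj' := Finset.mem_Icc.mp hj
      exact le_of_lt (hQ i hi j (Finset.mem_Icc.mpr ⟨hj'.1, le_trans hj'.2 hk'⟩))
    gcongr
    exact hgap i hi
  have hknest : ∀ i ∈ Finset.Icc 1 N, ∀ k k', 1 ≤ k → k < k' → k' ≤ K →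
      tm i k' < tm i k ∧ tp i k < tp i k' := by
    intro i hi k k' hk hkk hk'
    obtain ⟨ha1, hb1, e1m, e1p, _⟩ := hwinB i hi k (Finset.mem_Icc.mpr ⟨hk, by omega⟩)
    obtain ⟨ha2, hb2, e2m, e2p, _⟩ := hwinB i hi k' (Finset.mem_Icc.mpr ⟨by omega, hk'⟩)
    exact nest2 _ _ _ _ ha1 hb1 ha2 hb2 (by rw [e1m, e1p]) (by rw [e2m, e2p])
      (hLmono i hi k k' hk hkk hk')
  have hWsub : ∀ i ∈ Finset.Icc 1 N, ∀ k k', 1 ≤ k → k ≤ k' → k' ≤ K → W i k ⊆ W i k' := by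
    intro i hi k k' hk hkk hk'
    rcases eq_or_lt_of_le hkk with h | h
    · rw [h]
    · rw [hW i hi k (Finset.mem_Icc.mpr ⟨hk, by omega⟩),
        hW i hi k' (Finset.mem_Icc.mpr ⟨by omega, hk'⟩)]
      obtain ⟨h1, h2⟩ := hknest i hi k k' hk h hk'
      exact Set.Icc_subset_Icc (le_of_lt h1) (le_of_lt h2)
  have hLchain : ∀ i, i ≤ N → ∀ j, 1 ≤ j → j < i → tp j K - tm j K < tp i K - tm i K := by
    intro i
    induction i with
    | zero => intro _ j _ h; omega
    | succ n ih =>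
      intro hiN j hj hji
      have hn1 : 1 ≤ n := by omega
      have hstep := hTinc n hn1 (by omega)
      rcases eq_or_lt_of_le (show j ≤ n by omega) with h | h
      · rw [h]; exact hstep
      · exact lt_trans (ih (by omega) j hj h) hstep
  have hspat : ∀ i ∈ Finset.Icc 1 N, ∀ j, 1 ≤ j → j < i →
      tm i K < tm j K ∧ tp j K < tp i K := by
    intro i hi j hj hji
    have hiN := (Finset.mem_Icc.mp hi).2
    obtain ⟨ha1, hb1, e1m, e1p, _⟩ := hwinB j (Finset.mem_Icc.mpr ⟨hj, by omega⟩) K hKmem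
    obtain ⟨ha2, hb2, e2m, e2p, _⟩ := hwinB i hi K hKmem
    exact nest2 _ _ _ _ ha1 hb1 ha2 hb2 (by rw [e1m, e1p]) (by rw [e2m, e2p])
      (hLchain i hiN j hj hji)
  have hWsubK : ∀ i ∈ Finset.Icc 1 N, ∀ j, 1 ≤ j → j ≤ i → W j K ⊆ W i K := by
    intro i hi j hj hji
    have hiN := (Finset.mem_Icc.mp hi).2
    rcases eq_or_lt_of_le hji with h | h
    · rw [h]
    · obtain ⟨h1, h2⟩ := hspat i hi j hj h
      rw [hW j (Finset.mem_Icc.mpr ⟨hj, by omega⟩) K hKmem, hW i hi K hKmem]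
      exact Set.Icc_subset_Icc (le_of_lt h1) (le_of_lt h2)
  have hsumsplit : ∀ i, 1 ≤ i → ∀ t : ℝ,
      ∑ j ∈ Finset.Icc 1 i, pSO j t = ∑ j ∈ Finset.Icc 1 (i - 1), pSO j t + pSO i t := by
    intro i hi1 t
    have h1 : i - 1 + 1 = i := by omega
    conv_lhs => rw [← h1]
    rw [Finset.sum_Icc_succ_top (by omega : 1 ≤ i - 1 + 1), h1]
  -- the key decomposition of the price sum
  have hkey : ∀ i ∈ Finset.Icc 1 N, ∀ t : ℝ, ∃ m, 1 ≤ m ∧ m ≤ K + 1 ∧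
      (∀ k, 1 ≤ k → k < m → t ∉ W i k) ∧
      (m ≤ K → t ∈ W i m ∧ t ∉ W i (m - 1)) ∧
      (t ∈ W i K → m ≤ K) ∧
      (∑ j ∈ Finset.Icc 1 i, pSO j t)
        = (∑ l ∈ Finset.Icc m K, (β l - β (l + 1)) * cbar i l) - β m * c t := by
    intro i hi t
    have hi1 := (Finset.mem_Icc.mp hi).1
    have hiN := (Finset.mem_Icc.mp hi).2
    by_cases ht : t ∈ W i K
    · have hex : ∃ k, 1 ≤ k ∧ t ∈ W i k := ⟨K, hK, ht⟩
      obtain ⟨hm1, htm⟩ := Nat.find_spec hex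
      set m := Nat.find hex with hm
      have hmK : m ≤ K := Nat.find_min' hex ⟨hK, ht⟩
      have hnot : ∀ k, 1 ≤ k → k < m → t ∉ W i k := by
        intro k h1 h2 h3
        exact Nat.find_min hex (by omega) ⟨h1, h3⟩
      have htm' : t ∉ W i (m - 1) := by
        rcases eq_or_lt_of_le hm1 with h | h
        · rw [show m - 1 = 0 by omega, hW0]; exact Set.notMem_empty t
        · exact hnot (m - 1) (by omega) (by omega)
      refine ⟨m, hm1, by omega, hnot, fun _ => ⟨htm, htm'⟩, fun _ => hmK, ?_⟩
      have hp := hpSO i hi m (Finset.mem_Icc.mpr ⟨hm1, hmK⟩) t ⟨htm, htm'⟩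
      rw [hsumsplit i hi1 t, hp, hρSO i hi m (Finset.mem_Icc.mpr ⟨hm1, hmK⟩)]
      ring
    · refine ⟨K + 1, by omega, le_rfl, ?_, fun h => absurd h (by omega),
        fun h => absurd h ht, ?_⟩
      · intro k h1 h2 hkW
        exact ht (hWsub i hi k K h1 (by omega) le_rfl hkW)
      · have hz : ∀ j ∈ Finset.Icc 1 i, pSO j t = 0 := by
          intro j hj
          have hj' := Finset.mem_Icc.mp hj
          exact hpSO0 j (Finset.mem_Icc.mpr ⟨hj'.1, le_trans hj'.2 hiN⟩) t
            (fun hW' => ht (hWsubK i hi j hj'.1 hj'.2 hW'))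
        rw [Finset.sum_eq_zero hz, Finset.Icc_eq_empty (by omega), Finset.sum_empty, hβK1]
        ring
  have kkt1 : ∀ i ∈ Finset.Icc 1 N, ∀ k ∈ Finset.Icc 1 K, ∀ t ∈ 𝒯,
      0 ≤ qSO i k t ∧
      0 ≤ β k * c t + (∑ j ∈ Finset.Icc 1 i, pSO j t) + d i - ρSO i k ∧
      qSO i k t * (β k * c t + (∑ j ∈ Finset.Icc 1 i, pSO j t) + d i - ρSO i k) = 0 := by
    intro i hi k hk t ht
    have hi1 := (Finset.mem_Icc.mp hi).1
    have hk1 := (Finset.mem_Icc.mp hk).1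
    have hkK := (Finset.mem_Icc.mp hk).2
    have hq0 : 0 ≤ qSO i k t := by
      by_cases h : t ∈ W i k \ W i (k - 1)
      · rw [hqSO i hi k hk t h]; exact le_of_lt (hgap i hi)
      · rw [hqSO0 i hi k hk t h]
    obtain ⟨m, hm1, hmK1, hnot, hmem, _, hsum⟩ := hkey i hi t
    have hE : β k * c t + (∑ j ∈ Finset.Icc 1 i, pSO j t) + d i - ρSO i k
        = (∑ l ∈ Finset.Icc k K, (β l - β (l + 1)) * (c t - cbar i l))
          - ∑ l ∈ Finset.Icc m K, (β l - β (l + 1)) * (c t - cbar i l) := by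
      rw [hsum, hρSO i hi k hk]
      simp only [mul_sub, Finset.sum_sub_distrib, ← Finset.sum_mul,
        hβtel k hk1 (by omega), hβtel m hm1 hmK1]
      ring
    have hEnn : 0 ≤ β k * c t + (∑ j ∈ Finset.Icc 1 i, pSO j t) + d i - ρSO i k := by
      rw [hE]
      rcases le_or_gt k m with hkm | hmk
      · have hsplit : (∑ l ∈ Finset.Icc k K, (β l - β (l + 1)) * (c t - cbar i l))
            - ∑ l ∈ Finset.Icc m K, (β l - β (l + 1)) * (c t - cbar i l)
            = ∑ l ∈ Finset.Ico k m, (β l - β (l + 1)) * (c t - cbar i l) := by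
          rw [← Finset.Ico_add_one_right_eq_Icc, ← Finset.Ico_add_one_right_eq_Icc,
            ← Finset.sum_Ico_consecutive (fun l => (β l - β (l + 1)) * (c t - cbar i l))
              hkm (show m ≤ K + 1 from hmK1)]
          ring
        rw [hsplit]
        apply Finset.sum_nonneg
        intro l hl
        rw [Finset.mem_Ico] at hl
        have hl1 : 1 ≤ l := le_trans hk1 hl.1
        have hlK : l ≤ K := by omega
        have hw := hβstep l (Finset.mem_Icc.mpr ⟨hl1, hlK⟩)
        have hc := hcge i hi l (Finset.mem_Icc.mpr ⟨hl1, hlK⟩) t (hnot l hl1 hl.2)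
        exact mul_nonneg hw (by linarith)
      · have hsplit : (∑ l ∈ Finset.Icc k K, (β l - β (l + 1)) * (c t - cbar i l))
            - ∑ l ∈ Finset.Icc m K, (β l - β (l + 1)) * (c t - cbar i l)
            = -∑ l ∈ Finset.Ico m k, (β l - β (l + 1)) * (c t - cbar i l) := by
          rw [← Finset.Ico_add_one_right_eq_Icc, ← Finset.Ico_add_one_right_eq_Icc,
            ← Finset.sum_Ico_consecutive (fun l => (β l - β (l + 1)) * (c t - cbar i l))
              (le_of_lt hmk) (show k ≤ K + 1 by omega)]
          ring
        rw [hsplit, neg_nonneg]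
        apply Finset.sum_nonpos
        intro l hl
        rw [Finset.mem_Ico] at hl
        have hl1 : 1 ≤ l := le_trans hm1 hl.1
        have hlK : l ≤ K := by omega
        have hw := hβstep l (Finset.mem_Icc.mpr ⟨hl1, hlK⟩)
        obtain ⟨htWm, _⟩ := hmem (by omega)
        have hc := hcle i hi l (Finset.mem_Icc.mpr ⟨hl1, hlK⟩) t
          (hWsub i hi m l hm1 hl.1 hlK htWm)
        exact mul_nonpos_of_nonneg_of_nonpos hw (by linarith)
    refine ⟨hq0, hEnn, ?_⟩
    by_cases h : t ∈ W i k \ W i (k - 1)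
    · have hp := hpSO i hi k hk t h
      have hzero : β k * c t + (∑ j ∈ Finset.Icc 1 i, pSO j t) + d i - ρSO i k = 0 := by
        rw [hsumsplit i hi1 t, hp]; ring
      rw [hzero, mul_zero]
    · rw [hqSO0 i hi k hk t h, zero_mul]
  have hinner : ∀ j ∈ Finset.Icc 1 N, ∀ t : ℝ,
      ∑ k ∈ Finset.Icc 1 K, qSO j k t = if t ∈ W j K then μ j - μ (j + 1) else 0 := by
    intro j hj t
    obtain ⟨m, hm1, hmK1, hnot, hmem, hmK, _⟩ := hkey j hj t
    by_cases ht : t ∈ W j K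
    · rw [if_pos ht]
      have hmK' := hmK ht
      obtain ⟨htm, htm'⟩ := hmem hmK'
      refine (Finset.sum_eq_single_of_mem m (Finset.mem_Icc.mpr ⟨hm1, hmK'⟩) ?_).trans
        (hqSO j hj m (Finset.mem_Icc.mpr ⟨hm1, hmK'⟩) t ⟨htm, htm'⟩)
      intro b hb hbm
      have hb' := Finset.mem_Icc.mp hb
      apply hqSO0 j hj b hb t
      rcases lt_or_gt_of_ne hbm with h | h
      · exact fun hd => hnot b hb'.1 h hd.1
      · exact fun hd => hd.2 (hWsub j hj m (b - 1) hm1 (by omega) (by omega) htm)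
    · rw [if_neg ht]
      apply Finset.sum_eq_zero
      intro b hb
      have hb' := Finset.mem_Icc.mp hb
      exact hqSO0 j hj b hb t (fun hd => ht (hWsub j hj b K hb'.1 hb'.2 le_rfl hd.1))
  have hcapfull : ∀ i ∈ Finset.Icc 1 N, ∀ t : ℝ, t ∈ W i K →
      ∑ j ∈ Finset.Icc i N, ∑ k ∈ Finset.Icc 1 K, qSO j k t = μ i := by
    intro i hi t ht
    have hi' := Finset.mem_Icc.mp hi
    have hcong : ∀ j ∈ Finset.Icc i N, ∑ k ∈ Finset.Icc 1 K, qSO j k t = μ j - μ (j + 1) := by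
      intro j hj
      have hj' := Finset.mem_Icc.mp hj
      have hjm : j ∈ Finset.Icc 1 N := Finset.mem_Icc.mpr ⟨le_trans hi'.1 hj'.1, hj'.2⟩
      rw [hinner j hjm t, if_pos (hWsubK j hjm i hi'.1 hj'.1 ht)]
    rw [Finset.sum_congr rfl hcong, hμtel i (by omega)]
  have hcaple : ∀ i ∈ Finset.Icc 1 N, ∀ t : ℝ,
      ∑ j ∈ Finset.Icc i N, ∑ k ∈ Finset.Icc 1 K, qSO j k t ≤ μ i := by
    intro i hi t
    have hi' := Finset.mem_Icc.mp hi
    by_cases htN : t ∈ W N K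
    · have hex : ∃ j, i ≤ j ∧ j ≤ N ∧ t ∈ W j K := ⟨N, hi'.2, le_rfl, htN⟩
      obtain ⟨hj0i, hj0N, htj0⟩ := Nat.find_spec hex
      set j0 := Nat.find hex with hj0
      have hj01 : 1 ≤ j0 := le_trans hi'.1 hj0i
      have hrw : ∀ j ∈ Finset.Icc i N, ∑ k ∈ Finset.Icc 1 K, qSO j k t
          = if j0 ≤ j then μ j - μ (j + 1) else 0 := by
        intro j hj
        have hj' := Finset.mem_Icc.mp hj
        have hjm : j ∈ Finset.Icc 1 N := Finset.mem_Icc.mpr ⟨le_trans hi'.1 hj'.1, hj'.2⟩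
        rw [hinner j hjm t]
        by_cases h : j0 ≤ j
        · rw [if_pos (hWsubK j hjm j0 hj01 h htj0), if_pos h]
        · push_neg at h
          rw [if_neg (fun htj => (Nat.find_min hex (by omega)) ⟨hj'.1, hj'.2, htj⟩),
            if_neg (not_le.mpr h)]
      rw [Finset.sum_congr rfl hrw]
      have h1 : ∑ j ∈ Finset.Ico i j0, (if j0 ≤ j then μ j - μ (j + 1) else 0) = 0 :=
        Finset.sum_eq_zero (fun j hj => if_neg (by rw [Finset.mem_Ico] at hj; omega))
      have h2 : ∑ j ∈ Finset.Ico j0 (N + 1), (if j0 ≤ j then μ j - μ (j + 1) else 0)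
          = μ j0 := by
        rw [Finset.sum_congr rfl (fun j hj => if_pos (Finset.mem_Ico.mp hj).1),
          Finset.Ico_add_one_right_eq_Icc]
        exact hμtel j0 (by omega)
      rw [← Finset.Ico_add_one_right_eq_Icc,
        ← Finset.sum_Ico_consecutive _ (show i ≤ j0 from hj0i) (show j0 ≤ N + 1 by omega),
        h1, h2, zero_add]
      exact hμmono j0 hj0N i hi'.1 hj0i
    · have hz : ∀ j ∈ Finset.Icc i N, ∑ k ∈ Finset.Icc 1 K, qSO j k t = 0 := by
        intro j hj
        have hj' := Finset.mem_Icc.mp hj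
        have hjm : j ∈ Finset.Icc 1 N := Finset.mem_Icc.mpr ⟨le_trans hi'.1 hj'.1, hj'.2⟩
        rw [hinner j hjm t, if_neg]
        intro htj
        exact htN (hWsubK N (Finset.mem_Icc.mpr ⟨hN, le_rfl⟩) j
          (le_trans hi'.1 hj'.1) hj'.2 htj)
      rw [Finset.sum_eq_zero hz]
      exact le_of_lt (hμpos i hi)
  -- the price vanishes where the cost equals the boundary cost of the window
  have hpzero_b : ∀ i ∈ Finset.Icc 1 N, ∀ t : ℝ, t ∈ W i K → c t = cbar i K →
      pSO i t = 0 := by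
    intro i hi t ht hct
    have hi' := Finset.mem_Icc.mp hi
    have htm' : t ∉ W i (K - 1) := by
      rcases eq_or_lt_of_le hK with h | h
      · rw [show K - 1 = 0 by omega, hW0]; exact Set.notMem_empty t
      · intro hmem
        have hsub := hcle i hi (K - 1) (Finset.mem_Icc.mpr ⟨by omega, by omega⟩) t hmem
        obtain ⟨hl, hr⟩ := hknest i hi (K - 1) K (by omega) (by omega) le_rfl
        obtain ⟨_, htp1, _, e1p, _⟩ := hwinB i hi (K - 1) (Finset.mem_Icc.mpr ⟨by omega, by omega⟩)
        obtain ⟨_, htp2, _, e2p, _⟩ := hwinB i hi K hKmem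
        have hlt : cbar i (K - 1) < cbar i K := by
          rw [← e1p, ← e2p]
          exact hcinc (Set.mem_Ici.mpr (le_of_lt htp1)) (Set.mem_Ici.mpr (le_of_lt htp2)) hr
        linarith
    have hp := hpSO i hi K hKmem t ⟨ht, htm'⟩
    have hρ := hρSO i hi K hKmem
    rw [Finset.Icc_self, Finset.sum_singleton, hβK1] at hρ
    have hz : ∑ j ∈ Finset.Icc 1 (i - 1), pSO j t = 0 := by
      apply Finset.sum_eq_zero
      intro j hj
      have hj' := Finset.mem_Icc.mp hj
      apply hpSO0 j (Finset.mem_Icc.mpr ⟨hj'.1, by omega⟩) t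
      intro htj
      have h1 : c t ≤ cbar j K := hcle j (Finset.mem_Icc.mpr ⟨hj'.1, by omega⟩) K hKmem t htj
      have h2 : cbar j K < cbar i K := by
        obtain ⟨_, hpj, _, ejp, _⟩ := hwinB j (Finset.mem_Icc.mpr ⟨hj'.1, by omega⟩) K hKmem
        obtain ⟨_, hpi, _, eip, _⟩ := hwinB i hi K hKmem
        rw [← ejp, ← eip]
        exact hcinc (Set.mem_Ici.mpr (le_of_lt hpj)) (Set.mem_Ici.mpr (le_of_lt hpi))
          (hspat i hi j hj'.1 (by omega)).2
      linarith
    rw [hp, hρ, hz, hct]; ring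
  have hpnn : ∀ i ∈ Finset.Icc 1 N, ∀ t : ℝ, 0 ≤ pSO i t := by
    intro i hi t
    by_cases ht : t ∈ W i K
    · have htI := ht
      rw [hW i hi K hKmem, Set.mem_Icc] at htI
      obtain ⟨_, _, e1m, e1p, _⟩ := hwinB i hi K hKmem
      rcases eq_or_lt_of_le htI.1 with h1 | h1
      · exact le_of_eq (hpzero_b i hi t ht (by rw [← h1, e1m])).symm
      rcases eq_or_lt_of_le htI.2 with h2 | h2
      · exact le_of_eq (hpzero_b i hi t ht (by rw [h2, e1p])).symm
      · exact le_of_lt (hA1 i hi t ⟨h1, h2⟩)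
    · rw [hpSO0 i hi t ht]
  have kkt2 : ∀ i ∈ Finset.Icc 1 N, ∀ t ∈ 𝒯,
      0 ≤ pSO i t ∧
      0 ≤ μ i - ∑ j ∈ Finset.Icc i N, ∑ k ∈ Finset.Icc 1 K, qSO j k t ∧
      pSO i t * (μ i - ∑ j ∈ Finset.Icc i N, ∑ k ∈ Finset.Icc 1 K, qSO j k t) = 0 := by
    intro i hi t ht
    refine ⟨hpnn i hi t, ?_, ?_⟩
    · linarith [hcaple i hi t]
    · by_cases hw : t ∈ W i K
      · rw [hcapfull i hi t hw, sub_self, mul_zero]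
      · rw [hpSO0 i hi t hw, zero_mul]
  have kkt3 : ∀ i ∈ Finset.Icc 1 N, ∀ k ∈ Finset.Icc 1 K,
      ∫ t in 𝒯, qSO i k t = Q i k := by
    intro i hi k hk
    have hi' := Finset.mem_Icc.mp hi
    have hk' := Finset.mem_Icc.mp hk
    have hgapi := hgap i hi
    have hqeq : ∀ t, qSO i k t
        = (W i k \ W i (k - 1)).indicator (fun _ => μ i - μ (i + 1)) t := by
      intro t
      by_cases h : t ∈ W i k \ W i (k - 1)
      · rw [hqSO i hi k hk t h, Set.indicator_of_mem h]
      · rw [hqSO0 i hi k hk t h, Set.indicator_of_notMem h]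
    have hDsub : W i k \ W i (k - 1) ⊆ 𝒯 :=
      fun t htD => hWT i hi (hWsub i hi k K hk'.1 hk'.2 le_rfl htD.1)
    have hWk := hW i hi k hk
    rcases eq_or_lt_of_le hk'.1 with h1 | h1
    · -- k = 1
      subst h1
      have hD' : W i 1 \ W i 0 = Set.Icc (tm i 1) (tp i 1) := by
        rw [hW0, Set.diff_empty, hWk]
      have hmeas : MeasurableSet (W i 1 \ W i 0) := hD' ▸ measurableSet_Icc
      obtain ⟨_, _, _, _, hlen⟩ := hwinB i hi 1 hk
      rw [Finset.Icc_self, Finset.sum_singleton] at hlen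
      simp only [hqeq]
      rw [show (1 : ℕ) - 1 = 0 from rfl] at *
      rw [MeasureTheory.setIntegral_indicator hmeas,
        Set.inter_eq_self_of_subset_right hDsub, MeasureTheory.setIntegral_const, measureReal_def,
        hD', Real.volume_Icc, hlen,
        ENNReal.toReal_ofReal (le_of_lt (div_pos (hQ i hi 1 hk) hgapi)), smul_eq_mul]
      exact div_mul_cancel₀ _ (ne_of_gt hgapi)
    · -- 2 ≤ k
      have hk1K : k - 1 ∈ Finset.Icc 1 K := Finset.mem_Icc.mpr ⟨by omega, by omega⟩
      have hWk1 := hW i hi (k - 1) hk1K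
      have hsubW : W i (k - 1) ⊆ W i k := hWsub i hi (k - 1) k (by omega) (by omega) hk'.2
      have hmeasA : MeasurableSet (W i k) := hWk ▸ measurableSet_Icc
      have hmeasB : MeasurableSet (W i (k - 1)) := hWk1 ▸ measurableSet_Icc
      have hmeas : MeasurableSet (W i k \ W i (k - 1)) := hmeasA.diff hmeasB
      obtain ⟨_, _, _, _, hlenk⟩ := hwinB i hi k hk
      obtain ⟨_, _, _, _, hlenk1⟩ := hwinB i hi (k - 1) hk1K
      have hvol : volume (W i k \ W i (k - 1))
          = ENNReal.ofReal (Q i k / (μ i - μ (i + 1))) := by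
        rw [MeasureTheory.measure_diff hsubW hmeasB.nullMeasurableSet
          (by rw [hWk1, Real.volume_Icc]; exact ENNReal.ofReal_ne_top),
          hWk, hWk1, Real.volume_Icc, Real.volume_Icc,
          ← ENNReal.ofReal_sub _ (sub_nonneg.mpr (hwin i hi (k - 1) hk1K).1)]
        congr 1
        rw [hlenk, hlenk1, div_sub_div_same]
        congr 1
        have hsp : ∑ l ∈ Finset.Icc 1 k, Q i l
            = ∑ l ∈ Finset.Icc 1 (k - 1), Q i l + Q i k := by
          conv_lhs => rw [show k = k - 1 + 1 by omega]
          rw [Finset.sum_Icc_succ_top (by omega), show k - 1 + 1 = k by omega]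
        rw [hsp]; ring
      simp only [hqeq]
      rw [MeasureTheory.setIntegral_indicator hmeas,
        Set.inter_eq_self_of_subset_right hDsub, MeasureTheory.setIntegral_const, measureReal_def, hvol,
        ENNReal.toReal_ofReal (le_of_lt (div_pos (hQ i hi k hk) hgapi)), smul_eq_mul]
      exact div_mul_cancel₀ _ (ne_of_gt hgapi)
  exact ⟨kkt1, kkt2, kkt3⟩
end

section
/- Equilibrium under partial bottleneck pricing (Lemma 6 of the paper). Suppose c is differentiable on 𝒯, the QRP condition holds (μ_{i+1}/μ_i − 1 < c′(t) < μ_i/μ_{i+1} − 1 for every i ∈ {1,…,N−1}, t ∈ 𝒯), the explicit DSO solution (q^SO, p^SO, ρ^SO) satisfies Assumption 1, and the pricing bottleneck set is 𝒩^P = {i^P, i^P+1, …, N} for some i^P ∈ {1,…,N} (Assumption 2), with tolls p^SO_i imposed at each i ∈ 𝒩^P. Define w^PBP_i(t) = p^SO_i(t) for i ∉ 𝒩^P and w^PBP_i(t) = 0 for i ∈ 𝒩^P; σ^PBP_i(t) = t − Σ_{j≤i} w^PBP_j(t); q^PBP_{i,k}(t) = μ_i σ̇^PBP_i(t) − μ_{i+1}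 σ̇^PBP_{i+1}(t) for t ∈ 𝒯_{i,k}∖𝒯_{i,k−1}, 0 otherwise; ρ^PBP_{i,k} = ρ^SO_{i,k}. Then (q^PBP, w^PBP, ρ^PBP) satisfies the DUE-PBP equilibrium conditions: (i) for all i,k and a.e. t: q^PBP_{i,k}(t) ≥ 0, Σ_{j≤i} w^PBP_j(t) + β^k c(t) + Σ_{j∈𝒩^P, j≤i} p^SO_j(t) + d_i − ρ^PBP_{i,k} ≥ 0, and their product is 0; (ii) for all i ∉ 𝒩^P and a.e. t: w^PBP_i(t) ≥ 0, μ_i σ̇^PBP_i(t) − Σ_{j≥i} Σ_k q^PBP_{j,k}(t) ≥ 0, and their product is 0; (iii) ∫_𝒯 q^PBP_{i,k} = Q_{i,k}; (iv) 1 − Σ_{j≤i} ẇ^PBP_j(t) > 0 for all i and a.e. t. -/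
open MeasureTheory Finset Set


open MeasureTheory Set in
private lemma ftc_finset (s : Finset ℝ) : ∀ (f f' : ℝ → ℝ) (a b : ℝ), a ≤ b →
    ContinuousOn f (Set.Icc a b) →
    (∀ x ∈ Set.Ioo a b, x ∉ s → HasDerivAt f (f' x) x) →
    IntervalIntegrable f' volume a b →
    ∫ y in a..b, f' y = f b - f a := by
  induction s using Finset.strongInduction with
  | _ s ih =>
    intro f f' a b hab hcont hder hint
    by_cases hs : ∃ p ∈ s, p ∈ Set.Ioo a b
    · obtain ⟨p, hps, hpI⟩ := hs
      have hsub : s.erase p ⊂ s := Finset.erase_ssubset hps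
      have hap : a ≤ p := le_of_lt hpI.1
      have hpb : p ≤ b := le_of_lt hpI.2
      have h1 : ∫ y in a..p, f' y = f p - f a := by
        apply ih _ hsub f f' a p hap (hcont.mono (Set.Icc_subset_Icc le_rfl hpb))
        · intro x hx hxs
          refine hder x ⟨hx.1, lt_of_lt_of_le hx.2 hpb⟩ ?_
          intro hmem
          exact hxs (Finset.mem_erase.2 ⟨ne_of_lt hx.2, hmem⟩)
        · exact hint.mono_set
            (by rw [Set.uIcc_of_le hap, Set.uIcc_of_le hab]
                exact Set.Icc_subset_Icc le_rfl hpb)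
      have h2 : ∫ y in p..b, f' y = f b - f p := by
        apply ih _ hsub f f' p b hpb (hcont.mono (Set.Icc_subset_Icc hap le_rfl))
        · intro x hx hxs
          refine hder x ⟨lt_of_le_of_lt hap hx.1, hx.2⟩ ?_
          intro hmem
          exact hxs (Finset.mem_erase.2 ⟨(ne_of_gt hx.1), hmem⟩)
        · exact hint.mono_set
            (by rw [Set.uIcc_of_le hpb, Set.uIcc_of_le hab]
                exact Set.Icc_subset_Icc hap le_rfl)
      have := intervalIntegral.integral_add_adjacent_intervals
        (hint.mono_set (by rw [Set.uIcc_of_le hap, Set.uIcc_of_le hab]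
                           exact Set.Icc_subset_Icc le_rfl hpb))
        (hint.mono_set (by rw [Set.uIcc_of_le hpb, Set.uIcc_of_le hab]
                           exact Set.Icc_subset_Icc hap le_rfl))
      rw [← this, h1, h2]; ring
    · apply intervalIntegral.integral_eq_sub_of_hasDeriv_right_of_le hab hcont ?_ hint
      intro x hx
      exact (hder x hx (fun hxs => hs ⟨x, hxs, hx⟩)).hasDerivWithinAt

private lemma tele1 (g : ℕ → ℝ) (lo : ℕ) : ∀ n, lo ≤ n + 1 →
    ∑ j ∈ Finset.Icc lo n, (g j - g (j+1)) = g lo - g (n+1) := by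
  intro n
  induction n with
  | zero =>
    intro h
    interval_cases lo
    · simp
    · simp
  | succ n ihn =>
    intro h
    rcases Nat.lt_or_ge lo (n+2) with h' | h'
    · have hlo : lo ≤ n + 1 := by omega
      rw [Finset.sum_Icc_succ_top hlo, ihn hlo]; ring
    · have : lo = n + 2 := by omega
      subst this
      simp

private lemma tele2 (g : ℕ → ℝ) : ∀ m, ∑ j ∈ Finset.Icc 1 m, (g j - g (j-1)) = g m - g 0 := by
  intro m
  induction m with
  | zero => simp
  | succ m ihm =>
    rw [Finset.sum_Icc_succ_top (by omega), ihm]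
    have h1 : m + 1 - 1 = m := rfl
    rw [h1]; ring

set_option maxHeartbeats 4000000 in
/-- Lemma 6 of the paper: equilibrium under partial bottleneck pricing (PBP) with
pricing bottleneck set 𝒩^P = {i^P, …, N} (Assumption 2). -/
theorem pbp_equilibrium
    (N K : ℕ) (hN : 1 ≤ N) (hK : 1 ≤ K)
    (𝒯 : Set ℝ)
    -- base schedule delay cost function
    (c : ℝ → ℝ) (hc0 : c 0 = 0) (hccont : Continuous c)
    (hcdec : StrictAntiOn c (Set.Iic (0 : ℝ)))
    (hcinc : StrictMonoOn c (Set.Ici (0 : ℝ)))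
    -- heterogeneity parameters 1 = β¹ > … > β^K > 0, β^(K+1) = 0
    (β : ℕ → ℝ) (hβ1 : β 1 = 1)
    (hβdec : ∀ k, 1 ≤ k → k < K → β (k + 1) < β k)
    (hβpos : ∀ k ∈ Finset.Icc 1 K, 0 < β k) (hβK1 : β (K + 1) = 0)
    -- capacities μ₁ > … > μ_N > 0, μ_(N+1) = 0
    (μ : ℕ → ℝ) (hμdec : ∀ i, 1 ≤ i → i < N → μ (i + 1) < μ i)
    (hμpos : ∀ i ∈ Finset.Icc 1 N, 0 < μ i) (hμtop : μ (N + 1) = 0)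
    -- free-flow travel times 0 ≤ d₁ < … < d_N
    (d : ℕ → ℝ) (hd1 : 0 ≤ d 1)
    (hdinc : ∀ i, 1 ≤ i → i < N → d i < d (i + 1))
    -- demands
    (Q : ℕ → ℕ → ℝ) (hQ : ∀ i ∈ Finset.Icc 1 N, ∀ k ∈ Finset.Icc 1 K, 0 < Q i k)
    -- group arrival windows 𝒯_(i,k) = Γ(T_(i,k)) = [t⁻_(i,k), t⁺_(i,k)] of length
    -- T_(i,k) = (Σ_(l≤k) Q_(i,l))/(μ_i − μ_(i+1)) with equal endpoint costs c̄(T_(i,k))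
    (tm tp : ℕ → ℕ → ℝ) (cbar : ℕ → ℕ → ℝ)
    (hwin : ∀ i ∈ Finset.Icc 1 N, ∀ k ∈ Finset.Icc 1 K,
      tm i k ≤ tp i k ∧
      tp i k - tm i k = (∑ l ∈ Finset.Icc 1 k, Q i l) / (μ i - μ (i + 1)) ∧
      c (tm i k) = cbar i k ∧ c (tp i k) = cbar i k)
    (W : ℕ → ℕ → Set ℝ) (hW0 : ∀ i, W i 0 = ∅)
    (hW : ∀ i ∈ Finset.Icc 1 N, ∀ k ∈ Finset.Icc 1 K, W i k = Set.Icc (tm i k) (tp i k))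
    (hWT : ∀ i ∈ Finset.Icc 1 N, W i K ⊆ 𝒯)
    -- the explicit DSO equilibrium costs ρ^SO
    (ρSO : ℕ → ℕ → ℝ)
    (hρSO : ∀ i ∈ Finset.Icc 1 N, ∀ k ∈ Finset.Icc 1 K,
      ρSO i k = (∑ l ∈ Finset.Icc k K, (β l - β (l + 1)) * cbar i l) + d i)
    -- the explicit DSO flows q^SO (all-or-nothing at rate μ_i − μ_(i+1))
    (qSO : ℕ → ℕ → ℝ → ℝ)
    (hqSO : ∀ i ∈ Finset.Icc 1 N, ∀ k ∈ Finset.Icc 1 K, ∀ t ∈ W i k \ W i (k - 1),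
      qSO i k t = μ i - μ (i + 1))
    (hqSO0 : ∀ i ∈ Finset.Icc 1 N, ∀ k ∈ Finset.Icc 1 K, ∀ t,
      t ∉ W i k \ W i (k - 1) → qSO i k t = 0)
    -- the explicit DSO prices p^SO, defined recursively on the group windows
    (pSO : ℕ → ℝ → ℝ)
    (hpSO : ∀ i ∈ Finset.Icc 1 N, ∀ k ∈ Finset.Icc 1 K, ∀ t ∈ W i k \ W i (k - 1),
      pSO i t = ρSO i k - β k * c t - d i - ∑ j ∈ Finset.Icc 1 (i - 1), pSO j t)
    (hpSO0 : ∀ i ∈ Finset.Icc 1 N, ∀ t ∉ W i K, pSO i t = 0)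
    -- Assumption 1 for the explicit DSO solution: p^SO_i(t) > 0 exactly on the
    -- interior of the interval 𝒯_(i,K)
    (hA1 : ∀ i ∈ Finset.Icc 1 N, ∀ t ∈ 𝒯,
      (0 < pSO i t ↔ t ∈ Set.Ioo (tm i K) (tp i K)))
    -- QRP condition: c is differentiable on 𝒯 and
    -- μ_(i+1)/μ_i − 1 < c′(t) < μ_i/μ_(i+1) − 1
    (hdiff : ∀ t ∈ 𝒯, DifferentiableAt ℝ c t)
    (hQRP : ∀ i, 1 ≤ i → i < N → ∀ t ∈ 𝒯,
      μ (i + 1) / μ i - 1 < deriv c t ∧ deriv c t < μ i / μ (i + 1) - 1)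
    -- Assumption 2: the pricing bottleneck set is 𝒩^P = Finset.Icc iP N
    (iP : ℕ) (hiP : iP ∈ Finset.Icc 1 N)
    -- PBP queueing delays: zero at priced bottlenecks, p^SO elsewhere
    (wP : ℕ → ℝ → ℝ)
    (hwP1 : ∀ i ∈ Finset.Icc 1 N, i ∈ Finset.Icc iP N → ∀ t, wP i t = 0)
    (hwP2 : ∀ i ∈ Finset.Icc 1 N, i ∉ Finset.Icc iP N → ∀ t, wP i t = pSO i t)
    -- PBP equilibrium costs and flows
    (ρP : ℕ → ℕ → ℝ) (hρP : ∀ i k, ρP i k = ρSO i k)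
    (qP : ℕ → ℕ → ℝ → ℝ)
    (hqP : ∀ i ∈ Finset.Icc 1 N, ∀ k ∈ Finset.Icc 1 K, ∀ t ∈ W i k \ W i (k - 1),
      qP i k t =
        μ i * deriv (fun s => s - ∑ j ∈ Finset.Icc 1 i, wP j s) t -
        μ (i + 1) * deriv (fun s => s - ∑ j ∈ Finset.Icc 1 (i + 1), wP j s) t)
    (hqP0 : ∀ i ∈ Finset.Icc 1 N, ∀ k ∈ Finset.Icc 1 K, ∀ t,
      t ∉ W i k \ W i (k - 1) → qP i k t = 0) :
    -- (i) departure-time choice complementarity with tolls at priced bottlenecks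
    (∀ i ∈ Finset.Icc 1 N, ∀ k ∈ Finset.Icc 1 K,
      ∀ᵐ t ∂(MeasureTheory.volume.restrict 𝒯),
        0 ≤ qP i k t ∧
        0 ≤ (∑ j ∈ Finset.Icc 1 i, wP j t) + β k * c t +
            (∑ j ∈ Finset.Icc iP i, pSO j t) + d i - ρP i k ∧
        qP i k t * ((∑ j ∈ Finset.Icc 1 i, wP j t) + β k * c t +
            (∑ j ∈ Finset.Icc iP i, pSO j t) + d i - ρP i k) = 0) ∧
    -- (ii) queueing complementarity at the unpriced bottlenecks
    (∀ i ∈ Finset.Icc 1 N, i ∉ Finset.Icc iP N →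
      ∀ᵐ t ∂(MeasureTheory.volume.restrict 𝒯),
        0 ≤ wP i t ∧
        0 ≤ μ i * deriv (fun s => s - ∑ j ∈ Finset.Icc 1 i, wP j s) t -
            ∑ j ∈ Finset.Icc i N, ∑ k ∈ Finset.Icc 1 K, qP j k t ∧
        wP i t * (μ i * deriv (fun s => s - ∑ j ∈ Finset.Icc 1 i, wP j s) t -
            ∑ j ∈ Finset.Icc i N, ∑ k ∈ Finset.Icc 1 K, qP j k t) = 0) ∧
    -- (iii) demand conservation
    (∀ i ∈ Finset.Icc 1 N, ∀ k ∈ Finset.Icc 1 K, ∫ t in 𝒯, qP i k t = Q i k) ∧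
    -- (iv) consistency
    (∀ i ∈ Finset.Icc 1 N, ∀ᵐ t ∂(MeasureTheory.volume.restrict 𝒯),
        0 < 1 - ∑ j ∈ Finset.Icc 1 i, deriv (wP j) t) := by

  classical
  -- ===================== basic numeric facts =====================
  have hβposK : ∀ k, 1 ≤ k → k ≤ K → 0 < β k := fun k h1 h2 => hβpos k (Finset.mem_Icc.2 ⟨h1, h2⟩)
  have hβanti : ∀ k l, 1 ≤ k → k ≤ l → l ≤ K → β l ≤ β k := by
    intro k l hk hkl
    induction l, hkl using Nat.le_induction with
    | base => intro _; exact le_rfl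
    | succ n hn ih =>
      intro hnK
      exact le_trans (le_of_lt (hβdec n (by omega) (by omega))) (ih (by omega))
  have hβle1 : ∀ k, 1 ≤ k → k ≤ K → β k ≤ 1 := by
    intro k h1 h2; rw [← hβ1]; exact hβanti 1 k le_rfl h1 h2
  have hβstep : ∀ k, 1 ≤ k → k ≤ K → 0 ≤ β k - β (k+1) := by
    intro k h1 h2
    rcases eq_or_lt_of_le h2 with h | h
    · subst h; rw [hβK1]; linarith [hβposK k h1 le_rfl]
    · linarith [hβdec k h1 h]
  have hμposN : ∀ i, 1 ≤ i → i ≤ N → 0 < μ i := fun i h1 h2 => hμpos i (Finset.mem_Icc.2 ⟨h1, h2⟩)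
  have hΔpos : ∀ i, 1 ≤ i → i ≤ N → 0 < μ i - μ (i+1) := by
    intro i h1 h2
    rcases eq_or_lt_of_le h2 with h | h
    · subst h; rw [hμtop]; linarith [hμposN i h1 le_rfl]
    · linarith [hμdec i h1 h]
  have hμanti : ∀ i j, 1 ≤ i → i ≤ j → j ≤ N → μ j ≤ μ i := by
    intro i j hi hij
    induction j, hij using Nat.le_induction with
    | base => intro _; exact le_rfl
    | succ n hn ih =>
      intro hnN
      exact le_trans (le_of_lt (hμdec n (by omega) (by omega))) (ih (by omega))
  have hβtel : ∀ k, 1 ≤ k → k ≤ K → ∑ l ∈ Finset.Icc k K, (β l - β (l+1)) = β k := by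
    intro k h1 h2
    rw [tele1 β k K (by omega), hβK1, sub_zero]
  -- wrappers
  have hQX : ∀ i k, 1 ≤ i → i ≤ N → 1 ≤ k → k ≤ K → 0 < Q i k := fun i k a b e f =>
    hQ i (Finset.mem_Icc.2 ⟨a, b⟩) k (Finset.mem_Icc.2 ⟨e, f⟩)
  have hwinX : ∀ i k, 1 ≤ i → i ≤ N → 1 ≤ k → k ≤ K →
      (tm i k ≤ tp i k ∧
       tp i k - tm i k = (∑ l ∈ Finset.Icc 1 k, Q i l) / (μ i - μ (i + 1)) ∧
       c (tm i k) = cbar i k ∧ c (tp i k) = cbar i k) := fun i k a b e f =>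
    hwin i (Finset.mem_Icc.2 ⟨a, b⟩) k (Finset.mem_Icc.2 ⟨e, f⟩)
  have hWX : ∀ i k, 1 ≤ i → i ≤ N → 1 ≤ k → k ≤ K → W i k = Set.Icc (tm i k) (tp i k) :=
    fun i k a b e f => hW i (Finset.mem_Icc.2 ⟨a, b⟩) k (Finset.mem_Icc.2 ⟨e, f⟩)
  have hWTX : ∀ i, 1 ≤ i → i ≤ N → W i K ⊆ 𝒯 := fun i a b => hWT i (Finset.mem_Icc.2 ⟨a, b⟩)
  have hρX : ∀ i k, 1 ≤ i → i ≤ N → 1 ≤ k → k ≤ K →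
      ρSO i k = (∑ l ∈ Finset.Icc k K, (β l - β (l + 1)) * cbar i l) + d i := fun i k a b e f =>
    hρSO i (Finset.mem_Icc.2 ⟨a, b⟩) k (Finset.mem_Icc.2 ⟨e, f⟩)
  have hpX : ∀ i k, 1 ≤ i → i ≤ N → 1 ≤ k → k ≤ K → ∀ t ∈ W i k \ W i (k - 1),
      pSO i t = ρSO i k - β k * c t - d i - ∑ j ∈ Finset.Icc 1 (i - 1), pSO j t := fun i k a b e f =>
    hpSO i (Finset.mem_Icc.2 ⟨a, b⟩) k (Finset.mem_Icc.2 ⟨e, f⟩)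
  have hp0X : ∀ i, 1 ≤ i → i ≤ N → ∀ t, t ∉ W i K → pSO i t = 0 := fun i a b =>
    hpSO0 i (Finset.mem_Icc.2 ⟨a, b⟩)
  have hA1X : ∀ i, 1 ≤ i → i ≤ N → ∀ t ∈ 𝒯, (0 < pSO i t ↔ t ∈ Set.Ioo (tm i K) (tp i K)) :=
    fun i a b => hA1 i (Finset.mem_Icc.2 ⟨a, b⟩)
  have hqPX : ∀ i k, 1 ≤ i → i ≤ N → 1 ≤ k → k ≤ K → ∀ t ∈ W i k \ W i (k - 1),
      qP i k t =
        μ i * deriv (fun s => s - ∑ j ∈ Finset.Icc 1 i, wP j s) t -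
        μ (i + 1) * deriv (fun s => s - ∑ j ∈ Finset.Icc 1 (i + 1), wP j s) t := fun i k a b e f =>
    hqP i (Finset.mem_Icc.2 ⟨a, b⟩) k (Finset.mem_Icc.2 ⟨e, f⟩)
  have hqP0X : ∀ i k, 1 ≤ i → i ≤ N → 1 ≤ k → k ≤ K → ∀ t,
      t ∉ W i k \ W i (k - 1) → qP i k t = 0 := fun i k a b e f =>
    hqP0 i (Finset.mem_Icc.2 ⟨a, b⟩) k (Finset.mem_Icc.2 ⟨e, f⟩)
  obtain ⟨hiP1, hiPN⟩ := Finset.mem_Icc.1 hiP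
  -- ===================== window geometry =====================
  have hlen : ∀ i k, 1 ≤ i → i ≤ N → 1 ≤ k → k ≤ K → 0 < tp i k - tm i k := by
    intro i k a b e f
    rw [(hwinX i k a b e f).2.1]
    apply div_pos _ (hΔpos i a b)
    apply Finset.sum_pos _ ⟨1, Finset.mem_Icc.2 ⟨le_rfl, e⟩⟩
    intro l hl
    obtain ⟨hl1, hl2⟩ := Finset.mem_Icc.1 hl
    exact hQX i l a b hl1 (le_trans hl2 f)
  have htm : ∀ i k, 1 ≤ i → i ≤ N → 1 ≤ k → k ≤ K → tm i k < 0 := by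
    intro i k a b e f
    by_contra hcon
    push_neg at hcon
    have h1 := hlen i k a b e f
    have h2 := (hwinX i k a b e f).2.2
    have := hcinc (Set.mem_Ici.2 hcon) (Set.mem_Ici.2 (by linarith : (0:ℝ) ≤ tp i k)) (by linarith)
    rw [h2.1, h2.2] at this
    exact lt_irrefl _ this
  have htp : ∀ i k, 1 ≤ i → i ≤ N → 1 ≤ k → k ≤ K → 0 < tp i k := by
    intro i k a b e f
    by_contra hcon
    push_neg at hcon
    have h1 := hlen i k a b e f
    have h2 := (hwinX i k a b e f).2.2
    have := hcdec (Set.mem_Iic.2 (by linarith : tm i k ≤ 0)) (Set.mem_Iic.2 hcon) (by linarith)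
    rw [h2.1, h2.2] at this
    exact lt_irrefl _ this
  have hcge : ∀ t : ℝ, 0 ≤ c t := by
    intro t
    rcases lt_trichotomy t 0 with h | h | h
    · have := hcdec (Set.mem_Iic.2 (le_of_lt h)) (Set.mem_Iic.2 le_rfl) h
      rw [hc0] at this; linarith
    · subst h; rw [hc0]
    · have := hcinc (Set.mem_Ici.2 le_rfl) (Set.mem_Ici.2 (le_of_lt h)) h
      rw [hc0] at this; linarith
  have hcbarpos : ∀ i k, 1 ≤ i → i ≤ N → 1 ≤ k → k ≤ K → 0 < cbar i k := by
    intro i k a b e f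
    have h2 := (hwinX i k a b e f).2.2
    have := hcinc (Set.mem_Ici.2 le_rfl) (Set.mem_Ici.2 (le_of_lt (htp i k a b e f))) (htp i k a b e f)
    rw [hc0, h2.2] at this
    exact this
  have hsub : ∀ i k, 1 ≤ i → i ≤ N → 1 ≤ k → k ≤ K → ∀ t : ℝ,
      (t ∈ Set.Icc (tm i k) (tp i k) ↔ c t ≤ cbar i k) := by
    intro i k a b e f t
    have hw := (hwinX i k a b e f).2.2
    have h0m := htm i k a b e f
    have h0p := htp i k a b e f
    constructor
    · rintro ⟨h1, h2⟩
      rcases le_or_gt t 0 with h | h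
      · rcases eq_or_lt_of_le h1 with h3 | h3
        · rw [← h3, hw.1]
        · have := hcdec (Set.mem_Iic.2 (le_of_lt h0m)) (Set.mem_Iic.2 h) h3
          rw [hw.1] at this; linarith
      · rcases eq_or_lt_of_le h2 with h3 | h3
        · rw [h3, hw.2]
        · have := hcinc (Set.mem_Ici.2 (le_of_lt h)) (Set.mem_Ici.2 (le_of_lt h0p)) h3
          rw [hw.2] at this; linarith
    · intro h1
      constructor
      · by_contra hcon
        push_neg at hcon
        have := hcdec (Set.mem_Iic.2 (by linarith : t ≤ 0)) (Set.mem_Iic.2 (le_of_lt h0m)) hcon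
        rw [hw.1] at this; linarith
      · by_contra hcon
        push_neg at hcon
        have := hcinc (Set.mem_Ici.2 (le_of_lt h0p)) (Set.mem_Ici.2 (by linarith : 0 ≤ t)) hcon
        rw [hw.2] at this; linarith
  have hsubo : ∀ i k, 1 ≤ i → i ≤ N → 1 ≤ k → k ≤ K → ∀ t : ℝ,
      (t ∈ Set.Ioo (tm i k) (tp i k) ↔ c t < cbar i k) := by
    intro i k a b e f t
    have hw := (hwinX i k a b e f).2.2
    have h0m := htm i k a b e f
    have h0p := htp i k a b e f
    constructor
    · rintro ⟨h1, h2⟩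
      rcases le_or_gt t 0 with h | h
      · have := hcdec (Set.mem_Iic.2 (le_of_lt h0m)) (Set.mem_Iic.2 h) h1
        rw [hw.1] at this; linarith
      · have := hcinc (Set.mem_Ici.2 (le_of_lt h)) (Set.mem_Ici.2 (le_of_lt h0p)) h2
        rw [hw.2] at this; linarith
    · intro h1
      constructor
      · by_contra hcon
        push_neg at hcon
        rcases eq_or_lt_of_le hcon with h3 | h3
        · rw [h3, hw.1] at h1; linarith
        · have := hcdec (Set.mem_Iic.2 (by linarith : t ≤ 0)) (Set.mem_Iic.2 (le_of_lt h0m)) h3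
          rw [hw.1] at this; linarith
      · by_contra hcon
        push_neg at hcon
        rcases eq_or_lt_of_le hcon with h3 | h3
        · rw [← h3, hw.2] at h1; linarith
        · have := hcinc (Set.mem_Ici.2 (le_of_lt h0p)) (Set.mem_Ici.2 (by linarith : 0 ≤ t)) h3
          rw [hw.2] at this; linarith
  have hbdry : ∀ i k, 1 ≤ i → i ≤ N → 1 ≤ k → k ≤ K → ∀ t : ℝ,
      c t = cbar i k → t = tm i k ∨ t = tp i k := by
    intro i k a b e f t h1
    have h2 : t ∈ Set.Icc (tm i k) (tp i k) := (hsub i k a b e f t).2 (le_of_eq h1)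
    have h3 : t ∉ Set.Ioo (tm i k) (tp i k) := by
      intro hcon
      rw [hsubo i k a b e f t] at hcon
      linarith
    rw [Set.mem_Ioo] at h3
    push_neg at h3
    rcases eq_or_lt_of_le h2.1 with h4 | h4
    · exact Or.inl h4.symm
    · exact Or.inr (le_antisymm h2.2 (h3 h4))
  have hcbarstep : ∀ i k, 1 ≤ i → i ≤ N → 1 ≤ k → k < K → cbar i k < cbar i (k+1) := by
    intro i k a b e f
    by_contra hcon
    push_neg at hcon
    have hm : tm i k ≤ tm i (k+1) := by
      have : tm i (k+1) ∈ Set.Icc (tm i k) (tp i k) := by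
        rw [hsub i k a b e (le_of_lt f)]
        rw [(hwinX i (k+1) a b (by omega) (by omega)).2.2.1]
        exact hcon
      exact this.1
    have hp : tp i (k+1) ≤ tp i k := by
      have : tp i (k+1) ∈ Set.Icc (tm i k) (tp i k) := by
        rw [hsub i k a b e (le_of_lt f)]
        rw [(hwinX i (k+1) a b (by omega) (by omega)).2.2.2]
        exact hcon
      exact this.2
    have l1 := (hwinX i k a b e (le_of_lt f)).2.1
    have l2 := (hwinX i (k+1) a b (by omega) (by omega)).2.1
    have hsum : ∑ l ∈ Finset.Icc 1 (k+1), Q i l = (∑ l ∈ Finset.Icc 1 k, Q i l) + Q i (k+1) :=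
      Finset.sum_Icc_succ_top (by omega) _
    have hq := hQX i (k+1) a b (by omega) (by omega)
    have hd := hΔpos i a b
    have : tp i (k+1) - tm i (k+1) = (tp i k - tm i k) + Q i (k+1) / (μ i - μ (i+1)) := by
      rw [l1, l2, hsum, add_div]
    have hqd : 0 < Q i (k+1) / (μ i - μ (i+1)) := div_pos hq hd
    linarith
  have hcbarmono : ∀ i, 1 ≤ i → i ≤ N → ∀ k l, 1 ≤ k → k ≤ l → l ≤ K → cbar i k ≤ cbar i l := by
    intro i a b k l hk hkl
    induction l, hkl using Nat.le_induction with
    | base => intro _; exact le_rfl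
    | succ n hn ih =>
      intro hnK
      exact le_trans (ih (by omega)) (le_of_lt (hcbarstep i n a b (by omega) (by omega)))

  -- ===================== ring lemmas =====================
  have hringc : ∀ i k, 1 ≤ i → i ≤ N → 1 ≤ k → k ≤ K → ∀ t : ℝ,
      (t ∈ W i k \ W i (k - 1) ↔ (c t ≤ cbar i k ∧ (k = 1 ∨ cbar i (k-1) < c t))) := by
    intro i k a b e f t
    rcases eq_or_lt_of_le e with h | h
    · have hk0 : k - 1 = 0 := by omega
      rw [hk0, hW0 i, hWX i k a b e f]
      simp only [Set.mem_diff, Set.mem_empty_iff_false, not_false_iff, and_true]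
      rw [hsub i k a b e f t]
      constructor
      · intro h1; exact ⟨h1, Or.inl h.symm⟩
      · intro h1; exact h1.1
    · have hk1 : 1 ≤ k - 1 := by omega
      have hk2 : k - 1 ≤ K := by omega
      rw [hWX i k a b e f, hWX i (k-1) a b hk1 hk2]
      simp only [Set.mem_diff]
      rw [hsub i k a b e f t, hsub i (k-1) a b hk1 hk2 t]
      constructor
      · intro ⟨h1, h2⟩; exact ⟨h1, Or.inr (by push_neg at h2; exact h2)⟩
      · intro ⟨h1, h2⟩
        rcases h2 with h2 | h2
        · omega
        · exact ⟨h1, by push_neg; exact h2⟩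
  have hringex : ∀ i, 1 ≤ i → i ≤ N → ∀ t : ℝ, c t ≤ cbar i K →
      ∃ k, 1 ≤ k ∧ k ≤ K ∧ t ∈ W i k \ W i (k - 1) := by
    intro i a b t hct
    set Ks := (Finset.Icc 1 K).filter (fun k => c t ≤ cbar i k) with hKs
    have hne : Ks.Nonempty := ⟨K, by simp [hKs, Finset.mem_filter, Finset.mem_Icc]; exact ⟨hK, hct⟩⟩
    set k0 := Ks.min' hne with hk0
    have hk0mem : k0 ∈ Ks := Finset.min'_mem Ks hne
    simp only [hKs, Finset.mem_filter, Finset.mem_Icc] at hk0mem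
    obtain ⟨⟨hk01, hk02⟩, hk03⟩ := hk0mem
    refine ⟨k0, hk01, hk02, ?_⟩
    rw [hringc i k0 a b hk01 hk02 t]
    refine ⟨hk03, ?_⟩
    rcases eq_or_lt_of_le hk01 with h | h
    · exact Or.inl h.symm
    · refine Or.inr ?_
      by_contra hcon
      push_neg at hcon
      have : k0 - 1 ∈ Ks := by
        simp only [hKs, Finset.mem_filter, Finset.mem_Icc]
        exact ⟨⟨by omega, by omega⟩, hcon⟩
      have := Finset.min'_le Ks _ this
      omega
  have hringdj : ∀ i k k', 1 ≤ i → i ≤ N → 1 ≤ k → k ≤ K → 1 ≤ k' → k' ≤ K → ∀ t : ℝ,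
      t ∈ W i k \ W i (k - 1) → t ∈ W i k' \ W i (k' - 1) → k = k' := by
    intro i k k' a b e f e' f' t h1 h2
    rw [hringc i k a b e f t] at h1
    rw [hringc i k' a b e' f' t] at h2
    by_contra hcon
    rcases Nat.lt_or_ge k k' with h | h
    · rcases h2.2 with h3 | h3
      · omega
      · have := hcbarmono i a b k (k'-1) e (by omega) (by omega)
        linarith [h1.1]
    · have h' : k' < k := by omega
      rcases h1.2 with h3 | h3
      · omega
      · have := hcbarmono i a b k' (k-1) e' (by omega) (by omega)
        linarith [h2.1]
  -- ===================== price-sum telescoping =====================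
  have hSsplit : ∀ m, 1 ≤ m → ∀ t : ℝ,
      ∑ j ∈ Finset.Icc 1 m, pSO j t = (∑ j ∈ Finset.Icc 1 (m-1), pSO j t) + pSO m t := by
    intro m hm t
    have h1 : Finset.Icc 1 m = insert m (Finset.Icc 1 (m-1)) := by
      ext j; simp only [Finset.mem_Icc, Finset.mem_insert]; omega
    rw [h1, Finset.sum_insert (by simp only [Finset.mem_Icc]; omega)]
    ring
  have hStele : ∀ i k, 1 ≤ i → i ≤ N → 1 ≤ k → k ≤ K → ∀ t ∈ W i k \ W i (k - 1),
      ∑ j ∈ Finset.Icc 1 i, pSO j t = ρSO i k - β k * c t - d i := by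
    intro i k a b e f t ht
    rw [hSsplit i a t, hpX i k a b e f t ht]
    ring
  have hSform : ∀ i k, 1 ≤ i → i ≤ N → 1 ≤ k → k ≤ K → ∀ t ∈ W i k \ W i (k - 1),
      ∑ j ∈ Finset.Icc 1 i, pSO j t
        = ∑ l ∈ Finset.Icc k K, (β l - β (l+1)) * (cbar i l - c t) := by
    intro i k a b e f t ht
    rw [hStele i k a b e f t ht, hρX i k a b e f]
    simp only [mul_sub]
    rw [Finset.sum_sub_distrib, ← Finset.sum_mul, hβtel k e f]
    ring
  -- ===================== nesting across bottlenecks =====================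
  have hNest1 : ∀ i, 1 ≤ i → i < N → cbar i K ≤ cbar (i+1) K := by
    intro i hi1 hiN
    by_contra hcon
    push_neg at hcon
    -- pick a point t in the outermost ring of bottleneck i+1, close to the right endpoint
    obtain ⟨t, ht0, ht2, ht3⟩ : ∃ t : ℝ, 0 < t ∧ t < tp (i+1) K ∧ (K = 1 ∨ cbar (i+1) (K-1) < c t) := by
      rcases eq_or_lt_of_le hK with h | h
      · refine ⟨tp (i+1) 1 / 2, ?_, ?_, Or.inl h.symm⟩
        · linarith [htp (i+1) 1 (by omega) (by omega) le_rfl hK]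
        · rw [← h]; linarith [htp (i+1) 1 (by omega) (by omega) le_rfl hK]
      · have hKm1 : 1 ≤ K - 1 := by omega
        have hKm2 : K - 1 ≤ K := by omega
        have hlt : tp (i+1) (K-1) < tp (i+1) K := by
          have hc1 : cbar (i+1) (K-1) < cbar (i+1) K := by
            have := hcbarstep (i+1) (K-1) (by omega) (by omega) hKm1 (by omega)
            have hKK : K - 1 + 1 = K := by omega
            rwa [hKK] at this
          have : tp (i+1) (K-1) ∈ Set.Ioo (tm (i+1) K) (tp (i+1) K) := by
            rw [hsubo (i+1) K (by omega) (by omega) hK le_rfl]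
            rw [(hwinX (i+1) (K-1) (by omega) (by omega) hKm1 hKm2).2.2.2]
            exact hc1
          exact this.2
        refine ⟨(tp (i+1) (K-1) + tp (i+1) K) / 2, ?_, ?_, Or.inr ?_⟩
        · linarith [htp (i+1) (K-1) (by omega) (by omega) hKm1 hKm2]
        · linarith
        · have hp1 := htp (i+1) (K-1) (by omega) (by omega) hKm1 hKm2
          have := hcinc (Set.mem_Ici.2 (le_of_lt hp1))
            (Set.mem_Ici.2 (by linarith : (0:ℝ) ≤ (tp (i+1) (K-1) + tp (i+1) K) / 2)) (by linarith)
          rw [(hwinX (i+1) (K-1) (by omega) (by omega) hKm1 hKm2).2.2.2] at this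
          exact this
    have hct : c t < cbar (i+1) K := by
      have := hcinc (Set.mem_Ici.2 (le_of_lt ht0))
        (Set.mem_Ici.2 (le_of_lt (htp (i+1) K (by omega) (by omega) hK le_rfl))) ht2
      rwa [(hwinX (i+1) K (by omega) (by omega) hK le_rfl).2.2.2] at this
    have hringt : t ∈ W (i+1) K \ W (i+1) (K-1) := by
      rw [hringc (i+1) K (by omega) (by omega) hK le_rfl t]
      exact ⟨le_of_lt hct, ht3⟩
    have htT : t ∈ 𝒯 := hWTX (i+1) (by omega) (by omega) hringt.1
    have htIoo : t ∈ Set.Ioo (tm (i+1) K) (tp (i+1) K) :=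
      (hsubo (i+1) K (by omega) (by omega) hK le_rfl t).2 hct
    have hpos : 0 < pSO (i+1) t := (hA1X (i+1) (by omega) (by omega) t htT).2 htIoo
    -- compute the two partial sums
    have hS1 : ∑ j ∈ Finset.Icc 1 (i+1), pSO j t = β K * (cbar (i+1) K - c t) := by
      rw [hSform (i+1) K (by omega) (by omega) hK le_rfl t hringt]
      rw [Finset.Icc_self, Finset.sum_singleton, hβK1]
      ring
    obtain ⟨k', hk'1, hk'2, hk'ring⟩ :=
      hringex i hi1 (by omega) t (le_of_lt (lt_trans hct hcon))
    have hS2 : ∑ j ∈ Finset.Icc 1 i, pSO j t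
        = ∑ l ∈ Finset.Icc k' K, (β l - β (l+1)) * (cbar i l - c t) :=
      hSform i k' hi1 (by omega) hk'1 hk'2 t hk'ring
    have hctk' : c t ≤ cbar i k' := ((hringc i k' hi1 (by omega) hk'1 hk'2 t).1 hk'ring).1
    have hlow : β K * (cbar i K - c t) ≤ ∑ j ∈ Finset.Icc 1 i, pSO j t := by
      rw [hS2]
      have hterm : ∀ l ∈ Finset.Icc k' K, 0 ≤ (β l - β (l+1)) * (cbar i l - c t) := by
        intro l hl
        obtain ⟨hl1, hl2⟩ := Finset.mem_Icc.1 hl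
        apply mul_nonneg (hβstep l (by omega) hl2)
        have := hcbarmono i hi1 (by omega) k' l hk'1 hl1 hl2
        linarith
      have := Finset.single_le_sum hterm (Finset.mem_Icc.2 ⟨hk'2, le_rfl⟩ : K ∈ Finset.Icc k' K)
      rw [hβK1, sub_zero] at this
      exact this
    have hsplit : ∑ j ∈ Finset.Icc 1 (i+1), pSO j t
        = (∑ j ∈ Finset.Icc 1 i, pSO j t) + pSO (i+1) t := by
      have := hSsplit (i+1) (by omega) t
      have hii : i + 1 - 1 = i := rfl
      rwa [hii] at this
    have hβKpos := hβposK K hK le_rfl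
    nlinarith [hlow, hpos, hsplit, hS1, hct, hcon]
  have hNest : ∀ i j, 1 ≤ i → i ≤ j → j ≤ N → cbar i K ≤ cbar j K := by
    intro i j hi hij
    induction j, hij using Nat.le_induction with
    | base => intro _; exact le_rfl
    | succ n hn ih =>
      intro hnN
      exact le_trans (ih (by omega)) (hNest1 n (by omega) (by omega))
  have hSvan : ∀ m, 1 ≤ m → m ≤ N → ∀ t : ℝ, cbar m K ≤ c t →
      ∑ j ∈ Finset.Icc 1 m, pSO j t = 0 := by
    intro m a b t hct
    rcases eq_or_lt_of_le hct with h | h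
    · -- c t = cbar m K : t is in the outermost ring, and the sum vanishes there
      have hring : t ∈ W m K \ W m (K-1) := by
        rw [hringc m K a b hK le_rfl t]
        refine ⟨le_of_eq h.symm, ?_⟩
        rcases eq_or_lt_of_le hK with h2 | h2
        · exact Or.inl h2.symm
        · refine Or.inr ?_
          have := hcbarstep m (K-1) a b (by omega) (by omega)
          have hKK : K - 1 + 1 = K := by omega
          rw [hKK] at this
          linarith
      rw [hSform m K a b hK le_rfl t hring, Finset.Icc_self, Finset.sum_singleton, ← h]
      ring
    · apply Finset.sum_eq_zero
      intro j hj
      obtain ⟨hj1, hj2⟩ := Finset.mem_Icc.1 hj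
      apply hp0X j hj1 (by omega) t
      rw [hWX j K hj1 (by omega) hK le_rfl, hsub j K hj1 (by omega) hK le_rfl]
      push_neg
      exact lt_of_le_of_lt (hNest j m hj1 hj2 b) h

  -- ===================== closed form, continuity, c-dependence =====================
  have hFRing : ∀ i k, 1 ≤ i → i ≤ N → 1 ≤ k → k ≤ K → ∀ v : ℝ,
      (k = 1 ∨ cbar i (k-1) < v) → v ≤ cbar i k →
      ∑ l ∈ Finset.Icc 1 K, (β l - β (l+1)) * max (cbar i l - v) 0
        = ∑ l ∈ Finset.Icc k K, (β l - β (l+1)) * (cbar i l - v) := by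
    intro i k a b e f v hv1 hv2
    have hsp : Finset.Icc 1 K = Finset.Icc 1 (k-1) ∪ Finset.Icc k K := by
      ext l; simp only [Finset.mem_Icc, Finset.mem_union]; omega
    have hdj : Disjoint (Finset.Icc 1 (k-1)) (Finset.Icc k K) := by
      rw [Finset.disjoint_left]; intro l h1 h2
      simp only [Finset.mem_Icc] at h1 h2; omega
    rw [hsp, Finset.sum_union hdj]
    have hz : ∑ l ∈ Finset.Icc 1 (k-1), (β l - β (l+1)) * max (cbar i l - v) 0 = 0 := by
      apply Finset.sum_eq_zero; intro l hl
      obtain ⟨hl1, hl2⟩ := Finset.mem_Icc.1 hl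
      rcases hv1 with h | h
      · omega
      · have : cbar i l ≤ cbar i (k-1) := hcbarmono i a b l (k-1) hl1 hl2 (by omega)
        rw [max_eq_right (by linarith)]; ring
    rw [hz, zero_add]
    apply Finset.sum_congr rfl
    intro l hl
    obtain ⟨hl1, hl2⟩ := Finset.mem_Icc.1 hl
    have : cbar i k ≤ cbar i l := hcbarmono i a b k l e hl1 hl2
    rw [max_eq_left (by linarith)]
  have hSrep : ∀ m, 1 ≤ m → m ≤ N → ∀ t : ℝ, c t ≤ cbar m K →
      ∑ j ∈ Finset.Icc 1 m, pSO j t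
        = ∑ l ∈ Finset.Icc 1 K, (β l - β (l+1)) * max (cbar m l - c t) 0 := by
    intro m a b t hct
    obtain ⟨k, hk1, hk2, hring⟩ := hringex m a b t hct
    have hchar := (hringc m k a b hk1 hk2 t).1 hring
    rw [hSform m k a b hk1 hk2 t hring, hFRing m k a b hk1 hk2 (c t) hchar.2 hchar.1]
  have hnotW : ∀ m, 1 ≤ m → m ≤ N → ∀ t : ℝ, ¬ c t ≤ cbar m K → pSO m t = 0 := by
    intro m a b t hct
    apply hp0X m a b t
    rw [hWX m K a b hK le_rfl, hsub m K a b hK le_rfl]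
    exact hct
  have hSdep : ∀ m, m ≤ N → ∀ t s : ℝ, c t = c s →
      ∑ j ∈ Finset.Icc 1 m, pSO j t = ∑ j ∈ Finset.Icc 1 m, pSO j s := by
    intro m
    induction m with
    | zero => intro _ t s _; rw [show Finset.Icc 1 0 = ∅ by rfl]; simp
    | succ n ih =>
      intro hm t s hcts
      by_cases hct : c t ≤ cbar (n+1) K
      · rw [hSrep (n+1) (by omega) hm t hct, hSrep (n+1) (by omega) hm s (hcts ▸ hct), hcts]
      · have h1 : pSO (n+1) t = 0 := hnotW (n+1) (by omega) hm t hct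
        have h2 : pSO (n+1) s = 0 := hnotW (n+1) (by omega) hm s (by rw [← hcts]; exact hct)
        rw [hSsplit (n+1) (by omega) t, hSsplit (n+1) (by omega) s,
            show (n+1)-1 = n from rfl, h1, h2, ih (by omega) t s hcts]
  have hScont : ∀ m, m ≤ N → Continuous (fun t => ∑ j ∈ Finset.Icc 1 m, pSO j t) := by
    intro m
    induction m with
    | zero =>
      intro _
      have : (fun t : ℝ => ∑ j ∈ Finset.Icc 1 0, pSO j t) = fun _ => (0:ℝ) := by
        funext t; rw [show Finset.Icc 1 0 = ∅ by rfl]; simp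
      rw [this]; exact continuous_const
    | succ n ih =>
      intro hm
      have hkey : (fun t => ∑ j ∈ Finset.Icc 1 (n+1), pSO j t)
          = fun t => if c t ≤ cbar (n+1) K
              then ∑ l ∈ Finset.Icc 1 K, (β l - β (l+1)) * max (cbar (n+1) l - c t) 0
              else ∑ j ∈ Finset.Icc 1 n, pSO j t := by
        funext t
        by_cases hct : c t ≤ cbar (n+1) K
        · rw [if_pos hct, hSrep (n+1) (by omega) hm t hct]
        · rw [if_neg hct, hSsplit (n+1) (by omega) t, show (n+1)-1 = n from rfl,
              hnotW (n+1) (by omega) hm t hct, add_zero]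
      rw [hkey]
      apply Continuous.if_le
      · apply continuous_finset_sum; intro l _
        exact continuous_const.mul ((continuous_const.sub hccont).max continuous_const)
      · exact ih (by omega)
      · exact hccont
      · exact continuous_const
      · intro x hx
        have hL : ∑ l ∈ Finset.Icc 1 K, (β l - β (l+1)) * max (cbar (n+1) l - c x) 0 = 0 := by
          apply Finset.sum_eq_zero; intro l hl
          obtain ⟨hl1, hl2⟩ := Finset.mem_Icc.1 hl
          have := hcbarmono (n+1) (by omega) hm l K hl1 hl2 le_rfl
          rw [max_eq_right (by rw [hx]; linarith)]; ring
        rw [hL]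
        rcases Nat.eq_zero_or_pos n with h0 | h1
        · subst h0; rw [show Finset.Icc 1 0 = ∅ by rfl]; simp
        · symm
          apply hSvan n h1 (by omega) x
          rw [hx]
          exact hNest n (n+1) h1 (by omega) hm
  -- ===================== the bad (boundary) set =====================
  set Bad : Finset ℝ := (Finset.Icc 1 N ×ˢ Finset.Icc 1 K).biUnion
      (fun p => {tm p.1 p.2, tp p.1 p.2}) with hBadDef
  have hBadmem : ∀ i k, 1 ≤ i → i ≤ N → 1 ≤ k → k ≤ K → tm i k ∈ Bad ∧ tp i k ∈ Bad := by
    intro i k a b e f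
    constructor <;>
    · rw [hBadDef, Finset.mem_biUnion]
      refine ⟨(i, k), ?_, ?_⟩
      · rw [Finset.mem_product]
        exact ⟨Finset.mem_Icc.2 ⟨a, b⟩, Finset.mem_Icc.2 ⟨e, f⟩⟩
      · simp
  -- pSO is nonnegative away from Bad
  have hpnn : ∀ j, 1 ≤ j → j ≤ N → ∀ t : ℝ, t ∉ (Bad : Set ℝ) → 0 ≤ pSO j t := by
    intro j a b t ht
    by_cases hct : c t ≤ cbar j K
    · have htW : t ∈ Set.Icc (tm j K) (tp j K) := (hsub j K a b hK le_rfl t).2 hct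
      have hne1 : t ≠ tm j K := by
        intro h; exact ht (by rw [h]; exact_mod_cast (hBadmem j K a b hK le_rfl).1)
      have hne2 : t ≠ tp j K := by
        intro h; exact ht (by rw [h]; exact_mod_cast (hBadmem j K a b hK le_rfl).2)
      have hIoo : t ∈ Set.Ioo (tm j K) (tp j K) :=
        ⟨lt_of_le_of_ne htW.1 (Ne.symm hne1), lt_of_le_of_ne htW.2 hne2⟩
      have htT : t ∈ 𝒯 := hWTX j a b (by rw [hWX j K a b hK le_rfl]; exact htW)
      exact le_of_lt ((hA1X j a b t htT).2 hIoo)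
    · rw [hnotW j a b t hct]
  have hSnn : ∀ m, m ≤ N → ∀ t : ℝ, t ∉ (Bad : Set ℝ) → 0 ≤ ∑ j ∈ Finset.Icc 1 m, pSO j t := by
    intro m hm t ht
    apply Finset.sum_nonneg
    intro j hj
    obtain ⟨hj1, hj2⟩ := Finset.mem_Icc.1 hj
    exact hpnn j hj1 (by omega) t ht
  -- ===================== local derivative structure =====================
  have hLOC : ∀ m, m ≤ N → ∀ t : ℝ, t ∉ (Bad : Set ℝ) → ∃ b : ℝ, 0 ≤ b ∧ b ≤ 1 ∧
      (b = 0 ∨ (1 ≤ m ∧ c t ≤ cbar m K ∧ ∃ k, 1 ≤ k ∧ k ≤ K ∧ b = β k)) ∧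
      HasDerivAt (fun s => ∑ j ∈ Finset.Icc 1 m, pSO j s) (-(b * deriv c t)) t := by
    intro m hm t ht
    rcases Nat.eq_zero_or_pos m with h0 | h1
    · subst h0
      refine ⟨0, le_rfl, zero_le_one, Or.inl rfl, ?_⟩
      have hfun : (fun s : ℝ => ∑ j ∈ Finset.Icc 1 0, pSO j s) = fun _ => (0:ℝ) := by
        funext s; rw [show Finset.Icc 1 0 = ∅ by rfl]; simp
      rw [hfun]
      simpa using hasDerivAt_const t (0:ℝ)
    · by_cases hct : c t ≤ cbar m K
      · obtain ⟨k, hk1, hk2, hring⟩ := hringex m h1 hm t hct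
        have hchar := (hringc m k h1 hm hk1 hk2 t).1 hring
        have hlt : c t < cbar m k := by
          rcases eq_or_lt_of_le hchar.1 with h | h
          · exfalso
            rcases hbdry m k h1 hm hk1 hk2 t h with h' | h'
            · exact ht (by rw [h']; exact_mod_cast (hBadmem m k h1 hm hk1 hk2).1)
            · exact ht (by rw [h']; exact_mod_cast (hBadmem m k h1 hm hk1 hk2).2)
          · exact h
        refine ⟨β k, le_of_lt (hβposK k hk1 hk2), hβle1 k hk1 hk2,
          Or.inr ⟨h1, hct, k, hk1, hk2, rfl⟩, ?_⟩
        have htT : t ∈ 𝒯 := hWTX m h1 hm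
          (by rw [hWX m K h1 hm hK le_rfl, hsub m K h1 hm hK le_rfl]; exact hct)
        have hcd : HasDerivAt c (deriv c t) t := (hdiff t htT).hasDerivAt
        have hder : HasDerivAt (fun s => ρSO m k - β k * c s - d m) (-(β k * deriv c t)) t := by
          have ha : HasDerivAt (fun s => β k * c s) (β k * deriv c t) t := hcd.const_mul (β k)
          have hb' := (ha.const_sub (ρSO m k)).sub_const (d m)
          exact hb'
        obtain ⟨U, hUo, htU, hUring⟩ : ∃ U : Set ℝ, IsOpen U ∧ t ∈ U ∧
            ∀ s ∈ U, s ∈ W m k \ W m (k-1) := by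
          rcases eq_or_lt_of_le hk1 with hke | hke
          · refine ⟨{s | c s < cbar m k}, isOpen_lt hccont continuous_const, hlt, ?_⟩
            intro s hs
            rw [hringc m k h1 hm hk1 hk2 s]
            exact ⟨le_of_lt hs, Or.inl hke.symm⟩
          · refine ⟨{s | cbar m (k-1) < c s} ∩ {s | c s < cbar m k},
              (isOpen_lt continuous_const hccont).inter (isOpen_lt hccont continuous_const), ?_, ?_⟩
            · refine ⟨?_, hlt⟩
              rcases hchar.2 with h | h
              · omega
              · exact h
            · intro s hs
              rw [hringc m k h1 hm hk1 hk2 s]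
              exact ⟨le_of_lt hs.2, Or.inr hs.1⟩
        have heq : (fun s => ∑ j ∈ Finset.Icc 1 m, pSO j s)
            =ᶠ[nhds t] (fun s => ρSO m k - β k * c s - d m) := by
          filter_upwards [hUo.mem_nhds htU] with s hs
          exact hStele m k h1 hm hk1 hk2 s (hUring s hs)
        exact hder.congr_of_eventuallyEq heq
      · push_neg at hct
        refine ⟨0, le_rfl, zero_le_one, Or.inl rfl, ?_⟩
        have heq : (fun s => ∑ j ∈ Finset.Icc 1 m, pSO j s) =ᶠ[nhds t] (fun _ => (0:ℝ)) := by
          filter_upwards [(isOpen_lt continuous_const hccont).mem_nhds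
            (show t ∈ {s : ℝ | cbar m K < c s} from hct)] with s hs
          exact hSvan m h1 hm s (le_of_lt hs)
        have h0 : HasDerivAt (fun _ : ℝ => (0:ℝ)) 0 t := hasDerivAt_const t 0
        simpa using h0.congr_of_eventuallyEq heq

  -- ===================== cumulative queueing delays =====================
  have hWPsum : ∀ i, i ≤ N → ∀ s : ℝ,
      ∑ j ∈ Finset.Icc 1 i, wP j s = ∑ j ∈ Finset.Icc 1 (min i (iP-1)), pSO j s := by
    intro i hi s
    rcases le_or_gt i (iP-1) with h | h
    · rw [min_eq_left h]
      apply Finset.sum_congr rfl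
      intro j hj
      obtain ⟨hj1, hj2⟩ := Finset.mem_Icc.1 hj
      exact hwP2 j (Finset.mem_Icc.2 ⟨hj1, by omega⟩)
        (by simp only [Finset.mem_Icc]; omega) s
    · rw [min_eq_right (by omega)]
      have hsp : Finset.Icc 1 i = Finset.Icc 1 (iP-1) ∪ Finset.Icc iP i := by
        ext j; simp only [Finset.mem_Icc, Finset.mem_union]; omega
      have hdj : Disjoint (Finset.Icc 1 (iP-1)) (Finset.Icc iP i) := by
        rw [Finset.disjoint_left]; intro j h1 h2
        simp only [Finset.mem_Icc] at h1 h2; omega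
      rw [hsp, Finset.sum_union hdj]
      have h2 : ∑ j ∈ Finset.Icc iP i, wP j s = 0 := by
        apply Finset.sum_eq_zero
        intro j hj
        obtain ⟨hj1, hj2⟩ := Finset.mem_Icc.1 hj
        exact hwP1 j (Finset.mem_Icc.2 ⟨by omega, by omega⟩)
          (Finset.mem_Icc.2 ⟨hj1, by omega⟩) s
      have h1 : ∑ j ∈ Finset.Icc 1 (iP-1), wP j s = ∑ j ∈ Finset.Icc 1 (iP-1), pSO j s := by
        apply Finset.sum_congr rfl
        intro j hj
        obtain ⟨hj1, hj2⟩ := Finset.mem_Icc.1 hj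
        exact hwP2 j (Finset.mem_Icc.2 ⟨hj1, by omega⟩)
          (by simp only [Finset.mem_Icc]; omega) s
      rw [h1, h2, add_zero]
  -- the derivative of the (regularised) arrival-time maps
  have hDVAL : ∀ i, 1 ≤ i → i ≤ N → ∀ t : ℝ, t ∉ (Bad : Set ℝ) → ∃ b : ℝ, 0 ≤ b ∧ b ≤ 1 ∧
      (b = 0 ∨ (2 ≤ N ∧ t ∈ 𝒯 ∧ c t ≤ cbar (min i (iP-1)) K)) ∧
      HasDerivAt (fun s => s - ∑ j ∈ Finset.Icc 1 i, wP j s) (1 + b * deriv c t) t ∧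
      deriv (fun s => s - ∑ j ∈ Finset.Icc 1 i, wP j s) t = 1 + b * deriv c t := by
    intro i a b t ht
    have hfun : (fun s : ℝ => s - ∑ j ∈ Finset.Icc 1 i, wP j s)
        = fun s => s - ∑ j ∈ Finset.Icc 1 (min i (iP-1)), pSO j s := by
      funext s; rw [hWPsum i b s]
    have hmle : min i (iP-1) ≤ N := le_trans (min_le_left _ _) b
    obtain ⟨b', hb0, hb1, hbd, hbder⟩ := hLOC (min i (iP-1)) hmle t ht
    have hder : HasDerivAt (fun s => s - ∑ j ∈ Finset.Icc 1 (min i (iP-1)), pSO j s)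
        (1 + b' * deriv c t) t := by
      have := (hasDerivAt_id t).sub hbder
      exact this.congr_deriv (by ring)
    refine ⟨b', hb0, hb1, ?_, ?_, ?_⟩
    · rcases hbd with h | ⟨h1, h2, _⟩
      · exact Or.inl h
      · refine Or.inr ⟨?_, ?_, h2⟩
        · have := min_le_right i (iP-1)
          omega
        · apply hWTX (min i (iP-1)) h1 hmle
          rw [hWX (min i (iP-1)) K h1 hmle hK le_rfl, hsub (min i (iP-1)) K h1 hmle hK le_rfl]
          exact h2
    · rw [hfun]; exact hder
    · rw [hfun]; exact hder.deriv
  -- positivity of the speed of the arrival maps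
  have hposD : ∀ (t : ℝ) (b : ℝ), 0 ≤ b → b ≤ 1 → (b = 0 ∨ (2 ≤ N ∧ t ∈ 𝒯)) →
      0 < 1 + b * deriv c t := by
    intro t b h0 h1 hd
    rcases hd with h | ⟨hN2, htT⟩
    · rw [h]; norm_num
    · have hq := (hQRP 1 le_rfl (by omega) t htT).1
      have hμ1 := hμposN 1 le_rfl (by omega)
      have hμ2 := hμposN 2 (by omega) (by omega)
      have hq' : μ 2 / μ 1 - 1 < deriv c t := by norm_num at hq; exact hq
      have hfrac : 0 < μ 2 / μ 1 := div_pos hμ2 hμ1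
      rcases le_or_gt 0 (deriv c t) with h | h
      · have t1 : 0 ≤ b * deriv c t := mul_nonneg h0 h
        linarith only [t1]
      · have t1 : 1 * deriv c t ≤ b * deriv c t := mul_le_mul_of_nonpos_right h1 (le_of_lt h)
        rw [one_mul] at t1
        linarith only [t1, hq', hfrac]
  -- the key QRP inequality
  have hkeyI : ∀ i, 1 ≤ i → i < N → ∀ t ∈ 𝒯, ∀ b₁ b₂ : ℝ, 0 ≤ b₁ → b₁ ≤ 1 → 0 ≤ b₂ → b₂ ≤ 1 →
      0 ≤ μ i * (1 + b₁ * deriv c t) - μ (i+1) * (1 + b₂ * deriv c t) := by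
    intro i a b t htT b₁ b₂ h10 h11 h20 h21
    obtain ⟨hqL, hqU⟩ := hQRP i a b t htT
    have hμi := hμposN i a (by omega)
    have hμi1 := hμposN (i+1) (by omega) (by omega)
    have hμd := hμdec i a b
    rcases le_or_gt 0 (μ i * b₁ - μ (i+1) * b₂) with h | h
    · have h1' : μ (i+1) - μ i < deriv c t * μ i := by
        have := (div_lt_iff₀ hμi).1 (show μ (i+1) / μ i < deriv c t + 1 by linarith)
        linarith
      have h2 : μ i * b₁ - μ (i+1) * b₂ ≤ μ i := by
        have t1 : μ i * b₁ ≤ μ i * 1 := mul_le_mul_of_nonneg_left h11 (le_of_lt hμi)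
        have t2 : 0 ≤ μ (i+1) * b₂ := mul_nonneg (le_of_lt hμi1) h20
        rw [mul_one] at t1
        linarith only [t1, t2]
      have h6 : 0 ≤ (μ i - (μ i * b₁ - μ (i+1) * b₂)) * (μ i - μ (i+1)) :=
        mul_nonneg (by linarith only [h2]) (by linarith only [hμd])
      have h7 : (μ i * b₁ - μ (i+1) * b₂) * (μ (i+1) - μ i)
          ≤ (μ i * b₁ - μ (i+1) * b₂) * (deriv c t * μ i) :=
        mul_le_mul_of_nonneg_left (le_of_lt h1') h
      have h8 : 0 ≤ (μ i * (1 + b₁ * deriv c t) - μ (i+1) * (1 + b₂ * deriv c t)) * μ i := by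
        nlinarith only [h6, h7]
      nlinarith only [h8, hμi]
    · have h1' : deriv c t * μ (i+1) < μ i - μ (i+1) := by
        have := (lt_div_iff₀ hμi1).1 (show deriv c t + 1 < μ i / μ (i+1) by linarith)
        linarith
      have h2 : -(μ i * b₁ - μ (i+1) * b₂) ≤ μ (i+1) := by
        have t1 : μ (i+1) * b₂ ≤ μ (i+1) * 1 := mul_le_mul_of_nonneg_left h21 (le_of_lt hμi1)
        have t2 : 0 ≤ μ i * b₁ := mul_nonneg (le_of_lt hμi) h10
        rw [mul_one] at t1
        linarith only [t1, t2]
      have h6 : 0 ≤ (μ (i+1) + (μ i * b₁ - μ (i+1) * b₂)) * (μ i - μ (i+1)) :=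
        mul_nonneg (by linarith only [h2]) (by linarith only [hμd])
      have h7 : (μ i * b₁ - μ (i+1) * b₂) * (μ i - μ (i+1))
          ≤ (μ i * b₁ - μ (i+1) * b₂) * (deriv c t * μ (i+1)) :=
        mul_le_mul_of_nonpos_left (le_of_lt h1') (le_of_lt h)
      have h8 : 0 ≤ (μ i * (1 + b₁ * deriv c t) - μ (i+1) * (1 + b₂ * deriv c t)) * μ (i+1) := by
        nlinarith only [h6, h7]
      nlinarith only [h8, hμi1]
  -- the chain inequality for skipping unused bottlenecks
  have hmono : ∀ j, 1 ≤ j → j < N → ∀ t ∈ 𝒯, ∀ b : ℝ, 0 ≤ b → b ≤ 1 →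
      μ (j+1) * (1 + b * deriv c t) ≤ μ j := by
    intro j a b t htT b' h0 h1
    obtain ⟨_, hqU⟩ := hQRP j a b t htT
    have hμj := hμposN j a (by omega)
    have hμj1 := hμposN (j+1) (by omega) (by omega)
    have hμd := hμdec j a b
    have hx' : deriv c t * μ (j+1) < μ j - μ (j+1) := by
      have := (lt_div_iff₀ hμj1).1 (show deriv c t + 1 < μ j / μ (j+1) by linarith)
      linarith
    rcases le_or_gt 0 (deriv c t) with h | h
    · have t1 : b' * deriv c t ≤ 1 * deriv c t := mul_le_mul_of_nonneg_right h1 h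
      rw [one_mul] at t1
      have t2 : μ (j+1) * (b' * deriv c t) ≤ μ (j+1) * deriv c t :=
        mul_le_mul_of_nonneg_left t1 (le_of_lt hμj1)
      nlinarith only [t2, hx']
    · have t1 : b' * deriv c t ≤ 0 := by nlinarith only [h0, h]
      have t2 : μ (j+1) * (b' * deriv c t) ≤ 0 := by nlinarith only [t1, hμj1]
      nlinarith only [t2, hμd]
  -- ===================== almost-everywhere machinery =====================
  have hBadnull : (volume.restrict 𝒯) (Bad : Set ℝ) = 0 := by
    apply le_antisymm _ (zero_le)
    calc (volume.restrict 𝒯) (Bad : Set ℝ) ≤ volume (Bad : Set ℝ) :=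
          Measure.restrict_apply_le _ _
      _ = 0 := (Finset.finite_toSet Bad).measure_zero _
  have hae : ∀ P : ℝ → Prop, (∀ t : ℝ, t ∉ (Bad : Set ℝ) → P t) →
      ∀ᵐ t ∂(volume.restrict 𝒯), P t := by
    intro P hP
    rw [MeasureTheory.ae_iff]
    apply measure_mono_null _ hBadnull
    intro t htP
    by_contra hb
    exact htP (hP t hb)

  -- ===================== condition (i) =====================
  have hEsum : ∀ i, 1 ≤ i → i ≤ N → ∀ t : ℝ,
      (∑ j ∈ Finset.Icc 1 i, wP j t) + (∑ j ∈ Finset.Icc iP i, pSO j t)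
        = ∑ j ∈ Finset.Icc 1 i, pSO j t := by
    intro i a b t
    rw [hWPsum i b t]
    rcases le_or_gt i (iP-1) with h | h
    · rw [min_eq_left h]
      have he : Finset.Icc iP i = ∅ := Finset.Icc_eq_empty (by omega)
      rw [he, Finset.sum_empty, add_zero]
    · rw [min_eq_right (by omega)]
      have hsp : Finset.Icc 1 i = Finset.Icc 1 (iP-1) ∪ Finset.Icc iP i := by
        ext j; simp only [Finset.mem_Icc, Finset.mem_union]; omega
      have hdj : Disjoint (Finset.Icc 1 (iP-1)) (Finset.Icc iP i) := by
        rw [Finset.disjoint_left]; intro j h1 h2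
        simp only [Finset.mem_Icc] at h1 h2; omega
      rw [hsp, Finset.sum_union hdj]
  have hringT : ∀ i k, 1 ≤ i → i ≤ N → 1 ≤ k → k ≤ K → ∀ t : ℝ,
      t ∈ W i k \ W i (k-1) → t ∈ 𝒯 := by
    intro i k a b e f t ht
    have h1 := ((hringc i k a b e f t).1 ht).1
    apply hWTX i a b
    rw [hWX i K a b hK le_rfl, hsub i K a b hK le_rfl]
    exact le_trans h1 (hcbarmono i a b k K e f le_rfl)
  have hcondI : ∀ i ∈ Finset.Icc 1 N, ∀ k ∈ Finset.Icc 1 K,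
      ∀ᵐ t ∂(MeasureTheory.volume.restrict 𝒯),
        0 ≤ qP i k t ∧
        0 ≤ (∑ j ∈ Finset.Icc 1 i, wP j t) + β k * c t +
            (∑ j ∈ Finset.Icc iP i, pSO j t) + d i - ρP i k ∧
        qP i k t * ((∑ j ∈ Finset.Icc 1 i, wP j t) + β k * c t +
            (∑ j ∈ Finset.Icc iP i, pSO j t) + d i - ρP i k) = 0 := by
    intro i hi k hk
    obtain ⟨a, b⟩ := Finset.mem_Icc.1 hi
    obtain ⟨e, f⟩ := Finset.mem_Icc.1 hk
    apply hae
    intro t ht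
    have hEq : (∑ j ∈ Finset.Icc 1 i, wP j t) + β k * c t +
        (∑ j ∈ Finset.Icc iP i, pSO j t) + d i - ρP i k
        = (∑ j ∈ Finset.Icc 1 i, pSO j t) + β k * c t + d i - ρSO i k := by
      rw [hρP]
      have := hEsum i a b t
      linarith only [this]
    by_cases hring : t ∈ W i k \ W i (k-1)
    · have hzero : (∑ j ∈ Finset.Icc 1 i, wP j t) + β k * c t +
          (∑ j ∈ Finset.Icc iP i, pSO j t) + d i - ρP i k = 0 := by
        rw [hEq, hStele i k a b e f t hring]; ring
      refine ⟨?_, hzero.ge, by rw [hzero, mul_zero]⟩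
      rw [hqPX i k a b e f t hring]
      have htT : t ∈ 𝒯 := hringT i k a b e f t hring
      rcases eq_or_lt_of_le b with hiN | hiN
      · subst hiN
        rw [hμtop, zero_mul, sub_zero]
        obtain ⟨b₁, hb10, hb11, hbd, _, hder1⟩ := hDVAL i a le_rfl t ht
        rw [hder1]
        apply mul_nonneg (le_of_lt (hμposN i a le_rfl))
        apply le_of_lt
        apply hposD t b₁ hb10 hb11
        rcases hbd with h | ⟨h1, h2, _⟩
        · exact Or.inl h
        · exact Or.inr ⟨h1, h2⟩
      · obtain ⟨b₁, hb10, hb11, _, _, hder1⟩ := hDVAL i a (by omega) t ht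
        obtain ⟨b₂, hb20, hb21, _, _, hder2⟩ := hDVAL (i+1) (by omega) (by omega) t ht
        rw [hder1, hder2]
        exact hkeyI i a hiN t htT b₁ b₂ hb10 hb11 hb20 hb21
    · have hq0 : qP i k t = 0 := hqP0X i k a b e f t hring
      refine ⟨hq0.ge, ?_, by rw [hq0, zero_mul]⟩
      rw [hEq]
      by_cases hct : c t ≤ cbar i K
      · obtain ⟨k', hk'1, hk'2, hring'⟩ := hringex i a b t hct
        have hS := hStele i k' a b hk'1 hk'2 t hring'
        rw [hS]
        rcases lt_trichotomy k' k with h | h | h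
        · have hsp : Finset.Icc k' K = Finset.Icc k' (k-1) ∪ Finset.Icc k K := by
            ext l; simp only [Finset.mem_Icc, Finset.mem_union]; omega
          have hdj : Disjoint (Finset.Icc k' (k-1)) (Finset.Icc k K) := by
            rw [Finset.disjoint_left]; intro l h1 h2
            simp only [Finset.mem_Icc] at h1 h2; omega
          have hsum1 : ρSO i k' - ρSO i k
              = ∑ l ∈ Finset.Icc k' (k-1), (β l - β (l+1)) * cbar i l := by
            rw [hρX i k' a b hk'1 hk'2, hρX i k a b e f, hsp, Finset.sum_union hdj]
            ring
          have hsum2 : β k' - β k = ∑ l ∈ Finset.Icc k' (k-1), (β l - β (l+1)) := by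
            rw [tele1 β k' (k-1) (by omega), show k - 1 + 1 = k by omega]
          have hctk' : c t ≤ cbar i k' := ((hringc i k' a b hk'1 hk'2 t).1 hring').1
          have hterm : ∀ l ∈ Finset.Icc k' (k-1), 0 ≤ (β l - β (l+1)) * (cbar i l - c t) := by
            intro l hl; obtain ⟨hl1, hl2⟩ := Finset.mem_Icc.1 hl
            apply mul_nonneg (hβstep l (by omega) (by omega))
            have := hcbarmono i a b k' l hk'1 hl1 (by omega)
            linarith
          have hge := Finset.sum_nonneg hterm
          have hexp : ∑ l ∈ Finset.Icc k' (k-1), (β l - β (l+1)) * (cbar i l - c t)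
              = (∑ l ∈ Finset.Icc k' (k-1), (β l - β (l+1)) * cbar i l)
                - (β k' - β k) * c t := by
            simp only [mul_sub]
            rw [Finset.sum_sub_distrib, ← Finset.sum_mul, ← hsum2]
          rw [hexp] at hge
          linarith only [hge, hsum1]
        · exact absurd (h ▸ hring') hring
        · have hk'2' : 2 ≤ k' := by omega
          have hsp : Finset.Icc k K = Finset.Icc k (k'-1) ∪ Finset.Icc k' K := by
            ext l; simp only [Finset.mem_Icc, Finset.mem_union]; omega
          have hdj : Disjoint (Finset.Icc k (k'-1)) (Finset.Icc k' K) := by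
            rw [Finset.disjoint_left]; intro l h1 h2
            simp only [Finset.mem_Icc] at h1 h2; omega
          have hsum1 : ρSO i k - ρSO i k'
              = ∑ l ∈ Finset.Icc k (k'-1), (β l - β (l+1)) * cbar i l := by
            rw [hρX i k' a b hk'1 hk'2, hρX i k a b e f, hsp, Finset.sum_union hdj]
            ring
          have hsum2 : β k - β k' = ∑ l ∈ Finset.Icc k (k'-1), (β l - β (l+1)) := by
            rw [tele1 β k (k'-1) (by omega), show k' - 1 + 1 = k' by omega]
          have hctk' : cbar i (k'-1) < c t := by
            rcases ((hringc i k' a b hk'1 hk'2 t).1 hring').2 with h' | h'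
            · omega
            · exact h'
          have hterm : ∀ l ∈ Finset.Icc k (k'-1), 0 ≤ (β l - β (l+1)) * (c t - cbar i l) := by
            intro l hl; obtain ⟨hl1, hl2⟩ := Finset.mem_Icc.1 hl
            apply mul_nonneg (hβstep l (by omega) (by omega))
            have := hcbarmono i a b l (k'-1) (by omega) hl2 (by omega)
            linarith
          have hge := Finset.sum_nonneg hterm
          have hexp : ∑ l ∈ Finset.Icc k (k'-1), (β l - β (l+1)) * (c t - cbar i l)
              = (β k - β k') * c t
                - ∑ l ∈ Finset.Icc k (k'-1), (β l - β (l+1)) * cbar i l := by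
            simp only [mul_sub]
            rw [Finset.sum_sub_distrib, ← Finset.sum_mul, ← hsum2]
          rw [hexp] at hge
          linarith only [hge, hsum1]
      · push_neg at hct
        have hS := hSnn i b t ht
        have hterm : ∀ l ∈ Finset.Icc k K, 0 ≤ (β l - β (l+1)) * (c t - cbar i l) := by
          intro l hl; obtain ⟨hl1, hl2⟩ := Finset.mem_Icc.1 hl
          apply mul_nonneg (hβstep l (by omega) hl2)
          have := hcbarmono i a b l K (by omega) hl2 le_rfl
          linarith
        have hge := Finset.sum_nonneg hterm
        have hexp : ∑ l ∈ Finset.Icc k K, (β l - β (l+1)) * (c t - cbar i l)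
            = β k * c t - ∑ l ∈ Finset.Icc k K, (β l - β (l+1)) * cbar i l := by
          simp only [mul_sub]
          rw [Finset.sum_sub_distrib, ← Finset.sum_mul, hβtel k e f]
        rw [hexp] at hge
        rw [hρX i k a b e f]
        linarith only [hge, hS]
  -- ===================== condition (ii) =====================
  have hcondII : ∀ i ∈ Finset.Icc 1 N, i ∉ Finset.Icc iP N →
      ∀ᵐ t ∂(MeasureTheory.volume.restrict 𝒯),
        0 ≤ wP i t ∧
        0 ≤ μ i * deriv (fun s => s - ∑ j ∈ Finset.Icc 1 i, wP j s) t -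
            ∑ j ∈ Finset.Icc i N, ∑ k ∈ Finset.Icc 1 K, qP j k t ∧
        wP i t * (μ i * deriv (fun s => s - ∑ j ∈ Finset.Icc 1 i, wP j s) t -
            ∑ j ∈ Finset.Icc i N, ∑ k ∈ Finset.Icc 1 K, qP j k t) = 0 := by
    intro i hi hiNP
    obtain ⟨a, b⟩ := Finset.mem_Icc.1 hi
    have hilt : i < iP := by
      by_contra h
      exact hiNP (Finset.mem_Icc.2 ⟨by omega, b⟩)
    apply hae
    intro t ht
    have hwPi : wP i t = pSO i t := hwP2 i hi hiNP t
    have hsum : ∑ j ∈ Finset.Icc i N, ∑ k' ∈ Finset.Icc 1 K, qP j k' t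
        = ∑ j ∈ Finset.Icc i N, (if c t ≤ cbar j K then
            (μ j * deriv (fun s => s - ∑ j' ∈ Finset.Icc 1 j, wP j' s) t
             - μ (j+1) * deriv (fun s => s - ∑ j' ∈ Finset.Icc 1 (j+1), wP j' s) t) else 0) := by
      apply Finset.sum_congr rfl
      intro j hj
      obtain ⟨hj1, hj2⟩ := Finset.mem_Icc.1 hj
      by_cases hcj : c t ≤ cbar j K
      · rw [if_pos hcj]
        obtain ⟨kj, hkj1, hkj2, hringj⟩ := hringex j (by omega) hj2 t hcj
        rw [Finset.sum_eq_single kj]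
        · exact hqPX j kj (by omega) hj2 hkj1 hkj2 t hringj
        · intro k' hk' hne
          obtain ⟨hk'1, hk'2⟩ := Finset.mem_Icc.1 hk'
          apply hqP0X j k' (by omega) hj2 hk'1 hk'2 t
          intro hcon
          exact hne (hringdj j k' kj (by omega) hj2 hk'1 hk'2 hkj1 hkj2 t hcon hringj)
        · intro hcon
          exact absurd (Finset.mem_Icc.2 ⟨hkj1, hkj2⟩) hcon
      · rw [if_neg hcj]
        apply Finset.sum_eq_zero
        intro k' hk'
        obtain ⟨hk'1, hk'2⟩ := Finset.mem_Icc.1 hk'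
        apply hqP0X j k' (by omega) hj2 hk'1 hk'2 t
        intro hcon
        have := (hringc j k' (by omega) hj2 hk'1 hk'2 t).1 hcon
        exact hcj (le_trans this.1 (hcbarmono j (by omega) hj2 k' K hk'1 hk'2 le_rfl))
    suffices hS2 : (0 ≤ μ i * deriv (fun s => s - ∑ j ∈ Finset.Icc 1 i, wP j s) t -
            ∑ j ∈ Finset.Icc i N, ∑ k ∈ Finset.Icc 1 K, qP j k t) ∧
        (wP i t * (μ i * deriv (fun s => s - ∑ j ∈ Finset.Icc 1 i, wP j s) t -
            ∑ j ∈ Finset.Icc i N, ∑ k ∈ Finset.Icc 1 K, qP j k t) = 0) by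
      exact ⟨by rw [hwPi]; exact hpnn i a b t ht, hS2.1, hS2.2⟩
    by_cases hcN : c t ≤ cbar N K
    case neg =>
      have hz : ∑ j ∈ Finset.Icc i N, ∑ k' ∈ Finset.Icc 1 K, qP j k' t = 0 := by
        rw [hsum]
        apply Finset.sum_eq_zero
        intro j hj
        obtain ⟨hj1, hj2⟩ := Finset.mem_Icc.1 hj
        rw [if_neg]
        intro hcon
        exact hcN (le_trans hcon (hNest j N (by omega) hj2 le_rfl))
      have houti : ¬ c t ≤ cbar i K := fun hcon => hcN (le_trans hcon (hNest i N a b le_rfl))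
      constructor
      · rw [hz, sub_zero]
        obtain ⟨b₁, hb10, hb11, hbd, _, hder1⟩ := hDVAL i a b t ht
        rw [hder1]
        apply mul_nonneg (le_of_lt (hμposN i a b))
        apply le_of_lt
        apply hposD t b₁ hb10 hb11
        rcases hbd with h | ⟨h1, h2, _⟩
        · exact Or.inl h
        · exact Or.inr ⟨h1, h2⟩
      · rw [hwPi, hnotW i a b t houti, zero_mul]
    case pos =>
      have hne : ((Finset.Icc i N).filter (fun j => c t ≤ cbar j K)).Nonempty :=
        ⟨N, Finset.mem_filter.2 ⟨Finset.mem_Icc.2 ⟨b, le_rfl⟩, hcN⟩⟩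
      obtain ⟨j0, hj01, hj02, hj03, hmin⟩ : ∃ j0, i ≤ j0 ∧ j0 ≤ N ∧ c t ≤ cbar j0 K ∧
          ∀ j, i ≤ j → j ≤ N → c t ≤ cbar j K → j0 ≤ j := by
        have hj0mem := Finset.min'_mem _ hne
        rw [Finset.mem_filter, Finset.mem_Icc] at hj0mem
        refine ⟨((Finset.Icc i N).filter (fun j => c t ≤ cbar j K)).min' hne,
          hj0mem.1.1, hj0mem.1.2, hj0mem.2, ?_⟩
        intro j h1 h2 h3
        exact Finset.min'_le _ j (Finset.mem_filter.2 ⟨Finset.mem_Icc.2 ⟨h1, h2⟩, h3⟩)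
      have hJeq : (Finset.Icc i N).filter (fun j => c t ≤ cbar j K) = Finset.Icc j0 N := by
        ext j
        simp only [Finset.mem_filter, Finset.mem_Icc]
        constructor
        · rintro ⟨⟨h1, h2⟩, h3⟩
          exact ⟨hmin j h1 h2 h3, h2⟩
        · rintro ⟨h1, h2⟩
          exact ⟨⟨le_trans hj01 h1, h2⟩, le_trans hj03 (hNest j0 j (by omega) h1 h2)⟩
      have hsum2 : ∑ j ∈ Finset.Icc i N, ∑ k' ∈ Finset.Icc 1 K, qP j k' t
          = μ j0 * deriv (fun s => s - ∑ j' ∈ Finset.Icc 1 j0, wP j' s) t := by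
        rw [hsum, ← Finset.sum_filter, hJeq]
        have htl := tele1
          (fun j => μ j * deriv (fun s => s - ∑ j' ∈ Finset.Icc 1 j, wP j' s) t) j0 N (by omega)
        rw [htl, hμtop, zero_mul, sub_zero]
      rcases eq_or_lt_of_le hj01 with hij0 | hij0
      · constructor
        · rw [hsum2, ← hij0]
          exact (sub_self _).ge
        · rw [hsum2, ← hij0, sub_self, mul_zero]
      · have houti : ¬ c t ≤ cbar i K := by
          intro hcon
          have := hmin i le_rfl b hcon
          omega
        constructor
        · rw [hsum2]
          obtain ⟨b₁, hb10, hb11, hbd1, _, hder1⟩ := hDVAL i a b t ht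
          obtain ⟨b₂, hb20, hb21, hbd2, _, hder2⟩ := hDVAL j0 (by omega) hj02 t ht
          have hb1z : b₁ = 0 := by
            rcases hbd1 with h | ⟨_, _, h2⟩
            · exact h
            · exfalso
              rw [min_eq_left (by omega : i ≤ iP - 1)] at h2
              exact houti h2
          have hbound : μ j0 * (1 + b₂ * deriv c t) ≤ μ i := by
            rcases hbd2 with h | ⟨hN2, htT, _⟩
            · rw [h]
              have := hμanti i j0 a (by omega) hj02
              nlinarith only [this]
            · have hm := hmono (j0 - 1) (by omega) (by omega) t htT b₂ hb20 hb21
              rw [show j0 - 1 + 1 = j0 by omega] at hm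
              have := hμanti i (j0-1) a (by omega) (by omega)
              linarith only [hm, this]
          rw [hder1, hder2, hb1z]
          have hsimp : μ i * (1 + 0 * deriv c t) = μ i := by ring
          rw [hsimp]
          linarith only [hbound]
        · rw [hwPi, hnotW i a b t houti, zero_mul]
  -- ===================== condition (iv) =====================
  have hcondIV : ∀ i ∈ Finset.Icc 1 N, ∀ᵐ t ∂(MeasureTheory.volume.restrict 𝒯),
      0 < 1 - ∑ j ∈ Finset.Icc 1 i, deriv (wP j) t := by
    intro i hi
    obtain ⟨a, b⟩ := Finset.mem_Icc.1 hi
    apply hae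
    intro t ht
    have hdiffj : ∀ j ∈ Finset.Icc 1 i, DifferentiableAt ℝ (wP j) t := by
      intro j hj
      obtain ⟨hj1, hj2⟩ := Finset.mem_Icc.1 hj
      by_cases hjP : j ∈ Finset.Icc iP N
      · have hwj : wP j = fun _ => (0:ℝ) :=
          funext (hwP1 j (Finset.mem_Icc.2 ⟨hj1, by omega⟩) hjP)
        rw [hwj]
        exact differentiableAt_const 0
      · have hwj : wP j = fun s => (∑ j' ∈ Finset.Icc 1 j, pSO j' s)
            - ∑ j' ∈ Finset.Icc 1 (j-1), pSO j' s := by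
          funext s
          rw [hwP2 j (Finset.mem_Icc.2 ⟨hj1, by omega⟩) hjP s, hSsplit j hj1 s]
          ring
        obtain ⟨bj, _, _, _, hderj⟩ := hLOC j (by omega) t ht
        obtain ⟨bj', _, _, _, hderj'⟩ := hLOC (j-1) (by omega) t ht
        rw [hwj]
        exact (hderj.sub hderj').differentiableAt
    rw [← deriv_fun_sum hdiffj]
    have hfun : (fun s => ∑ j ∈ Finset.Icc 1 i, wP j s)
        = fun s => ∑ j ∈ Finset.Icc 1 (min i (iP-1)), pSO j s := funext (hWPsum i b)
    rw [hfun]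
    have hmle : min i (iP-1) ≤ N := le_trans (min_le_left _ _) b
    obtain ⟨b', h0, h1, hd, hder⟩ := hLOC (min i (iP-1)) hmle t ht
    rw [hder.deriv]
    have hpos : 0 < 1 + b' * deriv c t := by
      apply hposD t b' h0 h1
      rcases hd with h | ⟨h1', h2', _⟩
      · exact Or.inl h
      · refine Or.inr ⟨?_, ?_⟩
        · have := min_le_right i (iP-1)
          omega
        · apply hWTX (min i (iP-1)) h1' hmle
          rw [hWX _ K h1' hmle hK le_rfl, hsub _ K h1' hmle hK le_rfl]
          exact h2'
    linarith only [hpos]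

  -- ===================== condition (iii) =====================
  have hcondIII : ∀ i ∈ Finset.Icc 1 N, ∀ k ∈ Finset.Icc 1 K, ∫ t in 𝒯, qP i k t = Q i k := by
    intro i hi k hk
    obtain ⟨a, b⟩ := Finset.mem_Icc.1 hi
    obtain ⟨e, f⟩ := Finset.mem_Icc.1 hk
    have hm1le : min i (iP-1) ≤ N := le_trans (min_le_left _ _) b
    have hm2le : min (i+1) (iP-1) ≤ N := le_trans (min_le_right _ _) (by omega)
    have hμ1nn : 0 ≤ μ (i+1) := by
      rcases eq_or_lt_of_le b with hiN | hiN
      · rw [hiN, hμtop]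
      · exact le_of_lt (hμposN (i+1) (by omega) (by omega))
    -- the integrand and its antiderivative
    set φ : ℝ → ℝ := fun s => μ i * deriv (fun u => u - ∑ j ∈ Finset.Icc 1 i, wP j u) s
        - μ (i+1) * deriv (fun u => u - ∑ j ∈ Finset.Icc 1 (i+1), wP j u) s with hφdef
    set Φ : ℝ → ℝ := fun s =>
        μ i * (s - ∑ j ∈ Finset.Icc 1 (min i (iP-1)), pSO j s)
        - μ (i+1) * (s - ∑ j ∈ Finset.Icc 1 (min (i+1) (iP-1)), pSO j s) with hΦdef
    -- a uniform bound on the derivative of c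
    obtain ⟨M, hM0, hMb⟩ : ∃ M : ℝ, 0 ≤ M ∧ ∀ x ∈ 𝒯, 2 ≤ N → |deriv c x| ≤ M := by
      rcases le_or_gt 2 N with h2 | h2
      · have hμ1 := hμposN 1 le_rfl (by omega)
        have hμ2 := hμposN 2 (by omega) (by omega)
        have hd12 : 0 < μ 1 / μ 2 := div_pos hμ1 hμ2
        have hd21 : 0 < μ 2 / μ 1 := div_pos hμ2 hμ1
        refine ⟨μ 1 / μ 2 + 1, by linarith, ?_⟩
        intro x hx _
        obtain ⟨hL, hU⟩ := hQRP 1 le_rfl (by omega) x hx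
        norm_num at hL hU
        rw [abs_le]
        constructor <;> linarith
      · exact ⟨0, le_rfl, fun x _ h => absurd h (by omega)⟩
    have habs : ∀ x ∈ 𝒯, ∀ b' : ℝ, 0 ≤ b' → b' ≤ 1 → (b' = 0 ∨ 2 ≤ N) →
        |1 + b' * deriv c x| ≤ 1 + M := by
      intro x hx b' h0 h1 hd
      have hb' : |b' * deriv c x| ≤ M := by
        rcases hd with h | h
        · rw [h, zero_mul, abs_zero]; exact hM0
        · rw [abs_mul, abs_of_nonneg h0]
          calc b' * |deriv c x| ≤ 1 * |deriv c x| :=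
                mul_le_mul_of_nonneg_right h1 (abs_nonneg _)
            _ = |deriv c x| := one_mul _
            _ ≤ M := hMb x hx h
      calc |1 + b' * deriv c x| ≤ |(1:ℝ)| + |b' * deriv c x| := abs_add_le _ _
        _ ≤ 1 + M := by rw [abs_one]; linarith only [hb']
    set C : ℝ := (μ i + μ (i+1)) * (1 + M) with hCdef
    -- pointwise bound on φ
    have hφbC : ∀ x ∈ 𝒯, x ∉ (Bad : Set ℝ) → ‖φ x‖ ≤ C := by
      intro x hxT hx
      have hμi := hμposN i a b
      rcases eq_or_lt_of_le b with hiN | hiN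
      · have hz : μ (i+1) = 0 := by rw [hiN]; exact hμtop
        obtain ⟨b₁, h10, h11, hd1, _, hder1⟩ := hDVAL i a b x hx
        have hφx : φ x = μ i * (1 + b₁ * deriv c x) := by
          rw [hφdef]; simp only []; rw [hder1, hz]; ring
        rw [hφx, Real.norm_eq_abs, abs_mul, abs_of_nonneg (le_of_lt hμi)]
        have h1 : |1 + b₁ * deriv c x| ≤ 1 + M := by
          apply habs x hxT b₁ h10 h11
          rcases hd1 with h | ⟨h', _, _⟩
          · exact Or.inl h
          · exact Or.inr h'
        rw [hCdef]
        nlinarith only [h1, hμi, hμ1nn, hM0, mul_le_mul_of_nonneg_left h1 (le_of_lt hμi)]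
      · obtain ⟨b₁, h10, h11, hd1, _, hder1⟩ := hDVAL i a b x hx
        obtain ⟨b₂, h20, h21, hd2, _, hder2⟩ := hDVAL (i+1) (by omega) (by omega) x hx
        have hφx : φ x = μ i * (1 + b₁ * deriv c x) - μ (i+1) * (1 + b₂ * deriv c x) := by
          rw [hφdef]; simp only []; rw [hder1, hder2]
        rw [hφx]
        have h1 : |1 + b₁ * deriv c x| ≤ 1 + M := by
          apply habs x hxT b₁ h10 h11
          rcases hd1 with h | ⟨h', _, _⟩
          · exact Or.inl h
          · exact Or.inr h'
        have h2 : |1 + b₂ * deriv c x| ≤ 1 + M := by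
          apply habs x hxT b₂ h20 h21
          rcases hd2 with h | ⟨h', _, _⟩
          · exact Or.inl h
          · exact Or.inr h'
        have hμi := hμposN i a b
        calc ‖μ i * (1 + b₁ * deriv c x) - μ (i+1) * (1 + b₂ * deriv c x)‖
            ≤ ‖μ i * (1 + b₁ * deriv c x)‖ + ‖μ (i+1) * (1 + b₂ * deriv c x)‖ := norm_sub_le _ _
          _ ≤ C := by
              rw [Real.norm_eq_abs, Real.norm_eq_abs, abs_mul, abs_mul,
                abs_of_nonneg (le_of_lt hμi), abs_of_nonneg hμ1nn, hCdef]
              nlinarith only [h1, h2, hμi, hμ1nn,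
                mul_le_mul_of_nonneg_left h1 (le_of_lt hμi),
                mul_le_mul_of_nonneg_left h2 hμ1nn]
    -- derivative of the antiderivative
    have hΦd : ∀ x ∈ 𝒯, x ∉ (Bad : Set ℝ) → HasDerivAt Φ (φ x) x := by
      intro x hxT hx
      obtain ⟨b₁, h10, h11, hd1, hL1⟩ := hLOC (min i (iP-1)) hm1le x hx
      have hD1 : HasDerivAt (fun s => s - ∑ j ∈ Finset.Icc 1 (min i (iP-1)), pSO j s)
          (1 + b₁ * deriv c x) x := by
        have := (hasDerivAt_id x).sub hL1
        exact this.congr_deriv (by ring)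
      have hfun1 : (fun s : ℝ => s - ∑ j ∈ Finset.Icc 1 i, wP j s)
          = fun s => s - ∑ j ∈ Finset.Icc 1 (min i (iP-1)), pSO j s := by
        funext s; rw [hWPsum i b s]
      have hder1 : deriv (fun s => s - ∑ j ∈ Finset.Icc 1 i, wP j s) x
          = 1 + b₁ * deriv c x := by rw [hfun1]; exact hD1.deriv
      rcases eq_or_lt_of_le b with hiN | hiN
      · have hz : μ (i+1) = 0 := by rw [hiN]; exact hμtop
        have hφx : φ x = μ i * (1 + b₁ * deriv c x) := by
          rw [hφdef]; simp only []; rw [hder1, hz]; ring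
        have hΦeq : Φ = fun s =>
            μ i * (s - ∑ j ∈ Finset.Icc 1 (min i (iP-1)), pSO j s) := by
          funext s; rw [hΦdef]; simp only []; rw [hz]; ring
        rw [hΦeq, hφx]
        exact hD1.const_mul (μ i)
      · obtain ⟨b₂, h20, h21, hd2, hL2⟩ := hLOC (min (i+1) (iP-1)) hm2le x hx
        have hD2 : HasDerivAt (fun s => s - ∑ j ∈ Finset.Icc 1 (min (i+1) (iP-1)), pSO j s)
            (1 + b₂ * deriv c x) x := by
          have := (hasDerivAt_id x).sub hL2
          exact this.congr_deriv (by ring)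
        have hfun2 : (fun s : ℝ => s - ∑ j ∈ Finset.Icc 1 (i+1), wP j s)
            = fun s => s - ∑ j ∈ Finset.Icc 1 (min (i+1) (iP-1)), pSO j s := by
          funext s; rw [hWPsum (i+1) (by omega) s]
        have hder2 : deriv (fun s => s - ∑ j ∈ Finset.Icc 1 (i+1), wP j s) x
            = 1 + b₂ * deriv c x := by rw [hfun2]; exact hD2.deriv
        have hφx : φ x = μ i * (1 + b₁ * deriv c x) - μ (i+1) * (1 + b₂ * deriv c x) := by
          rw [hφdef]; simp only []; rw [hder1, hder2]
        rw [hΦdef, hφx]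
        exact (hD1.const_mul (μ i)).sub (hD2.const_mul (μ (i+1)))
    -- continuity of the antiderivative
    have hΦcont : Continuous Φ := by
      rw [hΦdef]
      exact (continuous_const.mul (continuous_id.sub (hScont _ hm1le))).sub
        (continuous_const.mul (continuous_id.sub (hScont _ hm2le)))
    -- the increment identity
    have hΦdif : ∀ u v : ℝ, c u = c v → Φ v - Φ u = (μ i - μ (i+1)) * (v - u) := by
      intro u v hc
      have h1 := hSdep (min i (iP-1)) hm1le u v hc
      have h2 := hSdep (min (i+1) (iP-1)) hm2le u v hc
      rw [hΦdef]; simp only []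
      rw [h1, h2]; ring
    -- the window is inside the rush hour
    have hIccT : Set.Icc (tm i k) (tp i k) ⊆ 𝒯 := by
      intro x hx
      apply hWTX i a b
      rw [hWX i K a b hK le_rfl, hsub i K a b hK le_rfl]
      exact le_trans ((hsub i k a b e f x).1 hx) (hcbarmono i a b k K e f le_rfl)
    -- interval integrability of φ
    have hBa : ∀ᵐ x ∂(volume : Measure ℝ), x ∉ (Bad : Set ℝ) := by
      rw [MeasureTheory.ae_iff]
      apply measure_mono_null (fun x hx => not_not.1 hx)
      exact (Finset.finite_toSet Bad).measure_zero _
    have hφmeas : Measurable φ := by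
      rw [hφdef]
      exact ((measurable_deriv _).const_mul (μ i)).sub ((measurable_deriv _).const_mul (μ (i+1)))
    have hφint : ∀ u v : ℝ, u ≤ v → Set.Icc u v ⊆ Set.Icc (tm i k) (tp i k) →
        IntervalIntegrable φ volume u v := by
      intro u v huv hsubI
      rw [intervalIntegrable_iff_integrableOn_Ioc_of_le huv]
      apply Integrable.mono' (integrable_const C)
      · exact hφmeas.aestronglyMeasurable.restrict
      · rw [ae_restrict_iff' measurableSet_Ioc]
        filter_upwards [hBa] with x hx hxI
        exact hφbC x (hIccT (hsubI ⟨le_of_lt hxI.1, hxI.2⟩)) hx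
    -- FTC on pieces
    have hpieceInt : ∀ u v : ℝ, u ≤ v → Set.Icc u v ⊆ Set.Icc (tm i k) (tp i k) →
        ∫ x in u..v, φ x = Φ v - Φ u := by
      intro u v huv hsubI
      apply ftc_finset Bad Φ φ u v huv hΦcont.continuousOn
      · intro x hxI hxB
        exact hΦd x (hIccT (hsubI ⟨le_of_lt hxI.1, le_of_lt hxI.2⟩)) hxB
      · exact hφint u v huv hsubI
    -- reduce the integral over 𝒯 to the integral over the ring
    have hRmeas : MeasurableSet (W i k \ W i (k-1)) := by
      rcases eq_or_lt_of_le e with h | h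
      · rw [← h]
        rw [show (1:ℕ) - 1 = 0 from rfl, hW0 i, hWX i 1 a b le_rfl hK]
        exact measurableSet_Icc.diff (MeasurableSet.empty)
      · rw [hWX i k a b e f, hWX i (k-1) a b (by omega) (by omega)]
        exact measurableSet_Icc.diff measurableSet_Icc
    have hRT : (W i k \ W i (k-1)) ⊆ 𝒯 := fun t ht => hringT i k a b e f t ht
    have hstep1 : ∫ t in 𝒯, qP i k t = ∫ t in W i k \ W i (k-1), qP i k t := by
      have h1 : ∀ t, qP i k t = Set.indicator (W i k \ W i (k-1)) (fun u => qP i k u) t := by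
        intro t
        by_cases h : t ∈ W i k \ W i (k-1)
        · rw [Set.indicator_of_mem h]
        · rw [Set.indicator_of_notMem h, hqP0X i k a b e f t h]
      calc ∫ t in 𝒯, qP i k t
          = ∫ t, Set.indicator (W i k \ W i (k-1)) (fun u => qP i k u) t
              ∂(volume.restrict 𝒯) := integral_congr_ae (Filter.Eventually.of_forall h1)
        _ = ∫ t in W i k \ W i (k-1), qP i k t ∂(volume.restrict 𝒯) := integral_indicator hRmeas
        _ = ∫ t in W i k \ W i (k-1), qP i k t := by
            rw [Measure.restrict_restrict hRmeas, Set.inter_eq_self_of_subset_left hRT]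
    have hqPeq : ∀ x ∈ W i k \ W i (k-1), qP i k x = φ x := by
      intro x hx
      rw [hqPX i k a b e f x hx, hφdef]
    rw [hstep1]
    -- now compute the ring integral, by cases on k
    rcases eq_or_lt_of_le e with hke | hke
    · -- k = 1
      have hW0' : W i (k-1) = ∅ := by rw [← hke]; exact hW0 i
      have hWk : W i k = Set.Icc (tm i k) (tp i k) := hWX i k a b e f
      have hle := (hwinX i k a b e f).1
      have h2 : ∫ t in W i k \ W i (k-1), qP i k t = ∫ t in Set.Icc (tm i k) (tp i k), φ t := by
        rw [show W i k \ W i (k-1) = Set.Icc (tm i k) (tp i k) by rw [hW0', hWk, Set.diff_empty]]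
          at hqPeq ⊢
        exact setIntegral_congr_fun measurableSet_Icc hqPeq
      rw [h2, setIntegral_congr_set Ioc_ae_eq_Icc.symm, ← intervalIntegral.integral_of_le hle,
        hpieceInt (tm i k) (tp i k) hle (fun x hx => hx)]
      have hcw := (hwinX i k a b e f).2.2
      rw [hΦdif (tm i k) (tp i k) (by rw [hcw.1, hcw.2]), (hwinX i k a b e f).2.1]
      have hΔ := hΔpos i a b
      rw [mul_div_cancel₀ _ (ne_of_gt hΔ)]
      rw [← hke, Finset.Icc_self, Finset.sum_singleton]
    · -- 2 ≤ k
      have hk1 : 1 ≤ k - 1 := by omega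
      have hk2 : k - 1 ≤ K := by omega
      have hcs : cbar i (k-1) < cbar i k := by
        have := hcbarstep i (k-1) a b hk1 (by omega)
        rwa [show k - 1 + 1 = k by omega] at this
      have hcw1 := (hwinX i (k-1) a b hk1 hk2).2.2
      have htmI : tm i (k-1) ∈ Set.Ioo (tm i k) (tp i k) := by
        rw [hsubo i k a b e f, hcw1.1]; exact hcs
      have htpI : tp i (k-1) ∈ Set.Ioo (tm i k) (tp i k) := by
        rw [hsubo i k a b e f, hcw1.2]; exact hcs
      have hmle := (hwinX i (k-1) a b hk1 hk2).1
      have htm0 := htm i (k-1) a b hk1 hk2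
      have htp0 := htp i (k-1) a b hk1 hk2
      have hRset : W i k \ W i (k-1)
          = Set.Ico (tm i k) (tm i (k-1)) ∪ Set.Ioc (tp i (k-1)) (tp i k) := by
        rw [hWX i k a b e f, hWX i (k-1) a b hk1 hk2]
        ext x
        simp only [Set.mem_diff, Set.mem_Icc, Set.mem_union, Set.mem_Ico, Set.mem_Ioc,
          not_and, not_le]
        constructor
        · rintro ⟨⟨h1, h2⟩, h3⟩
          rcases lt_or_ge x (tm i (k-1)) with h4 | h4
          · exact Or.inl ⟨h1, h4⟩
          · exact Or.inr ⟨h3 h4, h2⟩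
        · rintro (⟨h1, h4⟩ | ⟨h1, h2⟩)
          · refine ⟨⟨h1, by linarith [htmI.2]⟩, fun h5 => by linarith⟩
          · refine ⟨⟨by linarith [htpI.1], h2⟩, fun h5 => by linarith⟩
      have hdisj : Disjoint (Set.Ico (tm i k) (tm i (k-1))) (Set.Ioc (tp i (k-1)) (tp i k)) := by
        rw [Set.disjoint_left]
        rintro x ⟨_, h1⟩ ⟨h2, _⟩
        linarith
      have hsub1 : Set.Icc (tm i k) (tm i (k-1)) ⊆ Set.Icc (tm i k) (tp i k) :=
        Set.Icc_subset_Icc le_rfl (le_of_lt htmI.2)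
      have hsub2 : Set.Icc (tp i (k-1)) (tp i k) ⊆ Set.Icc (tm i k) (tp i k) :=
        Set.Icc_subset_Icc (le_of_lt htpI.1) le_rfl
      have hle1 : tm i k ≤ tm i (k-1) := le_of_lt htmI.1
      have hle2 : tp i (k-1) ≤ tp i k := le_of_lt htpI.2
      have hint1 : IntegrableOn φ (Set.Ico (tm i k) (tm i (k-1))) volume := by
        have := (intervalIntegrable_iff_integrableOn_Ioc_of_le hle1).1
          (hφint _ _ hle1 hsub1)
        exact this.congr_set_ae Ico_ae_eq_Ioc
      have hint2 : IntegrableOn φ (Set.Ioc (tp i (k-1))  (tp i k)) volume :=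
        (intervalIntegrable_iff_integrableOn_Ioc_of_le hle2).1 (hφint _ _ hle2 hsub2)
      have heqφ : ∫ t in W i k \ W i (k-1), qP i k t = ∫ t in W i k \ W i (k-1), φ t :=
        setIntegral_congr_fun hRmeas hqPeq
      rw [heqφ, hRset, setIntegral_union hdisj measurableSet_Ioc hint1 hint2]
      have hIco : ∫ t in Set.Ico (tm i k) (tm i (k-1)), φ t = Φ (tm i (k-1)) - Φ (tm i k) := by
        rw [setIntegral_congr_set Ico_ae_eq_Ioc, ← intervalIntegral.integral_of_le hle1]
        exact hpieceInt _ _ hle1 hsub1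
      have hIoc : ∫ t in Set.Ioc (tp i (k-1)) (tp i k), φ t = Φ (tp i k) - Φ (tp i (k-1)) := by
        rw [← intervalIntegral.integral_of_le hle2]
        exact hpieceInt _ _ hle2 hsub2
      rw [hIco, hIoc]
      have hcw := (hwinX i k a b e f).2.2
      have hd1 := hΦdif (tm i k) (tp i k) (by rw [hcw.1, hcw.2])
      have hd2 := hΦdif (tm i (k-1)) (tp i (k-1)) (by rw [hcw1.1, hcw1.2])
      have hlen1 := (hwinX i k a b e f).2.1
      have hlen2 := (hwinX i (k-1) a b hk1 hk2).2.1
      have hΔ := hΔpos i a b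
      have e1 : (μ i - μ (i+1)) * ((∑ l ∈ Finset.Icc 1 k, Q i l) / (μ i - μ (i+1)))
          = ∑ l ∈ Finset.Icc 1 k, Q i l := mul_div_cancel₀ _ (ne_of_gt hΔ)
      have e2 : (μ i - μ (i+1)) * ((∑ l ∈ Finset.Icc 1 (k-1), Q i l) / (μ i - μ (i+1)))
          = ∑ l ∈ Finset.Icc 1 (k-1), Q i l := mul_div_cancel₀ _ (ne_of_gt hΔ)
      have hsq : ∑ l ∈ Finset.Icc 1 k, Q i l
          = (∑ l ∈ Finset.Icc 1 (k-1), Q i l) + Q i k := by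
        have hkk : k - 1 + 1 = k := by omega
        rw [← hkk, Finset.sum_Icc_succ_top (by omega)]
        simp
      have hd1' : Φ (tp i k) - Φ (tm i k)
          = (μ i - μ (i+1)) * ((∑ l ∈ Finset.Icc 1 k, Q i l) / (μ i - μ (i+1))) := by
        rw [hd1, ← hlen1]
      have hd2' : Φ (tp i (k-1)) - Φ (tm i (k-1))
          = (μ i - μ (i+1)) * ((∑ l ∈ Finset.Icc 1 (k-1), Q i l) / (μ i - μ (i+1))) := by
        rw [hd2, ← hlen2]
      rw [e1] at hd1'
      rw [e2] at hd2'
      linarith only [hd1', hd2', hsq]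
  exact ⟨hcondI, hcondII, hcondIII, hcondIV⟩
end
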